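/- arXiv:1112.5456 — 8 statements merged into one kernel-verified Lean document; each statement's English description precedes it below -/
import Mathlib

section
/- Let X_1, ..., X_n be {0,1}-valued random variables on a probability space, and suppose there are reals δ_1, ..., δ_n ∈ [0,1] such that for every subset S ⊆ {1,...,n} one has Pr[∀ i ∈ S, X_i = 1] ≤ ∏_{i∈S} δ_i. Set δ = (1/n)∑_{i=1}^n δ_i and let γ satisfy δ ≤ γ ≤ 1. Then Pr[∑_{i=1}^n X_i ≥ γ·n] ≤ exp(−n·D(γ‖δ)). -/
open MeasureTheory

/-- Binary relative entropy `D(p‖q)`, with the conventions `0·log 0 = 0` and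
`0·log(0/0) = 0` (automatic from `Real.log 0 = 0` and `x/0 = 0` in Lean). -/
noncomputable def binRelEnt (p q : ℝ) : ℝ :=
  p * Real.log (p / q) + (1 - p) * Real.log ((1 - p) / (1 - q))

/-- Unweighted AM-GM for `n` nonnegative reals. -/
lemma amgm_aux {n : ℕ} (hn : 0 < n) (z : Fin n → ℝ) (hz : ∀ i, 0 ≤ z i) :
    ∏ i, z i ≤ ((∑ i, z i) / n) ^ n := by
  have hnR : (0:ℝ) < n := Nat.cast_pos.2 hn
  have h := Real.geom_mean_le_arith_mean_weighted Finset.univ (fun _ => (n:ℝ)⁻¹) z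
    (fun i _ => by positivity)
    (by simp [Finset.card_univ, mul_inv_cancel₀ hnR.ne'])
    (fun i _ => hz i)
  have h2 : (∏ i, z i ^ ((n:ℝ)⁻¹)) ^ n = ∏ i, z i := by
    rw [← Finset.prod_pow]
    refine Finset.prod_congr rfl fun i _ => ?_
    rw [← Real.rpow_natCast (z i ^ ((n:ℝ)⁻¹)) n, ← Real.rpow_mul (hz i),
      inv_mul_cancel₀ hnR.ne', Real.rpow_one]
  calc ∏ i, z i = (∏ i, z i ^ ((n:ℝ)⁻¹)) ^ n := h2.symm
    _ ≤ ((∑ i, z i) / n) ^ n := by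
        apply pow_le_pow_left₀ (Finset.prod_nonneg fun i _ => Real.rpow_nonneg (hz i) _)
        calc (∏ i, z i ^ ((n:ℝ)⁻¹)) ≤ ∑ i, (n:ℝ)⁻¹ * z i := h
          _ = (∑ i, z i) / n := by rw [← Finset.mul_sum]; ring

/-- Generalized Chernoff-Hoeffding bound for dependent Boolean random variables
(Panconesi–Srinivasan). -/
theorem generalized_chernoff_hoeffding
    {Ω : Type*} [MeasurableSpace Ω] (μ : Measure Ω) [IsProbabilityMeasure μ]
    (n : ℕ) (hn : 0 < n) (X : Fin n → Ω → ℝ)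
    (hXmeas : ∀ i, Measurable (X i))
    (hX01 : ∀ i ω, X i ω = 0 ∨ X i ω = 1)
    (δ : Fin n → ℝ) (hδ : ∀ i, δ i ∈ Set.Icc (0 : ℝ) 1)
    (hbound : ∀ S : Finset (Fin n),
      μ {ω | ∀ i ∈ S, X i ω = 1} ≤ ENNReal.ofReal (∏ i ∈ S, δ i))
    (γ : ℝ) (hγ₁ : (∑ i, δ i) / n ≤ γ) (hγ₂ : γ ≤ 1) :
    μ {ω | γ * n ≤ ∑ i, X i ω} ≤
      ENNReal.ofReal (Real.exp (-(n : ℝ) * binRelEnt γ ((∑ i, δ i) / n))) := by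
  have hnR : (0:ℝ) < n := Nat.cast_pos.2 hn
  set d : ℝ := (∑ i, δ i) / n with hd_def
  have hd0 : 0 ≤ d := div_nonneg (Finset.sum_nonneg fun i _ => (hδ i).1) hnR.le
  have hγ0 : 0 ≤ γ := le_trans hd0 hγ₁
  -- trivial bound whenever the exponent is nonnegative
  have htriv : binRelEnt γ d ≤ 0 →
      μ {ω | γ * n ≤ ∑ i, X i ω} ≤
        ENNReal.ofReal (Real.exp (-(n : ℝ) * binRelEnt γ d)) := by
    intro h
    calc μ {ω | γ * n ≤ ∑ i, X i ω} ≤ 1 := prob_le_one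
      _ ≤ ENNReal.ofReal (Real.exp (-(n : ℝ) * binRelEnt γ d)) := by
          rw [← ENNReal.ofReal_one]
          exact ENNReal.ofReal_le_ofReal (Real.one_le_exp (by nlinarith))
  rcases eq_or_lt_of_le hd0 with hd | hd
  · -- d = 0
    apply htriv
    rw [binRelEnt, ← hd, div_zero, Real.log_zero, mul_zero, sub_zero, div_one, zero_add]
    exact mul_nonpos_of_nonneg_of_nonpos (by linarith) (Real.log_nonpos (by linarith) (by linarith))
  by_cases hγd : γ ≤ d
  · -- γ = d
    have hγed : γ = d := le_antisymm hγd hγ₁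
    apply htriv
    rw [binRelEnt, hγed, div_self hd.ne', Real.log_one, mul_zero, zero_add]
    rcases eq_or_ne d 1 with h1 | h1
    · rw [h1]; simp
    · rw [div_self (by intro h; apply h1; linarith), Real.log_one, mul_zero]
  push_neg at hγd
  -- now 0 < d < γ ≤ 1
  have hγpos : 0 < γ := lt_trans hd hγd
  rcases eq_or_lt_of_le hγ₂ with hγ1 | hγ1
  · -- γ = 1 : the event forces all X i = 1
    subst hγ1
    have hd1 : d < 1 := hγd
    have hsub : {ω | (1:ℝ) * n ≤ ∑ i, X i ω} ⊆ {ω | ∀ i ∈ Finset.univ, X i ω = 1} := by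
      intro ω hω
      simp only [Set.mem_setOf_eq, one_mul] at hω ⊢
      intro i _
      by_contra hne
      have hX0 : X i ω = 0 := (hX01 i ω).resolve_right hne
      have hle : ∀ j, X j ω ≤ 1 := fun j => by rcases hX01 j ω with h | h <;> simp [h]
      have hsum : ∑ j, X j ω = X i ω + ∑ j ∈ Finset.univ.erase i, X j ω :=
        (Finset.add_sum_erase _ _ (Finset.mem_univ i)).symm
      have herase : ∑ j ∈ Finset.univ.erase i, X j ω ≤ (n : ℝ) - 1 := by
        have h := Finset.sum_le_card_nsmul (Finset.univ.erase i) (fun j => X j ω) 1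
          (fun j _ => hle j)
        rw [Finset.card_erase_of_mem (Finset.mem_univ i), Finset.card_univ,
          Fintype.card_fin, nsmul_eq_mul, mul_one] at h
        calc ∑ j ∈ Finset.univ.erase i, X j ω ≤ ((n - 1 : ℕ) : ℝ) := h
          _ = (n : ℝ) - 1 := by rw [Nat.cast_sub hn]; norm_num
      have h1 : (n : ℝ) ≤ ∑ j, X j ω := hω
      have h2 : ∑ j, X j ω ≤ (n : ℝ) - 1 := by
        rw [hsum, hX0, zero_add]; exact herase
      linarith
    have hexp : Real.exp (-(n : ℝ) * binRelEnt 1 d) = d ^ n := by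
      rw [binRelEnt]
      rw [sub_self, zero_mul, add_zero, Real.log_div one_ne_zero hd.ne', Real.log_one, one_mul]
      rw [show -(n : ℝ) * (0 - Real.log d) = (n : ℝ) * Real.log d by ring]
      rw [Real.exp_nat_mul, Real.exp_log hd]
    calc μ {ω | (1:ℝ) * n ≤ ∑ i, X i ω} ≤ μ {ω | ∀ i ∈ Finset.univ, X i ω = 1} :=
          measure_mono hsub
      _ ≤ ENNReal.ofReal (∏ i, δ i) := hbound Finset.univ
      _ ≤ ENNReal.ofReal (Real.exp (-(n : ℝ) * binRelEnt 1 d)) := by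
          rw [hexp]
          apply ENNReal.ofReal_le_ofReal
          have := amgm_aux hn δ (fun i => (hδ i).1)
          rwa [← hd_def] at this
  -- main case : 0 < d < γ < 1
  have h1γ : 0 < 1 - γ := by linarith
  have h1d : 0 < 1 - d := by linarith
  set L : ℝ := γ * (1 - d) / (d * (1 - γ)) with hL_def
  have hLpos : 0 < L := by positivity
  have hL1 : 1 ≤ L := by
    rw [le_div_iff₀ (by positivity)]
    nlinarith
  set c : ℝ := L - 1 with hc_def
  have hc : 0 ≤ c := by linarith
  have hXnn : ∀ i ω, 0 ≤ X i ω := fun i ω => by rcases hX01 i ω with h | h <;> simp [h]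
  -- pointwise product identity
  have hY : ∀ ω, ∏ i, (1 + c * X i ω) = L ^ (∑ i, X i ω) := by
    intro ω
    have : ∀ i, (1 : ℝ) + c * X i ω = Real.exp (X i ω * Real.log L) := by
      intro i
      rcases hX01 i ω with h | h <;> rw [h]
      · simp
      · rw [one_mul, Real.exp_log hLpos]; ring
    rw [Finset.prod_congr rfl fun i _ => this i, ← Real.exp_sum, ← Finset.sum_mul,
      Real.rpow_def_of_pos hLpos, mul_comm (Real.log L)]
  have hsum_meas : Measurable fun ω => ∑ i, X i ω :=
    Finset.measurable_sum _ fun i _ => hXmeas i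
  have hEmeas : MeasurableSet {ω | γ * n ≤ ∑ i, X i ω} :=
    measurableSet_le measurable_const hsum_meas
  -- Markov step
  have markov : ENNReal.ofReal (L ^ (γ * (n:ℝ))) * μ {ω | γ * n ≤ ∑ i, X i ω} ≤
      ∫⁻ ω, ENNReal.ofReal (∏ i, (1 + c * X i ω)) ∂μ := by
    rw [← lintegral_indicator_const hEmeas]
    apply lintegral_mono
    intro ω
    by_cases hω : ω ∈ {ω | γ * n ≤ ∑ i, X i ω}
    · rw [Set.indicator_of_mem hω]
      refine ENNReal.ofReal_le_ofReal ?_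
      rw [hY ω]
      exact Real.rpow_le_rpow_of_exponent_le hL1 hω
    · rw [Set.indicator_of_notMem hω]; exact zero_le
  -- expansion of the lintegral
  have hprodsum : ∀ (f : Fin n → ℝ), ∏ i, (1 + c * f i) = ∑ S : Finset (Fin n), ∏ i ∈ S, (c * f i) := by
    intro f
    have := Finset.prod_add (fun i => c * f i) (fun _ => (1:ℝ)) Finset.univ
    simpa [Finset.powerset_univ, add_comm] using this
  have expand : (∫⁻ ω, ENNReal.ofReal (∏ i, (1 + c * X i ω)) ∂μ) ≤
      ENNReal.ofReal (∏ i, (1 + c * δ i)) := by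
    have step1 : (∫⁻ ω, ENNReal.ofReal (∏ i, (1 + c * X i ω)) ∂μ) =
        ∑ S : Finset (Fin n), ∫⁻ ω, ENNReal.ofReal (∏ i ∈ S, (c * X i ω)) ∂μ := by
      rw [← lintegral_finset_sum]
      · apply lintegral_congr
        intro ω
        rw [hprodsum (fun i => X i ω),
          ENNReal.ofReal_sum_of_nonneg fun S _ =>
            Finset.prod_nonneg fun i _ => mul_nonneg hc (hXnn i ω)]
      · intro S _
        exact (Finset.measurable_prod S fun i _ => (hXmeas i).const_mul c).ennreal_ofReal
    rw [step1]
    have step2 : ∀ S : Finset (Fin n),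
        (∫⁻ ω, ENNReal.ofReal (∏ i ∈ S, (c * X i ω)) ∂μ) ≤
          ENNReal.ofReal (∏ i ∈ S, (c * δ i)) := by
      intro S
      have hAmeas : MeasurableSet {ω | ∀ i ∈ S, X i ω = 1} := by
        have : {ω | ∀ i ∈ S, X i ω = 1} = ⋂ i ∈ S, X i ⁻¹' {1} := by
          ext ω; simp
        rw [this]
        exact MeasurableSet.biInter S.countable_toSet
          fun i _ => (hXmeas i) (measurableSet_singleton 1)
      have hind : ∀ ω, ENNReal.ofReal (∏ i ∈ S, (c * X i ω)) =
          Set.indicator {ω | ∀ i ∈ S, X i ω = 1}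
            (fun _ => ENNReal.ofReal (c ^ S.card)) ω := by
        intro ω
        by_cases hω : ω ∈ {ω | ∀ i ∈ S, X i ω = 1}
        · rw [Set.indicator_of_mem hω]
          congr 1
          rw [Finset.prod_congr rfl fun i hi => by rw [hω i hi, mul_one], Finset.prod_const]
        · rw [Set.indicator_of_notMem hω]
          simp only [Set.mem_setOf_eq] at hω
          push_neg at hω
          obtain ⟨i, hiS, hi1⟩ := hω
          have hXi0 : X i ω = 0 := (hX01 i ω).resolve_right hi1
          rw [Finset.prod_eq_zero hiS (by rw [hXi0, mul_zero]), ENNReal.ofReal_zero]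
      calc (∫⁻ ω, ENNReal.ofReal (∏ i ∈ S, (c * X i ω)) ∂μ)
          = ∫⁻ ω, Set.indicator {ω | ∀ i ∈ S, X i ω = 1}
              (fun _ => ENNReal.ofReal (c ^ S.card)) ω ∂μ := lintegral_congr hind
        _ = ENNReal.ofReal (c ^ S.card) * μ {ω | ∀ i ∈ S, X i ω = 1} :=
            lintegral_indicator_const hAmeas _
        _ ≤ ENNReal.ofReal (c ^ S.card) * ENNReal.ofReal (∏ i ∈ S, δ i) :=
            mul_le_mul_right (hbound S) _
        _ = ENNReal.ofReal (c ^ S.card * ∏ i ∈ S, δ i) :=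
            (ENNReal.ofReal_mul (pow_nonneg hc _)).symm
        _ = ENNReal.ofReal (∏ i ∈ S, (c * δ i)) := by
            rw [Finset.prod_mul_distrib, Finset.prod_const]
    calc (∑ S : Finset (Fin n), ∫⁻ ω, ENNReal.ofReal (∏ i ∈ S, (c * X i ω)) ∂μ)
        ≤ ∑ S : Finset (Fin n), ENNReal.ofReal (∏ i ∈ S, (c * δ i)) :=
          Finset.sum_le_sum fun S _ => step2 S
      _ = ENNReal.ofReal (∑ S : Finset (Fin n), ∏ i ∈ S, (c * δ i)) :=
          (ENNReal.ofReal_sum_of_nonneg fun S _ =>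
            Finset.prod_nonneg fun i _ => mul_nonneg hc (hδ i).1).symm
      _ = ENNReal.ofReal (∏ i, (1 + c * δ i)) := by rw [hprodsum δ]
  -- combine
  have hLg : 0 < L ^ (γ * (n:ℝ)) := Real.rpow_pos_of_pos hLpos _
  have key : μ {ω | γ * n ≤ ∑ i, X i ω} ≤
      ENNReal.ofReal ((∏ i, (1 + c * δ i)) / L ^ (γ * (n:ℝ))) := by
    rw [ENNReal.ofReal_div_of_pos hLg]
    rw [ENNReal.le_div_iff_mul_le (Or.inl (ENNReal.ofReal_pos.2 hLg).ne')
      (Or.inl ENNReal.ofReal_ne_top)]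
    rw [mul_comm]
    exact markov.trans expand
  refine key.trans (ENNReal.ofReal_le_ofReal ?_)
  -- final real-number computation
  have hmean : (∑ i, (1 + c * δ i)) / (n:ℝ) = 1 + c * d := by
    rw [Finset.sum_add_distrib, Finset.sum_const, Finset.card_univ, Fintype.card_fin,
      ← Finset.mul_sum, hd_def]
    field_simp
    rw [nsmul_eq_mul, mul_one]
  have hAM : ∏ i, (1 + c * δ i) ≤ (1 + c * d) ^ n := by
    have := amgm_aux hn (fun i => 1 + c * δ i)
      (fun i => add_nonneg zero_le_one (mul_nonneg hc (hδ i).1))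
    rwa [hmean] at this
  have h1cd : 1 + c * d = (1 - d) / (1 - γ) := by
    rw [hc_def, hL_def]
    field_simp
    ring
  have hBpos : 0 < (1 - d) / (1 - γ) := by positivity
  calc (∏ i, (1 + c * δ i)) / L ^ (γ * (n:ℝ))
      ≤ (1 + c * d) ^ n / L ^ (γ * (n:ℝ)) := by gcongr
    _ = Real.exp (-(n : ℝ) * binRelEnt γ d) := by
        rw [h1cd, Real.rpow_def_of_pos hLpos]
        rw [show ((1 - d) / (1 - γ)) ^ n =
            Real.exp ((n : ℝ) * Real.log ((1 - d) / (1 - γ))) by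
          rw [← Real.log_pow, Real.exp_log (pow_pos hBpos n)]]
        rw [← Real.exp_sub]
        congr 1
        have hlogB : Real.log ((1 - d) / (1 - γ)) = Real.log (1 - d) - Real.log (1 - γ) :=
          Real.log_div h1d.ne' h1γ.ne'
        have hlogL : Real.log L =
            Real.log γ + Real.log (1 - d) - (Real.log d + Real.log (1 - γ)) := by
          rw [hL_def, Real.log_div (mul_pos hγpos h1d).ne' (mul_pos hd h1γ).ne',
            Real.log_mul hγpos.ne' h1d.ne', Real.log_mul hd.ne' h1γ.ne']
        have hlog3 : Real.log (γ / d) = Real.log γ - Real.log d :=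
          Real.log_div hγpos.ne' hd.ne'
        have hlog4 : Real.log ((1 - γ) / (1 - d)) = Real.log (1 - γ) - Real.log (1 - d) :=
          Real.log_div h1γ.ne' h1d.ne'
        rw [binRelEnt, hlogB, hlogL, hlog3, hlog4]
        ring
end

section
/- Let X_1, ..., X_n be real-valued random variables on a probability space with each X_i ∈ [0,1] almost surely. Suppose there is δ with 0 ≤ δ ≤ 1 such that for every subset S ⊆ {1,...,n} one has E[∏_{i∈S} X_i] ≤ δ^{|S|}, and let γ satisfy δ ≤ γ ≤ 1 with γ·n an integer. Then Pr[∑_{i=1}^n X_i ≥ γ·n] ≤ 2·exp(−n·D(γ‖δ)). -/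
open MeasureTheory

lemma aux_markov {Ω : Type*} [MeasurableSpace Ω] (μ : Measure Ω) [IsProbabilityMeasure μ]
    {f : Ω → ℝ} (hf : Integrable f μ) (h0 : 0 ≤ᵐ[μ] f)
    {E : Set Ω} {c : ℝ} (hc : 0 < c)
    (hE : ∀ᵐ ω ∂μ, ω ∈ E → c ≤ f ω) :
    (μ E).toReal ≤ (∫ ω, f ω ∂μ) / c := by
  have h1 : μ E ≤ μ {ω | c ≤ f ω} := by
    apply measure_mono_ae
    filter_upwards [hE] with ω h hω
    exact h hω
  have h2 := mul_meas_ge_le_integral_of_nonneg h0 hf c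
  have h3 : (μ E).toReal ≤ (μ {ω | c ≤ f ω}).toReal :=
    ENNReal.toReal_mono (measure_ne_top _ _) h1
  rw [le_div_iff₀ hc]
  calc (μ E).toReal * c ≤ (μ {ω | c ≤ f ω}).toReal * c :=
        mul_le_mul_of_nonneg_right h3 hc.le
    _ = c * (μ {ω | c ≤ f ω}).toReal := mul_comm _ _
    _ ≤ _ := h2

/-- Generalized Chernoff-Hoeffding bound for dependent `[0,1]`-valued random variables
(Impagliazzo–Kabanets, Theorem 3.3). -/
theorem generalized_chernoff_real_valued
    {Ω : Type*} [MeasurableSpace Ω] (μ : Measure Ω) [IsProbabilityMeasure μ]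
    (n : ℕ) (hn : 0 < n) (X : Fin n → Ω → ℝ)
    (hXmeas : ∀ i, Measurable (X i))
    (hX01 : ∀ᵐ ω ∂μ, ∀ i, X i ω ∈ Set.Icc (0 : ℝ) 1)
    (δ : ℝ) (hδ : δ ∈ Set.Icc (0 : ℝ) 1)
    (hbound : ∀ S : Finset (Fin n), ∫ ω, (∏ i ∈ S, X i ω) ∂μ ≤ δ ^ S.card)
    (γ : ℝ) (hγ₁ : δ ≤ γ) (hγ₂ : γ ≤ 1) (hγn : ∃ m : ℕ, γ * n = (m : ℝ)) :
    μ {ω | γ * n ≤ ∑ i, X i ω} ≤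
      ENNReal.ofReal (2 * Real.exp (-(n : ℝ) * binRelEnt γ δ)) := by
  obtain ⟨hδ0, hδ1⟩ := hδ
  set E := {ω | γ * n ≤ ∑ i, X i ω} with hEdef
  have hμE : μ E ≠ ⊤ := measure_ne_top μ E
  -- helper: trivial when D ≤ 0
  have trivial_case : binRelEnt γ δ ≤ 0 → μ E ≤
      ENNReal.ofReal (2 * Real.exp (-(n : ℝ) * binRelEnt γ δ)) := by
    intro hD
    have h1 : (1:ℝ) ≤ Real.exp (-(n : ℝ) * binRelEnt γ δ) := by
      apply Real.one_le_exp
      have : (0:ℝ) ≤ (n:ℝ) := Nat.cast_nonneg n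
      nlinarith
    calc μ E ≤ 1 := prob_le_one
      _ = ENNReal.ofReal 1 := by simp
      _ ≤ _ := by
          apply ENNReal.ofReal_le_ofReal
          linarith
  -- integrability of products
  have aux_int : ∀ S : Finset (Fin n), Integrable (fun ω => ∏ i ∈ S, X i ω) μ := by
    intro S
    apply Integrable.mono' (integrable_const (1:ℝ))
    · exact (Finset.measurable_prod S fun i _ => hXmeas i).aestronglyMeasurable
    · filter_upwards [hX01] with ω h
      rw [Real.norm_eq_abs, abs_of_nonneg (Finset.prod_nonneg fun i _ => (h i).1)]
      exact Finset.prod_le_one (fun i _ => (h i).1) (fun i _ => (h i).2)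
  rcases eq_or_lt_of_le hδ0 with hδz | hδpos
  · -- δ = 0 : trivial
    apply trivial_case
    rw [← hδz]
    have : binRelEnt γ 0 = (1 - γ) * Real.log (1 - γ) := by
      simp [binRelEnt]
    rw [this]
    exact mul_nonpos_of_nonneg_of_nonpos (by linarith)
      (Real.log_nonpos (by linarith) (by linarith))
  rcases eq_or_lt_of_le hγ₁ with hγδ | hδγ
  · -- γ = δ : trivial
    apply trivial_case
    rw [← hγδ]
    have hδne : δ ≠ 0 := ne_of_gt hδpos
    by_cases h1 : δ = 1
    · simp [binRelEnt, h1]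
    · have : (1:ℝ) - δ ≠ 0 := sub_ne_zero.2 (Ne.symm h1)
      simp [binRelEnt, div_self hδne, div_self this]
  have hγpos : 0 < γ := lt_trans hδpos hδγ
  rcases eq_or_lt_of_le hγ₂ with hγ1 | hγlt
  · -- γ = 1 : direct Markov with ∏ Xᵢ
    have hbre : binRelEnt γ δ = - Real.log δ := by
      rw [binRelEnt, hγ1]
      simp [Real.log_div one_ne_zero (ne_of_gt hδpos)]
    have hkey : (μ E).toReal ≤ δ ^ n := by
      have := aux_markov μ (aux_int Finset.univ)
        (by filter_upwards [hX01] with ω h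
            exact Finset.prod_nonneg fun i _ => (h i).1)
        (E := E) (c := 1) one_pos
        (by filter_upwards [hX01] with ω h hωE
            rw [show (1:ℝ) = ∏ _i : Fin n, (1:ℝ) by simp]
            apply Finset.prod_le_prod (fun i _ => zero_le_one)
            intro i _
            by_contra hi
            push_neg at hi
            have hsum : γ * n ≤ ∑ j, X j ω := hωE
            have h2 : ∑ j, X j ω = X i ω + ∑ j ∈ Finset.univ.erase i, X j ω :=
              (Finset.add_sum_erase _ _ (Finset.mem_univ i)).symm
            have h3 : ∑ j ∈ Finset.univ.erase i, X j ω ≤ (Finset.univ.erase i).card := by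
              calc ∑ j ∈ Finset.univ.erase i, X j ω
                  ≤ ∑ _j ∈ Finset.univ.erase i, (1:ℝ) :=
                    Finset.sum_le_sum fun j _ => (h j).2
                _ = (Finset.univ.erase i).card := by simp
            have h4 : ((Finset.univ.erase i).card : ℝ) = (n:ℝ) - 1 := by
              rw [Finset.card_erase_of_mem (Finset.mem_univ i)]
              simp [Nat.cast_sub hn]
            rw [hγ1, one_mul] at hsum
            rw [h2] at hsum
            rw [h4] at h3
            linarith)
      rw [div_one] at this
      exact le_trans this (by simpa using hbound Finset.univ)
    have hδn : δ ^ n = Real.exp (-(n : ℝ) * binRelEnt γ δ) := by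
      rw [hbre, show -(n : ℝ) * -Real.log δ = (n : ℝ) * Real.log δ by ring,
        Real.exp_nat_mul, Real.exp_log hδpos]
    calc μ E = ENNReal.ofReal ((μ E).toReal) := (ENNReal.ofReal_toReal hμE).symm
      _ ≤ ENNReal.ofReal (2 * Real.exp (-(n : ℝ) * binRelEnt γ δ)) := by
          apply ENNReal.ofReal_le_ofReal
          have := Real.exp_pos (-(n : ℝ) * binRelEnt γ δ)
          rw [hδn] at hkey
          linarith
  -- main case : 0 < δ < γ < 1
  have hδ1' : δ < 1 := lt_of_lt_of_le hδγ hγ₂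
  set q : ℝ := (γ - δ) / (γ * (1 - δ)) with hqdef
  have hden : 0 < γ * (1 - δ) := mul_pos hγpos (by linarith)
  have hq0 : 0 < q := div_pos (by linarith) hden
  set a : ℝ := 1 - q with hadef
  have ha : a = δ * (1 - γ) / (γ * (1 - δ)) := by
    rw [hadef, hqdef]
    have h1δ' : (1:ℝ) - δ ≠ 0 := ne_of_gt (by linarith)
    field_simp
    ring
  have ha0 : 0 < a := by
    rw [ha]
    apply div_pos _ hden
    apply mul_pos hδpos (by linarith)
  have ha1 : a ≤ 1 := by rw [hadef]; linarith
  have haq : q * δ + a = δ / γ := by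
    rw [hadef, hqdef]
    have h1δ' : (1:ℝ) - δ ≠ 0 := ne_of_gt (by linarith)
    field_simp
    ring
  set f : Ω → ℝ := fun ω => ∏ i, (q * X i ω + a) with hfdef
  have hf_int : Integrable f μ := by
    apply Integrable.mono' (integrable_const (1:ℝ))
    · exact (Finset.measurable_prod Finset.univ fun i _ =>
        ((hXmeas i).const_mul q).add_const a).aestronglyMeasurable
    · filter_upwards [hX01] with ω h
      rw [Real.norm_eq_abs, abs_of_nonneg (Finset.prod_nonneg fun i _ => by nlinarith [(h i).1, hq0])]
      apply Finset.prod_le_one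
      · intro i _; nlinarith [(h i).1, hq0]
      · intro i _; nlinarith [(h i).2, hq0]
  have hf_nonneg : 0 ≤ᵐ[μ] f := by
    filter_upwards [hX01] with ω h
    exact Finset.prod_nonneg fun i _ => by nlinarith [(h i).1, hq0]
  set c : ℝ := a ^ ((1 - γ) * (n : ℝ)) with hcdef
  have hc0 : 0 < c := Real.rpow_pos_of_pos ha0 _
  -- lower bound on the event
  have hlow : ∀ᵐ ω ∂μ, ω ∈ E → c ≤ f ω := by
    filter_upwards [hX01] with ω h hωE
    have key : ∀ i, a ^ (1 - X i ω) ≤ q * X i ω + a := by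
      intro i
      have hg := Real.geom_mean_le_arith_mean2_weighted
        (sub_nonneg.2 (h i).2) (h i).1 ha0.le zero_le_one (by ring)
      rw [Real.one_rpow, mul_one] at hg
      calc a ^ (1 - X i ω) ≤ (1 - X i ω) * a + X i ω * 1 := hg
        _ = q * X i ω + a := by rw [hadef]; ring
    have step1 : a ^ ((n : ℝ) - ∑ i, X i ω) ≤ f ω := by
      have : a ^ ((n : ℝ) - ∑ i, X i ω) = ∏ i, a ^ (1 - X i ω) := by
        rw [Real.rpow_def_of_pos ha0]
        have hsum : ((n : ℝ) - ∑ i, X i ω) = ∑ i, (1 - X i ω) := by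
          rw [Finset.sum_sub_distrib]
          simp
        rw [hsum, Finset.mul_sum, Real.exp_sum]
        exact Finset.prod_congr rfl fun i _ => by
          rw [Real.rpow_def_of_pos ha0]
      rw [this]
      exact Finset.prod_le_prod (fun i _ => Real.rpow_nonneg ha0.le _)
        (fun i _ => key i)
    have step2 : c ≤ a ^ ((n : ℝ) - ∑ i, X i ω) := by
      apply Real.rpow_le_rpow_of_exponent_ge ha0 ha1
      have : γ * n ≤ ∑ i, X i ω := hωE
      linarith [this, (by ring : (1 - γ) * (n:ℝ) = (n:ℝ) - γ * n)]
    linarith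
  -- upper bound on the integral
  have hexp : ∀ ω, f ω = ∑ S ∈ (Finset.univ : Finset (Fin n)).powerset,
      (q ^ S.card * a ^ (n - S.card)) * ∏ i ∈ S, X i ω := by
    intro ω
    rw [hfdef]
    simp only
    rw [Finset.prod_add]
    refine Finset.sum_congr rfl fun S hS => ?_
    rw [Finset.prod_const]
    have hcard : (Finset.univ \ S).card = n - S.card := by
      rw [Finset.card_sdiff_of_subset (Finset.subset_univ S), Finset.card_univ, Fintype.card_fin]
    rw [hcard, Finset.prod_mul_distrib, Finset.prod_const]
    ring
  have hint : ∫ ω, f ω ∂μ ≤ (δ / γ) ^ n := by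
    have h1 : ∫ ω, f ω ∂μ = ∑ S ∈ (Finset.univ : Finset (Fin n)).powerset,
        (q ^ S.card * a ^ (n - S.card)) * ∫ ω, (∏ i ∈ S, X i ω) ∂μ := by
      simp only [hexp]
      rw [integral_finset_sum _ (fun S _ => (aux_int S).const_mul _)]
      exact Finset.sum_congr rfl fun S _ => integral_const_mul _ _
    rw [h1]
    have h2 : ∑ S ∈ (Finset.univ : Finset (Fin n)).powerset,
        (q ^ S.card * a ^ (n - S.card)) * δ ^ S.card = (q * δ + a) ^ n := by
      have h3 : (q * δ + a) ^ n = ∏ _i : Fin n, (q * δ + a) := by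
        rw [Finset.prod_const, Finset.card_univ, Fintype.card_fin]
      rw [h3, Finset.prod_add]
      refine Finset.sum_congr rfl fun S hS => ?_
      rw [Finset.prod_const, Finset.prod_const]
      have hcard : (Finset.univ \ S).card = n - S.card := by
        rw [Finset.card_sdiff_of_subset (Finset.subset_univ S), Finset.card_univ, Fintype.card_fin]
      rw [hcard, mul_pow]
      ring
    calc ∑ S ∈ (Finset.univ : Finset (Fin n)).powerset,
        (q ^ S.card * a ^ (n - S.card)) * ∫ ω, (∏ i ∈ S, X i ω) ∂μ
        ≤ ∑ S ∈ (Finset.univ : Finset (Fin n)).powerset,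
        (q ^ S.card * a ^ (n - S.card)) * δ ^ S.card := by
          apply Finset.sum_le_sum
          intro S _
          exact mul_le_mul_of_nonneg_left (hbound S) (by positivity)
      _ = (q * δ + a) ^ n := h2
      _ = (δ / γ) ^ n := by rw [haq]
  -- Markov
  have hmark : (μ E).toReal ≤ (δ / γ) ^ n / c := by
    calc (μ E).toReal ≤ (∫ ω, f ω ∂μ) / c := aux_markov μ hf_int hf_nonneg hc0 hlow
      _ ≤ (δ / γ) ^ n / c := by gcongr
  -- the ratio equals the exponential bound
  have hδγpos : 0 < δ / γ := div_pos hδpos hγpos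
  have hδne : δ ≠ 0 := ne_of_gt hδpos
  have hγne : γ ≠ 0 := ne_of_gt hγpos
  have h1γne : (1 : ℝ) - γ ≠ 0 := ne_of_gt (by linarith)
  have h1δne : (1 : ℝ) - δ ≠ 0 := ne_of_gt (by linarith)
  have hratio : (δ / γ) ^ n / c = Real.exp (-(n : ℝ) * binRelEnt γ δ) := by
    have h1 : (δ / γ) ^ n = Real.exp ((n : ℝ) * Real.log (δ / γ)) := by
      rw [← Real.exp_log hδγpos, ← Real.exp_nat_mul, Real.exp_log hδγpos]
    have h2 : c = Real.exp ((1 - γ) * (n : ℝ) * Real.log a) := by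
      rw [hcdef, Real.rpow_def_of_pos ha0, mul_comm]
    rw [h1, h2, ← Real.exp_sub]
    congr 1
    have hlog : Real.log a =
        Real.log δ + Real.log (1 - γ) - (Real.log γ + Real.log (1 - δ)) := by
      rw [ha, Real.log_div (mul_ne_zero hδne h1γne) (mul_ne_zero hγne h1δne),
        Real.log_mul hδne h1γne, Real.log_mul hγne h1δne]
    rw [binRelEnt, Real.log_div hδne hγne, Real.log_div hγne hδne,
      Real.log_div h1γne h1δne, hlog]
    ring
  calc μ E = ENNReal.ofReal ((μ E).toReal) := (ENNReal.ofReal_toReal hμE).symm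
    _ ≤ ENNReal.ofReal (2 * Real.exp (-(n : ℝ) * binRelEnt γ δ)) := by
        apply ENNReal.ofReal_le_ofReal
        rw [hratio] at hmark
        nlinarith [Real.exp_pos (-(n : ℝ) * binRelEnt γ δ)]
end

section
/- The six single-qubit states form a quantum state 3-design: (1/6)·∑_{ρ ∈ Q̃} ρ ⊗ ρ ⊗ ρ = (1/4)·P_sym3, where P_sym3 = (1/6)·∑_{π ∈ S₃} U_π is the orthogonal projector onto the symmetric subspace of (ℂ²)^{⊗3}, the sum running over the six permutation operators U_π permuting the three tensor factors. -/
open Matrix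

noncomputable def qstate : Fin 6 → Matrix (Fin 2) (Fin 2) ℂ :=
  ![!![1, 0; 0, 0],
    !![0, 0; 0, 1],
    !![1/2, 1/2; 1/2, 1/2],
    !![1/2, -(1/2); -(1/2), 1/2],
    !![1/2, -Complex.I/2; Complex.I/2, 1/2],
    !![1/2, Complex.I/2; -Complex.I/2, 1/2]]

noncomputable def tens3 (ρ : Matrix (Fin 2) (Fin 2) ℂ) :
    Matrix (Fin 3 → Fin 2) (Fin 3 → Fin 2) ℂ :=
  fun x y => ∏ i, ρ (x i) (y i)

def permOp (π : Equiv.Perm (Fin 3)) : Matrix (Fin 3 → Fin 2) (Fin 3 → Fin 2) ℂ :=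
  fun x y => if ∀ i, x (π i) = y i then 1 else 0

lemma univ_perm3 : (Finset.univ : Finset (Equiv.Perm (Fin 3))) =
    {1, Equiv.swap 0 1, Equiv.swap 0 2, Equiv.swap 1 2,
     Equiv.swap 0 1 * Equiv.swap 1 2, Equiv.swap 1 2 * Equiv.swap 0 1} := by
  decide

lemma forall_fin3 (p : Fin 3 → Prop) : (∀ i, p i) ↔ p 0 ∧ p 1 ∧ p 2 := by
  constructor
  · intro h; exact ⟨h 0, h 1, h 2⟩
  · rintro ⟨h0, h1, h2⟩ i; fin_cases i <;> assumption

lemma sum_perm (x y : Fin 3 → Fin 2) :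
    ∑ π : Equiv.Perm (Fin 3), permOp π x y =
      (if x 0 = y 0 ∧ x 1 = y 1 ∧ x 2 = y 2 then 1 else 0) +
      ((if x 1 = y 0 ∧ x 0 = y 1 ∧ x 2 = y 2 then 1 else 0) +
      ((if x 2 = y 0 ∧ x 1 = y 1 ∧ x 0 = y 2 then 1 else 0) +
      ((if x 0 = y 0 ∧ x 2 = y 1 ∧ x 1 = y 2 then 1 else 0) +
      ((if x 1 = y 0 ∧ x 2 = y 1 ∧ x 0 = y 2 then 1 else 0) +
      (if x 2 = y 0 ∧ x 0 = y 1 ∧ x 1 = y 2 then 1 else 0))))) := by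
  rw [univ_perm3]
  rw [Finset.sum_insert (by decide), Finset.sum_insert (by decide),
    Finset.sum_insert (by decide), Finset.sum_insert (by decide),
    Finset.sum_insert (by decide), Finset.sum_singleton]
  have e1 : Equiv.swap (0:Fin 3) 1 0 = 1 := by decide
  have e2 : Equiv.swap (0:Fin 3) 1 1 = 0 := by decide
  have e3 : Equiv.swap (0:Fin 3) 1 2 = 2 := by decide
  have e4 : Equiv.swap (0:Fin 3) 2 0 = 2 := by decide
  have e5 : Equiv.swap (0:Fin 3) 2 1 = 1 := by decide
  have e6 : Equiv.swap (0:Fin 3) 2 2 = 0 := by decide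
  have e7 : Equiv.swap (1:Fin 3) 2 0 = 0 := by decide
  have e8 : Equiv.swap (1:Fin 3) 2 1 = 2 := by decide
  have e9 : Equiv.swap (1:Fin 3) 2 2 = 1 := by decide
  simp only [permOp, forall_fin3, Equiv.Perm.one_apply, Equiv.Perm.mul_apply,
    e1, e2, e3, e4, e5, e6, e7, e8, e9]

lemma fin2_cases (a : Fin 2) : a = 0 ∨ a = 1 := by omega


lemma q0 : qstate 0 = !![1, 0; 0, 0] := rfl
lemma q1 : qstate 1 = !![0, 0; 0, 1] := rfl
lemma q2 : qstate 2 = !![1/2, 1/2; 1/2, 1/2] := rfl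
lemma q3 : qstate 3 = !![1/2, -(1/2); -(1/2), 1/2] := rfl
lemma q4 : qstate 4 = !![1/2, -Complex.I/2; Complex.I/2, 1/2] := rfl
lemma q5 : qstate 5 = !![1/2, Complex.I/2; -Complex.I/2, 1/2] := rfl

set_option maxHeartbeats 2000000 in
/-- The six single-qubit states form a quantum state 3-design:
`(1/6)·∑_{ρ ∈ Q̃} ρ⊗ρ⊗ρ = (1/4)·P_sym3`, where `P_sym3 = (1/6)·∑_{π ∈ S₃} U_π` is the
orthogonal projector onto the symmetric subspace of `(ℂ²)^{⊗3}`. -/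
theorem six_states_three_design :
    ((1 : ℂ)/6) • ∑ k : Fin 6, tens3 (qstate k) =
      ((1 : ℂ)/4) • (((1 : ℂ)/6) • ∑ π : Equiv.Perm (Fin 3), permOp π) := by
  ext x y
  simp only [Matrix.smul_apply, Matrix.sum_apply, smul_eq_mul]
  rw [sum_perm]
  simp only [tens3, Fin.sum_univ_six, Fin.prod_univ_three, q0, q1, q2, q3, q4, q5]
  rcases fin2_cases (x 0) with h|h <;> rw [h] <;> clear h <;>
  rcases fin2_cases (x 1) with h|h <;> rw [h] <;> clear h <;>
  rcases fin2_cases (x 2) with h|h <;> rw [h] <;> clear h <;>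
  rcases fin2_cases (y 0) with h|h <;> rw [h] <;> clear h <;>
  rcases fin2_cases (y 1) with h|h <;> rw [h] <;> clear h <;>
  rcases fin2_cases (y 2) with h|h <;> rw [h] <;> clear h <;>
  norm_num [Matrix.cons_val_zero, Matrix.cons_val_one, Matrix.head_cons, Complex.ext_iff]
end

section
/- (Soundness of qtickets) For each i ∈ {1,...,N} let M_i be a CPTP map on 2×2 complex matrices, and set F_i = (1/6)·∑_{ρ ∈ Q̃} Tr[ρ·M_i(ρ)] (the average fidelity of M_i) and F_exp = (1/N)·∑_{i=1}^N F_i. Let M = ⊗_{i=1}^N M_i act componentwise on N-qubit product states, and let 0 ≤ F_tol ≤ F_exp ≤ 1. Then the average acceptance probability satisfies 6^{−N} · ∑_{ρ ∈ Q̃^N} Tr[P_acc^ρ · M(ρ)] ≥ 1 − exp(−N·D(F_tol‖F_exp)), where for ρ = (ρ_1,...,ρ_N) ∈ Q̃^N the state fed to M is the tensor product ⊗_i ρ_i. -/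
open Matrix

/-- Tensor product `⊗_{i<N} A_i` of a family of 2×2 matrices, as a matrix indexed by
functions `Fin N → Fin 2`. -/
noncomputable def tensFam {N : ℕ} (A : Fin N → Matrix (Fin 2) (Fin 2) ℂ) :
    Matrix (Fin N → Fin 2) (Fin N → Fin 2) ℂ :=
  fun x y => ∏ i, A i (x i) (y i)

/-- The acceptance projector `P_acc^ρ` for an `N`-qubit pure product state
`ρ = ⊗_i ρ_i` and tolerance `F_tol`: the sum over boolean strings `b` with
`∑ b_i ≥ F_tol·N` of `⊗_i (b_i·ρ_i + (1−b_i)·(1−ρ_i))`. -/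
noncomputable def Pacc {N : ℕ} (Ftol : ℝ) (ρ : Fin N → Matrix (Fin 2) (Fin 2) ℂ) :
    Matrix (Fin N → Fin 2) (Fin N → Fin 2) ℂ :=
  ∑ b : Fin N → Bool,
    if Ftol * N ≤ ∑ i, (if b i then (1 : ℝ) else 0) then
      tensFam (fun i => if b i then ρ i else 1 - ρ i)
    else 0

/-- The CPTP map with Kraus operators `K j`, acting as `X ↦ ∑_j K_j X K_j†`. -/
noncomputable def krausApply {n m κ : Type*} [Fintype n] [Fintype κ]
    (K : κ → Matrix m n ℂ) (X : Matrix n n ℂ) : Matrix m m ℂ :=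
  ∑ j, K j * X * (K j)ᴴ

/-- The average fidelity of a single-qubit channel, computed (via the 2-design
property) as the average over the six states. -/
noncomputable def avgFid {κ : Type*} [Fintype κ]
    (K : κ → Matrix (Fin 2) (Fin 2) ℂ) : ℝ :=
  (1/6 : ℝ) * ∑ s : Fin 6, (Matrix.trace (qstate s * krausApply K (qstate s))).re


open Matrix

def qv : Fin 6 → Fin 2 → ℂ :=
  ![![1,0], ![0,1], ![1,1], ![1,-1], ![1,Complex.I], ![1,-Complex.I]]

noncomputable def qc : Fin 6 → ℝ := ![1, 1, 1/2, 1/2, 1/2, 1/2]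

def qflip : Fin 6 → Fin 6 := ![1, 0, 3, 2, 5, 4]

lemma f62 : (2:Fin 6)=Fin.succ 1 := rfl
lemma f63 : (3:Fin 6)=Fin.succ 2 := rfl
lemma f64 : (4:Fin 6)=Fin.succ 3 := rfl
lemma f65 : (5:Fin 6)=Fin.succ 4 := rfl
lemma f52 : (2:Fin 5)=Fin.succ 1 := rfl
lemma f53 : (3:Fin 5)=Fin.succ 2 := rfl
lemma f54 : (4:Fin 5)=Fin.succ 3 := rfl
lemma f42 : (2:Fin 4)=Fin.succ 1 := rfl
lemma f43 : (3:Fin 4)=Fin.succ 2 := rfl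
lemma f32 : (2:Fin 3)=Fin.succ 1 := rfl

lemma qc_nonneg (s : Fin 6) : 0 ≤ qc s := by fin_cases s <;> norm_num [qc]

lemma qstate_eq_outer (s : Fin 6) :
    qstate s = (qc s : ℂ) • Matrix.vecMulVec (qv s) (star (qv s)) := by
  fin_cases s <;> ext i j <;> fin_cases i <;> fin_cases j <;>
    rw [Matrix.smul_apply, Matrix.vecMulVec_apply] <;>
    simp [qstate, qv, qc, f62,f63,f64,f65,f52,f53,f54,f42,f43,f32, Matrix.cons_val_succ, Matrix.vecMulVec_apply, Complex.ext_iff] <;> norm_num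

lemma one_sub_qstate (s : Fin 6) : 1 - qstate s = qstate (qflip s) := by
  fin_cases s <;> ext i j <;> fin_cases i <;> fin_cases j <;>
    simp [qstate, qflip, f62,f63,f64,f65,f52,f53,f54,f42,f43,f32, Matrix.cons_val_succ, Matrix.one_apply, Complex.ext_iff] <;> norm_num

lemma trace_qstate (s : Fin 6) : (qstate s).trace = 1 := by
  fin_cases s <;> simp [qstate, f62,f63,f64,f65,f52,f53,f54,f42,f43,f32, Matrix.cons_val_succ, Matrix.trace_fin_two] <;> norm_num

-- trace of product of tensor families
lemma trace_tensFam_mul {N : ℕ} (A B : Fin N → Matrix (Fin 2) (Fin 2) ℂ) :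
    (tensFam A * tensFam B).trace = ∏ i, (A i * B i).trace := by
  classical
  have h1 : (tensFam A * tensFam B).trace
      = ∑ x : Fin N → Fin 2, ∑ y : Fin N → Fin 2,
          ∏ i, (A i (x i) (y i) * B i (y i) (x i)) := by
    simp only [Matrix.trace, Matrix.diag, Matrix.mul_apply, tensFam]
    refine Finset.sum_congr rfl fun x _ => Finset.sum_congr rfl fun y _ => ?_
    rw [← Finset.prod_mul_distrib]
  rw [h1]
  have h2 : ∀ x : Fin N → Fin 2, ∑ y : Fin N → Fin 2,
      ∏ i, (A i (x i) (y i) * B i (y i) (x i))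
      = ∏ i, ∑ v : Fin 2, (A i (x i) v * B i v (x i)) := fun x =>
    (Fintype.prod_sum (fun i v => A i (x i) v * B i v (x i))).symm
  rw [Finset.sum_congr rfl fun x _ => h2 x,
    ← Fintype.prod_sum (fun i u => ∑ v : Fin 2, (A i u v * B i v u))]
  refine Finset.prod_congr rfl fun i _ => ?_
  simp [Matrix.trace, Matrix.diag, Matrix.mul_apply]

lemma trace_Pacc_mul {N : ℕ} (Ftol : ℝ) (ρ C : Fin N → Matrix (Fin 2) (Fin 2) ℂ) :
    (Pacc Ftol ρ * tensFam C).trace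
      = ∑ b : Fin N → Bool,
          if Ftol * N ≤ ∑ i, (if b i then (1:ℝ) else 0) then
            ∏ i, ((if b i then ρ i else 1 - ρ i) * C i).trace
          else 0 := by
  classical
  rw [Pacc, Finset.sum_mul, Matrix.trace_sum]
  refine Finset.sum_congr rfl fun b _ => ?_
  split
  · rw [trace_tensFam_mul]
  · simp

-- the key single-qubit trace computation
lemma trace_outer_kraus {κ : Type*} [Fintype κ] (w u : Fin 2 → ℂ)
    (K : κ → Matrix (Fin 2) (Fin 2) ℂ) :
    (Matrix.vecMulVec w (star w) * krausApply K (Matrix.vecMulVec u (star u))).trace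
      = ∑ j, (Complex.normSq (star w ⬝ᵥ (K j *ᵥ u)) : ℂ) := by
  rw [krausApply, Finset.mul_sum, Matrix.trace_sum]
  refine Finset.sum_congr rfl fun j _ => ?_
  rw [← Complex.mul_conj]
  simp only [Matrix.trace, Matrix.diag, Matrix.mul_apply, Matrix.vecMulVec_apply,
    Matrix.conjTranspose_apply, Matrix.mulVec, dotProduct, Pi.star_apply,
    Fin.sum_univ_two, RCLike.star_def, _root_.map_add, _root_.map_mul, Complex.conj_conj]
  ring

lemma trace_krausApply {κ : Type*} [Fintype κ] (K : κ → Matrix (Fin 2) (Fin 2) ℂ)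
    (hK : ∑ j, (K j)ᴴ * K j = 1) (X : Matrix (Fin 2) (Fin 2) ℂ) :
    (krausApply K X).trace = X.trace := by
  rw [krausApply, Matrix.trace_sum]
  have h : ∀ j, (K j * X * (K j)ᴴ).trace = ((K j)ᴴ * K j * X).trace := fun j => by
    rw [Matrix.trace_mul_cycle]
  rw [Finset.sum_congr rfl fun j _ => h j, ← Matrix.trace_sum, ← Finset.sum_mul, hK, one_mul]

lemma qtrace {κ : Type*} [Fintype κ] (K : κ → Matrix (Fin 2) (Fin 2) ℂ) (u s : Fin 6) :
    (qstate u * krausApply K (qstate s)).trace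
      = ((qc u * qc s * ∑ j, Complex.normSq (star (qv u) ⬝ᵥ (K j *ᵥ qv s)) : ℝ) : ℂ) := by
  rw [qstate_eq_outer u, qstate_eq_outer s]
  have h1 : krausApply K ((qc s : ℂ) • Matrix.vecMulVec (qv s) (star (qv s)))
      = (qc s : ℂ) • krausApply K (Matrix.vecMulVec (qv s) (star (qv s))) := by
    simp [krausApply, Matrix.mul_smul, Matrix.smul_mul, Finset.smul_sum]
  rw [h1, Matrix.smul_mul, Matrix.mul_smul, Matrix.trace_smul, Matrix.trace_smul,
    trace_outer_kraus]
  push_cast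
  simp only [smul_eq_mul]
  ring

lemma qstate_add_flip (s : Fin 6) : qstate s + qstate (qflip s) = 1 := by
  rw [← one_sub_qstate]; abel



lemma amgm {N : ℕ} (hN : 0 < N) (x : Fin N → ℝ) (hx : ∀ i, 0 ≤ x i) :
    ∏ i, x i ≤ ((∑ i, x i) / N) ^ N := by
  have hNR : (0:ℝ) < N := by exact_mod_cast hN
  have h := Real.geom_mean_le_arith_mean_weighted Finset.univ (fun _ => (N:ℝ)⁻¹) x
      (fun i _ => by positivity)
      (by simp [Finset.sum_const, Finset.card_univ]; field_simp)
      (fun i _ => hx i)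
  have key : ∏ i, x i = (∏ i, x i ^ ((N:ℝ)⁻¹)) ^ N := by
    rw [← Finset.prod_pow]
    refine Finset.prod_congr rfl fun i _ => ?_
    rw [← Real.rpow_natCast (x i ^ ((N:ℝ)⁻¹)) N, ← Real.rpow_mul (hx i),
      inv_mul_cancel₀ (ne_of_gt hNR), Real.rpow_one]
  rw [key]
  have h2 : (∏ i, x i ^ ((N:ℝ)⁻¹)) ≤ (∑ i, x i) / N := by
    refine h.trans_eq ?_
    rw [Finset.sum_div]
    exact Finset.sum_congr rfl fun i _ => by ring
  refine pow_le_pow_left₀ ?_ h2 N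
  exact Finset.prod_nonneg fun i _ => Real.rpow_nonneg (hx i) _

set_option maxHeartbeats 1000000 in
lemma chernoff {N : ℕ} (hN : 0 < N) (G : Fin N → ℝ)
    (hG0 : ∀ i, 0 ≤ G i) (hG1 : ∀ i, G i ≤ 1) (a m : ℝ)
    (ha0 : 0 ≤ a) (ham : a ≤ m) (hm1 : m ≤ 1) (hsum : ∑ i, G i = N * m) :
    1 - Real.exp (-(N : ℝ) * binRelEnt a m) ≤
      ∑ b : Fin N → Bool,
        if a * N ≤ ∑ i, (if b i then (1:ℝ) else 0) then
          ∏ i, (if b i then G i else 1 - G i) else 0 := by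
  have hNR : (0:ℝ) < N := by exact_mod_cast hN
  have hw : ∀ b : Fin N → Bool, (0:ℝ) ≤ ∏ i, (if b i then G i else 1 - G i) := fun b =>
    Finset.prod_nonneg fun i _ => by
      by_cases h : b i <;> simp [h, hG0 i] <;> linarith [hG1 i]
  have hS0 : ∀ b : Fin N → Bool, (0:ℝ) ≤ ∑ i, (if b i then (1:ℝ) else 0) := fun b =>
    Finset.sum_nonneg fun i _ => by by_cases h : b i <;> simp [h]
  have hAcc0 : (0:ℝ) ≤ ∑ b : Fin N → Bool,
      if a * N ≤ ∑ i, (if b i then (1:ℝ) else 0) then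
        ∏ i, (if b i then G i else 1 - G i) else 0 :=
    Finset.sum_nonneg fun b _ => by
      by_cases h : a * N ≤ ∑ i, (if b i then (1:ℝ) else 0)
      · rw [if_pos h]; exact hw b
      · rw [if_neg h]
  have hFail0 : (0:ℝ) ≤ ∑ b : Fin N → Bool,
      if a * N ≤ ∑ i, (if b i then (1:ℝ) else 0) then 0 else
        ∏ i, (if b i then G i else 1 - G i) :=
    Finset.sum_nonneg fun b _ => by
      by_cases h : a * N ≤ ∑ i, (if b i then (1:ℝ) else 0)
      · rw [if_pos h]
      · rw [if_neg h]; exact hw b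
  have htotal : (∑ b : Fin N → Bool,
      if a * N ≤ ∑ i, (if b i then (1:ℝ) else 0) then
        ∏ i, (if b i then G i else 1 - G i) else 0)
      + (∑ b : Fin N → Bool,
      if a * N ≤ ∑ i, (if b i then (1:ℝ) else 0) then 0 else
        ∏ i, (if b i then G i else 1 - G i)) = 1 := by
    rw [← Finset.sum_add_distrib]
    have h1 : ∀ b : Fin N → Bool,
        (if a * N ≤ ∑ i, (if b i then (1:ℝ) else 0) then
          ∏ i, (if b i then G i else 1 - G i) else 0)
        + (if a * N ≤ ∑ i, (if b i then (1:ℝ) else 0) then 0 else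
          ∏ i, (if b i then G i else 1 - G i))
        = ∏ i, (if b i then G i else 1 - G i) := fun b => by split <;> ring
    rw [Finset.sum_congr rfl fun b _ => h1 b,
      ← Fintype.prod_sum (fun (i : Fin N) (t : Bool) => if t then G i else 1 - G i)]
    simp
  suffices hF : (∑ b : Fin N → Bool,
      if a * N ≤ ∑ i, (if b i then (1:ℝ) else 0) then 0 else
        ∏ i, (if b i then G i else 1 - G i)) ≤ Real.exp (-(N : ℝ) * binRelEnt a m) by
    linarith
  by_cases ha : a = 0
  · have hz : (∑ b : Fin N → Bool,
        if a * N ≤ ∑ i, (if b i then (1:ℝ) else 0) then 0 else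
          ∏ i, (if b i then G i else 1 - G i)) = 0 := by
      refine Finset.sum_eq_zero fun b _ => ?_
      have : a * N ≤ ∑ i, (if b i then (1:ℝ) else 0) := by
        rw [ha]; simpa using hS0 b
      rw [if_pos this]
    rw [hz]; positivity
  have ha0' : 0 < a := lt_of_le_of_ne ha0 (Ne.symm ha)
  have hm0 : 0 < m := lt_of_lt_of_le ha0' ham
  by_cases hm1' : m = 1
  · have hD : binRelEnt a m = a * Real.log a := by
      rw [binRelEnt, hm1']; simp
    have ha1 : a ≤ 1 := le_trans ham (le_of_eq hm1')
    have hlog : Real.log a ≤ 0 := Real.log_nonpos ha0 ha1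
    have hnn : 0 ≤ -(N:ℝ) * binRelEnt a m := by
      rw [hD]
      nlinarith [mul_nonneg hNR.le (mul_nonneg ha0 (neg_nonneg.2 hlog))]
    have h1 : (1:ℝ) ≤ Real.exp (-(N:ℝ) * binRelEnt a m) := Real.one_le_exp hnn
    linarith
  have hmlt1 : m < 1 := lt_of_le_of_ne hm1 hm1'
  have ha1 : a < 1 := lt_of_le_of_lt ham hmlt1
  set c : ℝ := a * (1 - m) / (m * (1 - a)) with hc
  clear_value c
  have hc0 : 0 < c := by rw [hc]; apply div_pos <;> nlinarith
  have hc1 : c ≤ 1 := by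
    rw [hc, div_le_one (by nlinarith)]
    nlinarith
  set L : ℝ := -Real.log c with hL
  clear_value L
  have hL0 : 0 ≤ L := by
    rw [hL]; linarith [Real.log_nonpos hc0.le hc1]
  have hexpc : Real.exp (-L) = c := by
    rw [hL, neg_neg, Real.exp_log hc0]
  have step1 : (∑ b : Fin N → Bool,
      if a * N ≤ ∑ i, (if b i then (1:ℝ) else 0) then 0 else
        ∏ i, (if b i then G i else 1 - G i))
      ≤ ∑ b : Fin N → Bool,
        Real.exp (L * (a * N - ∑ i, (if b i then (1:ℝ) else 0)))
          * ∏ i, (if b i then G i else 1 - G i) := by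
    refine Finset.sum_le_sum fun b _ => ?_
    by_cases h : a * N ≤ ∑ i, (if b i then (1:ℝ) else 0)
    · simp only [h, if_true]
      exact mul_nonneg (Real.exp_nonneg _) (hw b)
    · simp only [h, if_false]
      refine le_mul_of_one_le_left (hw b) (Real.one_le_exp ?_)
      push_neg at h
      nlinarith
  have step2 : (∑ b : Fin N → Bool,
      Real.exp (L * (a * N - ∑ i, (if b i then (1:ℝ) else 0)))
        * ∏ i, (if b i then G i else 1 - G i))
      = Real.exp (L * (a * N)) * ∏ i, (c * G i + (1 - G i)) := by
    have hterm : ∀ b : Fin N → Bool,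
        Real.exp (L * (a * N - ∑ i, (if b i then (1:ℝ) else 0)))
          * ∏ i, (if b i then G i else 1 - G i)
        = Real.exp (L * (a * N)) * ∏ i, (if b i then c * G i else 1 - G i) := by
      intro b
      have hexpS : Real.exp (-L * ∑ i, (if b i then (1:ℝ) else 0))
          = ∏ i, (if b i then c else 1) := by
        rw [show -L * ∑ i, (if b i then (1:ℝ) else 0)
          = ∑ i, (-L * if b i then (1:ℝ) else 0) by rw [Finset.mul_sum]]
        rw [Real.exp_sum]
        refine Finset.prod_congr rfl fun i _ => ?_
        by_cases h : b i <;> simp [h, hexpc]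
      have hsplit : Real.exp (L * (a * N - ∑ i, (if b i then (1:ℝ) else 0)))
          = Real.exp (L * (a * N))
            * Real.exp (-L * ∑ i, (if b i then (1:ℝ) else 0)) := by
        rw [← Real.exp_add]; ring_nf
      rw [hsplit, hexpS, mul_assoc, ← Finset.prod_mul_distrib]
      congr 1
      refine Finset.prod_congr rfl fun i _ => ?_
      by_cases h : b i <;> simp [h]
    rw [Finset.sum_congr rfl fun b _ => hterm b, ← Finset.mul_sum]
    congr 1
    rw [← Fintype.prod_sum (fun (i : Fin N) (t : Bool) => if t then c * G i else 1 - G i)]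
    refine Finset.prod_congr rfl fun i _ => ?_
    simp
  have step3 : ∏ i, (c * G i + (1 - G i)) ≤ (c * m + (1 - m)) ^ N := by
    have h := amgm hN (fun i => c * G i + (1 - G i))
      (fun i => by
        show (0:ℝ) ≤ c * G i + (1 - G i)
        nlinarith [mul_nonneg hc0.le (hG0 i), hG1 i])
    refine h.trans_eq ?_
    congr 1
    have hs : ∑ i, (c * G i + (1 - G i)) = c * (N * m) + ((N:ℝ) - N * m) := by
      rw [Finset.sum_add_distrib, ← Finset.mul_sum, Finset.sum_sub_distrib, hsum]
      simp [Finset.sum_const, Finset.card_univ]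
    rw [hs]
    field_simp
  have hxval : c * m + (1 - m) = (1 - m) / (1 - a) := by
    have hm0' : m ≠ 0 := ne_of_gt hm0
    have ha1' : (1:ℝ) - a ≠ 0 := by linarith
    rw [hc]; field_simp; ring
  have hxpos : (0:ℝ) < c * m + (1 - m) := by nlinarith [mul_pos hc0 hm0]
  have step4 : Real.exp (L * (a * N)) * (c * m + (1 - m)) ^ N
      = Real.exp (-(N : ℝ) * binRelEnt a m) := by
    rw [← Real.exp_log hxpos, ← Real.exp_nat_mul, ← Real.exp_add]
    congr 1
    have hlogx : Real.log (c * m + (1 - m)) = Real.log (1 - m) - Real.log (1 - a) := by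
      rw [hxval, Real.log_div (by nlinarith) (by nlinarith)]
    have hlogc : Real.log c = Real.log a + Real.log (1 - m)
        - (Real.log m + Real.log (1 - a)) := by
      rw [hc, Real.log_div (mul_pos ha0' (by linarith : (0:ℝ) < 1 - m)).ne' (mul_pos hm0 (by linarith : (0:ℝ) < 1 - a)).ne',
        Real.log_mul (ne_of_gt ha0') (by nlinarith),
        Real.log_mul (ne_of_gt hm0) (by nlinarith)]
    have hD : binRelEnt a m = a * (Real.log a - Real.log m)
        + (1 - a) * (Real.log (1 - a) - Real.log (1 - m)) := by
      rw [binRelEnt, Real.log_div (ne_of_gt ha0') (ne_of_gt hm0),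
        Real.log_div (by nlinarith) (by nlinarith)]
    rw [hlogx, hD, hL, hlogc]
    ring
  calc (∑ b : Fin N → Bool,
      if a * N ≤ ∑ i, (if b i then (1:ℝ) else 0) then 0 else
        ∏ i, (if b i then G i else 1 - G i))
      ≤ ∑ b : Fin N → Bool,
        Real.exp (L * (a * N - ∑ i, (if b i then (1:ℝ) else 0)))
          * ∏ i, (if b i then G i else 1 - G i) := step1
    _ = Real.exp (L * (a * N)) * ∏ i, (c * G i + (1 - G i)) := step2
    _ ≤ Real.exp (L * (a * N)) * (c * m + (1 - m)) ^ N :=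
        mul_le_mul_of_nonneg_left step3 (Real.exp_nonneg _)
    _ = Real.exp (-(N : ℝ) * binRelEnt a m) := step4

/-- Soundness of qtickets: if the per-qubit average fidelity `F_exp` exceeds the
tolerance `F_tol`, an honest holder redeems a qticket except with probability at
most `exp(−N·D(F_tol‖F_exp))`. -/
theorem qticket_soundness (N : ℕ) (hN : 0 < N) (κ : Type) [Fintype κ]
    (K : Fin N → κ → Matrix (Fin 2) (Fin 2) ℂ)
    (hK : ∀ i, ∑ j, (K i j)ᴴ * K i j = 1)
    (Ftol : ℝ) (hF0 : 0 ≤ Ftol)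
    (hFtol : Ftol ≤ (∑ i, avgFid (K i)) / N)
    (hFexp : (∑ i, avgFid (K i)) / N ≤ 1) :
    1 - Real.exp (-(N : ℝ) * binRelEnt Ftol ((∑ i, avgFid (K i)) / N)) ≤
      (1 / (6 : ℝ) ^ N) * ∑ f : Fin N → Fin 6,
        (Matrix.trace (Pacc Ftol (fun i => qstate (f i)) *
          tensFam (fun i => krausApply (K i) (qstate (f i))))).re := by
  classical
  have hNR : (0:ℝ) < N := by exact_mod_cast hN
  have hNne : (N:ℝ) ≠ 0 := ne_of_gt hNR
  -- per-qubit real trace values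
  have hqt : ∀ (i : Fin N) (s u : Fin 6),
      (qstate u * krausApply (K i) (qstate s)).trace
        = ((qc u * qc s * ∑ j, Complex.normSq (star (qv u) ⬝ᵥ (K i j *ᵥ qv s)) : ℝ) : ℂ) :=
    fun i s u => qtrace (K i) u s
  set τ : Fin N → Fin 6 → Fin 6 → ℝ := fun i s u =>
    qc u * qc s * ∑ j, Complex.normSq (star (qv u) ⬝ᵥ (K i j *ᵥ qv s)) with hτdef
  have hqt' : ∀ (i : Fin N) (s u : Fin 6),
      (qstate u * krausApply (K i) (qstate s)).trace = ((τ i s u : ℝ) : ℂ) := hqt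
  have hτ0 : ∀ i s u, 0 ≤ τ i s u := fun i s u =>
    mul_nonneg (mul_nonneg (qc_nonneg u) (qc_nonneg s))
      (Finset.sum_nonneg fun j _ => Complex.normSq_nonneg _)
  have hsum1 : ∀ i s, τ i s s + τ i s (qflip s) = 1 := by
    intro i s
    have h1 : ((τ i s s + τ i s (qflip s) : ℝ) : ℂ) = 1 := by
      push_cast
      rw [← hqt' i s s, ← hqt' i s (qflip s), ← Matrix.trace_add, ← Matrix.add_mul,
        qstate_add_flip, Matrix.one_mul, trace_krausApply (K i) (hK i), trace_qstate]
    exact_mod_cast h1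
  have hGτ : ∀ i, avgFid (K i) = 1/6 * ∑ s, τ i s s := by
    intro i
    rw [avgFid]
    congr 1
    refine Finset.sum_congr rfl fun s _ => ?_
    rw [hqt' i s s, Complex.ofReal_re]
  have hG0 : ∀ i, 0 ≤ avgFid (K i) := fun i => by
    rw [hGτ i]
    have := Finset.sum_nonneg fun (s : Fin 6) (_ : s ∈ Finset.univ) => hτ0 i s s
    linarith
  have hG1 : ∀ i, avgFid (K i) ≤ 1 := fun i => by
    rw [hGτ i]
    have hle : ∑ s : Fin 6, τ i s s ≤ 6 := by
      calc ∑ s : Fin 6, τ i s s ≤ ∑ _s : Fin 6, (1:ℝ) :=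
            Finset.sum_le_sum fun s _ => by
              have h1 := hsum1 i s; have h2 := hτ0 i s (qflip s); linarith
        _ = 6 := by simp
    linarith
  have hflipsum : ∀ i, (1/6:ℝ) * ∑ s, τ i s (qflip s) = 1 - avgFid (K i) := by
    intro i
    have h6 : ∑ s : Fin 6, (τ i s s + τ i s (qflip s)) = 6 := by
      rw [Finset.sum_congr rfl fun s _ => hsum1 i s]; simp
    rw [Finset.sum_add_distrib] at h6
    rw [hGτ i]; linarith
  -- Step A : per-f rewriting of the trace
  have stepA : ∀ f : Fin N → Fin 6,
      (Matrix.trace (Pacc Ftol (fun i => qstate (f i)) *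
        tensFam (fun i => krausApply (K i) (qstate (f i))))).re
      = ∑ b : Fin N → Bool,
          if Ftol * N ≤ ∑ i, (if b i then (1:ℝ) else 0) then
            ∏ i, τ i (f i) (if b i then f i else qflip (f i))
          else 0 := by
    intro f
    rw [trace_Pacc_mul]
    have hb : ∀ b : Fin N → Bool,
        (if Ftol * N ≤ ∑ i, (if b i then (1:ℝ) else 0) then
          ∏ i, ((if b i then qstate (f i) else 1 - qstate (f i)) *
            krausApply (K i) (qstate (f i))).trace else 0)
        = (((if Ftol * N ≤ ∑ i, (if b i then (1:ℝ) else 0) then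
            ∏ i, τ i (f i) (if b i then f i else qflip (f i)) else 0 : ℝ)) : ℂ) := by
      intro b
      by_cases hcond : Ftol * N ≤ ∑ i, (if b i then (1:ℝ) else 0)
      · rw [if_pos hcond, if_pos hcond]
        have hfac : ∀ i : Fin N, ((if b i then qstate (f i) else 1 - qstate (f i)) *
            krausApply (K i) (qstate (f i))).trace
            = ((τ i (f i) (if b i then f i else qflip (f i)) : ℝ) : ℂ) := by
          intro i
          by_cases h : b i
          · simp only [h, if_true]; exact hqt' i (f i) (f i)
          · simp only [h, if_false]
            rw [one_sub_qstate]; exact hqt' i (f i) (qflip (f i))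
        rw [Finset.prod_congr rfl fun i _ => hfac i, ← Complex.ofReal_prod]
      · rw [if_neg hcond, if_neg hcond]; simp
    rw [Finset.sum_congr rfl fun b _ => hb b, ← Complex.ofReal_sum, Complex.ofReal_re]
  -- Step C : averaging over f for a fixed b
  have stepC : ∀ b : Fin N → Bool,
      (1 / (6:ℝ) ^ N) * ∑ f : Fin N → Fin 6,
          ∏ i, τ i (f i) (if b i then f i else qflip (f i))
      = ∏ i, (if b i then avgFid (K i) else 1 - avgFid (K i)) := by
    intro b
    have h1 : ∑ f : Fin N → Fin 6, ∏ i, τ i (f i) (if b i then f i else qflip (f i))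
        = ∏ i, ∑ s, τ i s (if b i then s else qflip s) :=
      (Fintype.prod_sum (fun (i : Fin N) (s : Fin 6) =>
        τ i s (if b i then s else qflip s))).symm
    rw [h1]
    have h2 : (1/(6:ℝ)^N) = ∏ _i : Fin N, (1/6 : ℝ) := by
      rw [Finset.prod_const, Finset.card_univ, Fintype.card_fin, div_pow, one_pow]
    rw [h2, ← Finset.prod_mul_distrib]
    refine Finset.prod_congr rfl fun i _ => ?_
    by_cases h : b i
    · simp only [h, if_true]
      exact (hGτ i).symm
    · simp only [h, if_false]
      exact hflipsum i
  -- assemble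
  have stepB : (1 / (6 : ℝ) ^ N) * ∑ f : Fin N → Fin 6,
        (Matrix.trace (Pacc Ftol (fun i => qstate (f i)) *
          tensFam (fun i => krausApply (K i) (qstate (f i))))).re
      = ∑ b : Fin N → Bool,
          if Ftol * N ≤ ∑ i, (if b i then (1:ℝ) else 0) then
            ∏ i, (if b i then avgFid (K i) else 1 - avgFid (K i)) else 0 := by
    rw [Finset.sum_congr rfl fun f _ => stepA f, Finset.sum_comm, Finset.mul_sum]
    refine Finset.sum_congr rfl fun b _ => ?_
    by_cases hcond : Ftol * N ≤ ∑ i, (if b i then (1:ℝ) else 0)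
    · simp only [hcond, if_true]
      exact stepC b
    · simp only [hcond, if_false]
      simp
  rw [stepB]
  refine chernoff hN (fun i => avgFid (K i)) hG0 hG1 Ftol ((∑ i, avgFid (K i)) / N)
    hF0 hFtol hFexp ?_
  field_simp
end

section
/- (Selective value of a game) Let G = (ϱ, σ) be a weighted quantum retrieval game with finite nonempty answer set A, whose reduced density matrix ρ = ∑_s ϱ(s) is positive definite. Define O(a) = ∑_{s∈S} σ(s,a) · ρ^{−1/2} ϱ(s) ρ^{−1/2}. Then the selective value of G equals Sel(G) = max_{a∈A} ‖O(a)‖, where ‖·‖ denotes the operator norm, and moreover this supremum is attained by some selective projection. -/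
open Matrix
open scoped ComplexOrder
namespace QRG

variable {n S A : Type*}

/-- The normalization `∑_{s,a} Tr[P(a)ϱ(s)]` of the distribution induced by an
indexed ensemble `ϱ` and a selective projection `P`. -/
noncomputable def normZ [Fintype n] [Fintype S] [Fintype A]
    (ϱ : S → Matrix n n ℂ) (P : A → Matrix n n ℂ) : ℝ :=
  ∑ s, ∑ a, (Matrix.trace (P a * ϱ s)).re

/-- The induced probability distribution `⟨ϱ, P⟩(s,a) = Tr[P(a)ϱ(s)] / normZ`. -/
noncomputable def induced [Fintype n] [Fintype S] [Fintype A]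
    (ϱ : S → Matrix n n ℂ) (P : A → Matrix n n ℂ) (s : S) (a : A) : ℝ :=
  (Matrix.trace (P a * ϱ s)).re / normZ ϱ P

/-- The value `Val(G,P) = ∑_{s,a} p(s,a)·σ(s,a)` of the game `G = (ϱ,σ)` with
respect to the projection `P`. -/
noncomputable def val [Fintype n] [Fintype S] [Fintype A]
    (ϱ : S → Matrix n n ℂ) (σ : S → A → ℝ) (P : A → Matrix n n ℂ) : ℝ :=
  ∑ s, ∑ a, induced ϱ P s a * σ s a

/-- The selective value `Sel(G)`: the supremum of `Val(G,P)` over all selective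
projections `P` (families of positive semidefinite matrices) with positive
normalization. -/
noncomputable def sel [Fintype n] [Fintype S] [Fintype A]
    (ϱ : S → Matrix n n ℂ) (σ : S → A → ℝ) : ℝ :=
  sSup {v | ∃ P : A → Matrix n n ℂ,
    (∀ a, (P a).PosSemidef) ∧ 0 < normZ ϱ P ∧ v = val ϱ σ P}

/-- The physical value `Phys(G)`: the supremum of `Val(G,P)` over all physical
projections `P` (selective projections with `∑_a P(a) = 1`). -/
noncomputable def phys [Fintype n] [DecidableEq n] [Fintype S] [Fintype A]
    (ϱ : S → Matrix n n ℂ) (σ : S → A → ℝ) : ℝ :=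
  sSup {v | ∃ P : A → Matrix n n ℂ,
    (∀ a, (P a).PosSemidef) ∧ (∑ a, P a) = 1 ∧ v = val ϱ σ P}

end QRG

open QRG

/-- The square root of a positive semidefinite matrix, as defined in Mathlib (December 2024),
where it has since been removed. -/
noncomputable def Matrix.PosSemidef.sqrt {n 𝕜 : Type*} [Fintype n] [DecidableEq n] [RCLike 𝕜]
    {A : Matrix n n 𝕜} (hA : A.PosSemidef) : Matrix n n 𝕜 :=
  hA.isHermitian.eigenvectorUnitary.1 * diagonal ((↑) ∘ (√·) ∘ hA.isHermitian.eigenvalues) *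
  (star hA.isHermitian.eigenvectorUnitary : Matrix n n 𝕜)

/-- The `ℓ²` operator norm of a square complex matrix. -/
noncomputable def opNorm {n : Type*} [Fintype n] [DecidableEq n] (M : Matrix n n ℂ) : ℝ :=
  ‖Matrix.toEuclideanCLM (𝕜 := ℂ) M‖

section Helpers

lemma Matrix.PosSemidef.sqrt_mul_self {n 𝕜 : Type*} [Fintype n] [DecidableEq n] [RCLike 𝕜]
    {A : Matrix n n 𝕜} (hA : A.PosSemidef) : hA.sqrt * hA.sqrt = A := by
  set U : Matrix n n 𝕜 := hA.isHermitian.eigenvectorUnitary.1 with hUdef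
  set D : Matrix n n 𝕜 := diagonal ((↑) ∘ (√·) ∘ hA.isHermitian.eigenvalues) with hDdef
  have hU : (star hA.isHermitian.eigenvectorUnitary : Matrix n n 𝕜) * U = 1 :=
    Unitary.coe_star_mul_self _
  have hD : D * D = diagonal (RCLike.ofReal ∘ hA.isHermitian.eigenvalues) := by
    rw [hDdef, diagonal_mul_diagonal]
    congr 1
    funext i
    simp only [Function.comp_apply, ← RCLike.ofReal_mul,
      Real.mul_self_sqrt (hA.eigenvalues_nonneg i)]
  conv_rhs => rw [hA.isHermitian.spectral_theorem, Unitary.conjStarAlgAut_apply]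
  unfold Matrix.PosSemidef.sqrt
  rw [← hUdef, ← hDdef, ← hD]
  calc U * D * (star hA.isHermitian.eigenvectorUnitary : Matrix n n 𝕜) *
        (U * D * (star hA.isHermitian.eigenvectorUnitary : Matrix n n 𝕜))
      = U * (D * ((star hA.isHermitian.eigenvectorUnitary : Matrix n n 𝕜) * U) * D) *
        (star hA.isHermitian.eigenvectorUnitary : Matrix n n 𝕜) := by
        simp only [Matrix.mul_assoc]
    _ = _ := by rw [hU, Matrix.mul_one, Matrix.mul_assoc]

lemma Matrix.PosSemidef.posSemidef_sqrt {n 𝕜 : Type*} [Fintype n] [DecidableEq n] [RCLike 𝕜]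
    {A : Matrix n n 𝕜} (hA : A.PosSemidef) : hA.sqrt.PosSemidef := by
  have hD : (diagonal ((↑) ∘ (√·) ∘ hA.isHermitian.eigenvalues) : Matrix n n 𝕜).PosSemidef :=
    Matrix.PosSemidef.diagonal fun i => by
      simp only [Pi.zero_apply, Function.comp_apply]
      exact RCLike.ofReal_nonneg.mpr (Real.sqrt_nonneg _)
  have := hD.mul_mul_conjTranspose_same (hA.isHermitian.eigenvectorUnitary.1)
  unfold Matrix.PosSemidef.sqrt
  rwa [← Matrix.star_eq_conjTranspose] at this

set_option linter.unusedSectionVars false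

variable {n : Type*} [Fintype n] [DecidableEq n]

lemma QRGaux.re_dot_le (M : Matrix n n ℂ) (u : n → ℂ) :
    (star u ⬝ᵥ M *ᵥ u).re ≤ opNorm M * (star u ⬝ᵥ u).re := by
  set x : EuclideanSpace ℂ n := (WithLp.equiv 2 _).symm u with hx
  have hTx : Matrix.toEuclideanCLM (𝕜 := ℂ) M x = (WithLp.equiv 2 _).symm (M *ᵥ u) := by
    have h1 : (Matrix.toEuclideanCLM (𝕜 := ℂ) M) x = Matrix.toEuclideanLin M x := by
      rw [← Matrix.coe_toEuclideanCLM_eq_toEuclideanLin]; rfl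
    rw [h1, Matrix.toEuclideanLin_apply]
    simp [hx]
  have hinner : (inner ℂ x (Matrix.toEuclideanCLM (𝕜 := ℂ) M x) : ℂ) = star u ⬝ᵥ M *ᵥ u := by
    rw [EuclideanSpace.inner_eq_star_dotProduct, hTx]
    simp [hx]
    exact dotProduct_comm _ _
  have hself : (star u ⬝ᵥ u).re = ‖x‖ ^ 2 := by
    have h : (inner ℂ x x : ℂ) = star u ⬝ᵥ u := by
      rw [EuclideanSpace.inner_eq_star_dotProduct]; simp [hx]; exact dotProduct_comm _ _
    rw [← h]
    exact inner_self_eq_norm_sq (𝕜 := ℂ) x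
  calc (star u ⬝ᵥ M *ᵥ u).re = (inner ℂ x (Matrix.toEuclideanCLM (𝕜 := ℂ) M x) : ℂ).re := by
        rw [hinner]
    _ ≤ ‖(inner ℂ x (Matrix.toEuclideanCLM (𝕜 := ℂ) M x) : ℂ)‖ := Complex.re_le_norm _
    _ ≤ ‖x‖ * ‖Matrix.toEuclideanCLM (𝕜 := ℂ) M x‖ := norm_inner_le_norm _ _
    _ ≤ ‖x‖ * (opNorm M * ‖x‖) := by
        gcongr
        exact ContinuousLinearMap.le_opNorm _ _
    _ = opNorm M * ‖x‖ ^ 2 := by ring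
    _ = opNorm M * (star u ⬝ᵥ u).re := by rw [hself]

lemma QRGaux.trace_re_nonneg {Q : Matrix n n ℂ} (hQ : Q.PosSemidef) : 0 ≤ Q.trace.re := by
  rw [Matrix.trace, Complex.re_sum]
  refine Finset.sum_nonneg fun i _ => ?_
  have := hQ.re_dotProduct_nonneg (Pi.single i 1)
  simpa [Matrix.diag, Matrix.mulVec_single, dotProduct, Pi.single_apply,
    Finset.sum_ite_eq'] using this

lemma QRGaux.diag_as_dot (B M : Matrix n n ℂ) (hB : B.IsHermitian) (i : n) :
    (B * M * B) i i = star (fun j => B j i) ⬝ᵥ M *ᵥ (fun j => B j i) := by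
  have h : ∀ k, star (B k i) = B i k := fun k => by rw [← hB.apply i k]
  simp only [Matrix.mul_apply, dotProduct, Matrix.mulVec, Pi.star_apply,
    Finset.sum_mul, Finset.mul_sum, h]
  rw [Finset.sum_comm]
  exact Finset.sum_congr rfl fun k _ => Finset.sum_congr rfl fun j _ => by ring

lemma QRGaux.trace_mul_re_le {Q : Matrix n n ℂ} (hQ : Q.PosSemidef) (M : Matrix n n ℂ) :
    (Q * M).trace.re ≤ opNorm M * Q.trace.re := by
  set B := hQ.sqrt with hBdef
  have hB : B.PosSemidef := hQ.posSemidef_sqrt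
  have hBB : B * B = Q := hQ.sqrt_mul_self
  have h1 : (Q * M).trace = (B * M * B).trace := by
    rw [Matrix.trace_mul_cycle B M B, hBB]
  have h2 : Q.trace = (B * 1 * B).trace := by
    rw [Matrix.trace_mul_cycle B 1 B, hBB, Matrix.mul_one]
  rw [h1, h2, Matrix.trace, Matrix.trace, Complex.re_sum, Complex.re_sum, Finset.mul_sum]
  refine Finset.sum_le_sum fun i _ => ?_
  rw [Matrix.diag_apply, Matrix.diag_apply, QRGaux.diag_as_dot B M hB.isHermitian i,
    QRGaux.diag_as_dot B 1 hB.isHermitian i]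
  have := QRGaux.re_dot_le M (fun j => B j i)
  simpa [Matrix.one_mulVec] using this

lemma QRGaux.psd_sum {S : Type*} [Fintype S] (f : S → Matrix n n ℂ)
    (h : ∀ s, (f s).PosSemidef) : (∑ s, f s).PosSemidef := by
  classical
  exact Finset.sum_induction f _ (fun a b ha hb => ha.add hb) Matrix.PosSemidef.zero
    (fun s _ => h s)

lemma QRGaux.psd_smul {M : Matrix n n ℂ} (hM : M.PosSemidef) {r : ℝ} (hr : 0 ≤ r) :
    (r • M).PosSemidef := by
  refine Matrix.PosSemidef.of_dotProduct_mulVec_nonneg ?_ ?_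
  · have := hM.isHermitian
    unfold Matrix.IsHermitian at *
    rw [Matrix.conjTranspose_smul, this, star_trivial]
  · intro x
    have h1 : star x ⬝ᵥ (r • M) *ᵥ x = (r : ℂ) * (star x ⬝ᵥ M *ᵥ x) := by
      rw [Matrix.smul_mulVec, dotProduct_smul]
      simp [Complex.real_smul]
    rw [h1]
    exact mul_nonneg (by simp [Complex.zero_le_real, hr]) (hM.dotProduct_mulVec_nonneg x)

lemma QRGaux.trace_vecMulVec_mul (v : n → ℂ) (M : Matrix n n ℂ) :
    (Matrix.vecMulVec v (star v) * M).trace = star v ⬝ᵥ M *ᵥ v := by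
  simp only [Matrix.trace, Matrix.diag_apply, Matrix.mul_apply, Matrix.vecMulVec_apply,
    dotProduct, Matrix.mulVec, Pi.star_apply, Finset.mul_sum]
  rw [Finset.sum_comm]
  exact Finset.sum_congr rfl fun j _ => Finset.sum_congr rfl fun i _ => by ring

lemma QRGaux.vecMulVec_psd (v : n → ℂ) : (Matrix.vecMulVec v (star v)).PosSemidef := by
  refine Matrix.PosSemidef.of_dotProduct_mulVec_nonneg ?_ ?_
  · ext i j
    simp [Matrix.conjTranspose_apply, Matrix.vecMulVec_apply, mul_comm]
  · intro x
    have h1 : (Matrix.vecMulVec v (star v)) *ᵥ x = (star v ⬝ᵥ x) • v := by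
      ext i
      simp only [Matrix.mulVec, Matrix.vecMulVec_apply, dotProduct, Pi.smul_apply,
        Pi.star_apply, smul_eq_mul, Finset.sum_mul, Finset.mul_sum]
      exact Finset.sum_congr rfl fun j _ => by ring
    rw [h1]
    have h2 : star x ⬝ᵥ (star v ⬝ᵥ x) • v = (star v ⬝ᵥ x) * (star x ⬝ᵥ v) := by
      rw [dotProduct_smul]; simp [smul_eq_mul]
    rw [h2]
    have h3 : star x ⬝ᵥ v = star (star v ⬝ᵥ x) := by
      simp only [dotProduct, Pi.star_apply, star_sum, star_mul', star_star]
      exact Finset.sum_congr rfl fun j _ => by ring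
    rw [h3]
    exact mul_star_self_nonneg _

lemma QRGaux.eig_unit (M : Matrix n n ℂ) (hM : M.IsHermitian) (i0 : n) :
    star ⇑(hM.eigenvectorBasis i0) ⬝ᵥ ⇑(hM.eigenvectorBasis i0) = 1 := by
  have h1 : ‖hM.eigenvectorBasis i0‖ = 1 := hM.eigenvectorBasis.orthonormal.1 i0
  have h2 : (inner ℂ (hM.eigenvectorBasis i0) (hM.eigenvectorBasis i0) : ℂ)
      = star ⇑(hM.eigenvectorBasis i0) ⬝ᵥ ⇑(hM.eigenvectorBasis i0) :=
    (EuclideanSpace.inner_eq_star_dotProduct _ _).trans (dotProduct_comm _ _)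
  rw [← h2, inner_self_eq_norm_sq_to_K, h1]
  norm_num

lemma QRGaux.opNorm_le_eigmax {M : Matrix n n ℂ} (hM : M.PosSemidef) (i0 : n)
    (hmax : ∀ i, hM.1.eigenvalues i ≤ hM.1.eigenvalues i0) :
    opNorm M ≤ hM.1.eigenvalues i0 := by
  have hc : 0 ≤ hM.1.eigenvalues i0 := hM.eigenvalues_nonneg i0
  refine ContinuousLinearMap.opNorm_le_bound _ hc fun x => ?_
  set b := hM.1.eigenvectorBasis with hb
  set T := Matrix.toEuclideanCLM (𝕜 := ℂ) M with hT
  have hrepr : ∀ i, b.repr (T x) i = (hM.1.eigenvalues i : ℂ) * b.repr x i := by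
    intro i
    rw [OrthonormalBasis.repr_apply_apply, OrthonormalBasis.repr_apply_apply]
    have hTx : (inner ℂ (b i) (T x) : ℂ)
        = star ⇑(b i) ⬝ᵥ M *ᵥ (WithLp.equiv 2 (n → ℂ) x) := by
      rw [EuclideanSpace.inner_eq_star_dotProduct, dotProduct_comm]
      congr 1
    rw [hTx, Matrix.dotProduct_mulVec]
    have hvm : star ⇑(b i) ᵥ* M = (hM.1.eigenvalues i : ℂ) • star ⇑(b i) := by
      have h1 : star (M *ᵥ ⇑(b i)) = star ⇑(b i) ᵥ* M := by
        rw [Matrix.star_mulVec, hM.1.eq]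
      rw [← h1, hM.1.mulVec_eigenvectorBasis]
      ext j
      simp [Complex.real_smul, star_smul, hb]
    rw [hvm, smul_dotProduct]
    rw [EuclideanSpace.inner_eq_star_dotProduct, dotProduct_comm (WithLp.ofLp x)]
    simp [smul_eq_mul]
  have hnorm : ‖T x‖ = Real.sqrt (∑ i, ‖b.repr (T x) i‖ ^ 2) := by
    rw [← b.repr.norm_map (T x), EuclideanSpace.norm_eq]
  have hxnorm : ‖x‖ = Real.sqrt (∑ i, ‖b.repr x i‖ ^ 2) := by
    rw [← b.repr.norm_map x, EuclideanSpace.norm_eq]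
  rw [hnorm, hxnorm]
  have hle : ∑ i, ‖b.repr (T x) i‖ ^ 2
      ≤ (hM.1.eigenvalues i0) ^ 2 * ∑ i, ‖b.repr x i‖ ^ 2 := by
    rw [Finset.mul_sum]
    refine Finset.sum_le_sum fun i _ => ?_
    rw [hrepr i]
    have h2 : ‖(hM.1.eigenvalues i : ℂ) * b.repr x i‖
        = hM.1.eigenvalues i * ‖b.repr x i‖ := by
      rw [norm_mul, Complex.norm_real, Real.norm_eq_abs,
        abs_of_nonneg (hM.eigenvalues_nonneg i)]
    rw [h2, mul_pow]
    gcongr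
    · exact hM.eigenvalues_nonneg i
    · exact hmax i
  calc Real.sqrt (∑ i, ‖b.repr (T x) i‖ ^ 2)
      ≤ Real.sqrt ((hM.1.eigenvalues i0) ^ 2 * ∑ i, ‖b.repr x i‖ ^ 2) :=
        Real.sqrt_le_sqrt hle
    _ = hM.1.eigenvalues i0 * Real.sqrt (∑ i, ‖b.repr x i‖ ^ 2) := by
        rw [Real.sqrt_mul (sq_nonneg _), Real.sqrt_sq hc]

end Helpers

/-- Selective value of a weighted quantum retrieval game: with
`O(a) = ∑_s σ(s,a)·ρ^{−1/2} ϱ(s) ρ^{−1/2}`, the selective value equals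
`max_a ‖O(a)‖` and is attained by some selective projection. -/
theorem selective_value_of_game {d : ℕ} {S A : Type} [Fintype S] [Fintype A]
    [Nonempty S] [Nonempty A]
    (ϱ : S → Matrix (Fin d) (Fin d) ℂ) (σ : S → A → ℝ)
    (hσ : ∀ s a, 0 ≤ σ s a)
    (hpsd : ∀ s, (ϱ s).PosSemidef) (htr : ∑ s, (ϱ s).trace = 1)
    (hρ : (∑ s, ϱ s).PosDef) :
    sel ϱ σ = (⨆ a : A, opNorm (∑ s, σ s a •
        ((hρ.posSemidef.sqrt)⁻¹ * ϱ s * (hρ.posSemidef.sqrt)⁻¹))) ∧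
    ∃ P : A → Matrix (Fin d) (Fin d) ℂ,
      (∀ a, (P a).PosSemidef) ∧ 0 < normZ ϱ P ∧ val ϱ σ P = sel ϱ σ := by
  classical
  have hdne : Nonempty (Fin d) := by
    rcases Nat.eq_zero_or_pos d with h | h
    · exfalso
      subst h
      simp only [Matrix.trace, Finset.univ_eq_empty, Finset.sum_empty,
        Finset.sum_const_zero] at htr
      exact one_ne_zero htr.symm
    · exact ⟨⟨0, h⟩⟩
  set R : Matrix (Fin d) (Fin d) ℂ := hρ.posSemidef.sqrt with hRdef
  have hR : R.PosSemidef := hρ.posSemidef.posSemidef_sqrt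
  have hRH : Rᴴ = R := hR.isHermitian
  have hRR : R * R = ∑ s, ϱ s := hρ.posSemidef.sqrt_mul_self
  have hdet : IsUnit R.det := by
    have h1 : R.det * R.det = (∑ s, ϱ s).det := by rw [← Matrix.det_mul, hRR]
    have h2 : (∑ s, ϱ s).det ≠ 0 := hρ.det_pos.ne'
    refine isUnit_iff_ne_zero.mpr fun h0 => h2 ?_
    rw [← h1, h0, mul_zero]
  have hRRi : R * R⁻¹ = 1 := Matrix.mul_nonsing_inv R hdet
  have hRiR : R⁻¹ * R = 1 := Matrix.nonsing_inv_mul R hdet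
  have hRiH : (R⁻¹)ᴴ = R⁻¹ := hR.isHermitian.inv
  set Of : A → Matrix (Fin d) (Fin d) ℂ := fun a => ∑ s, σ s a • (R⁻¹ * ϱ s * R⁻¹) with hOf
  set N : A → ℝ := fun a => opNorm (Of a) with hN
  obtain ⟨a0, ha0⟩ := Finite.exists_max N
  -- key identities
  have key2 : ∀ (P : A → Matrix (Fin d) (Fin d) ℂ) a s,
      (P a * ϱ s).trace = ((R * P a * R) * (R⁻¹ * ϱ s * R⁻¹)).trace := by
    intro P a s
    have e1 : (R * P a * R) * (R⁻¹ * ϱ s * R⁻¹) = R * (P a * ϱ s) * R⁻¹ := by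
      simp only [Matrix.mul_assoc]
      rw [← Matrix.mul_assoc R R⁻¹, hRRi, Matrix.one_mul]
    rw [e1, Matrix.trace_mul_cycle, hRiR, Matrix.one_mul]
  have key3 : ∀ (P : A → Matrix (Fin d) (Fin d) ℂ) a,
      (R * P a * R).trace = ∑ s, (P a * ϱ s).trace := by
    intro P a
    rw [Matrix.trace_mul_cycle, hRR, Matrix.trace_mul_comm, Matrix.mul_sum, Matrix.trace_sum]
  have key4 : ∀ (P : A → Matrix (Fin d) (Fin d) ℂ) a,
      ∑ s, σ s a * ((P a * ϱ s).trace).re = (((R * P a * R) * Of a).trace).re := by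
    intro P a
    rw [hOf]
    rw [Matrix.mul_sum, Matrix.trace_sum, Complex.re_sum]
    refine Finset.sum_congr rfl fun s _ => ?_
    rw [Matrix.mul_smul, Matrix.trace_smul, ← key2 P a s]
    simp [Complex.real_smul, Complex.mul_re]
  have keyZ : ∀ (P : A → Matrix (Fin d) (Fin d) ℂ),
      normZ ϱ P = ∑ a, ((R * P a * R).trace).re := by
    intro P
    rw [normZ, Finset.sum_comm]
    refine Finset.sum_congr rfl fun a _ => ?_
    rw [key3 P a, Complex.re_sum]
  have keyV : ∀ (P : A → Matrix (Fin d) (Fin d) ℂ),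
      val ϱ σ P = (∑ a, (((R * P a * R) * Of a).trace).re) / normZ ϱ P := by
    intro P
    rw [val]
    simp only [induced]
    have h : ∀ s a, ((P a * ϱ s).trace).re / normZ ϱ P * σ s a
        = (σ s a * ((P a * ϱ s).trace).re) / normZ ϱ P := by intros; ring
    simp only [h]
    rw [Finset.sum_comm]
    simp only [← Finset.sum_div]
    congr 1
    exact Finset.sum_congr rfl fun a _ => key4 P a
  have hQpsd : ∀ (P : A → Matrix (Fin d) (Fin d) ℂ), (∀ a, (P a).PosSemidef) →
      ∀ a, (R * P a * R).PosSemidef := by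
    intro P hP a
    have := (hP a).mul_mul_conjTranspose_same R
    rwa [hRH] at this
  have hub : ∀ (P : A → Matrix (Fin d) (Fin d) ℂ), (∀ a, (P a).PosSemidef) →
      0 < normZ ϱ P → val ϱ σ P ≤ N a0 := by
    intro P hP hZ
    rw [keyV P, div_le_iff₀ hZ]
    calc ∑ a, (((R * P a * R) * Of a).trace).re
        ≤ ∑ a, opNorm (Of a) * ((R * P a * R).trace).re :=
          Finset.sum_le_sum fun a _ => QRGaux.trace_mul_re_le (hQpsd P hP a) (Of a)
      _ ≤ ∑ a, N a0 * ((R * P a * R).trace).re :=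
          Finset.sum_le_sum fun a _ => mul_le_mul_of_nonneg_right (ha0 a)
            (QRGaux.trace_re_nonneg (hQpsd P hP a))
      _ = N a0 * ∑ a, ((R * P a * R).trace).re := (Finset.mul_sum _ _ _).symm
      _ = N a0 * normZ ϱ P := by rw [keyZ P]
  -- construction of the optimal projection
  have hO0 : (Of a0).PosSemidef := by
    rw [hOf]
    refine QRGaux.psd_sum _ fun s => QRGaux.psd_smul ?_ (hσ s a0)
    have := (hpsd s).mul_mul_conjTranspose_same R⁻¹
    rwa [hRiH] at this
  obtain ⟨i0, hi0⟩ := Finite.exists_max hO0.1.eigenvalues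
  set v : Fin d → ℂ := ⇑(hO0.1.eigenvectorBasis i0) with hv
  have hv1 : star v ⬝ᵥ v = 1 := QRGaux.eig_unit _ hO0.1 i0
  have hveig : Of a0 *ᵥ v = hO0.1.eigenvalues i0 • v := hO0.1.mulVec_eigenvectorBasis i0
  set Qm : Matrix (Fin d) (Fin d) ℂ := Matrix.vecMulVec v (star v) with hQmdef
  have hQm : Qm.PosSemidef := QRGaux.vecMulVec_psd v
  have hQmtr : Qm.trace = 1 := by
    have h := QRGaux.trace_vecMulVec_mul v (1 : Matrix (Fin d) (Fin d) ℂ)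
    rw [Matrix.mul_one] at h
    rw [hQmdef, h, Matrix.one_mulVec, hv1]
  set P0 : A → Matrix (Fin d) (Fin d) ℂ :=
    fun a => if a = a0 then R⁻¹ * Qm * R⁻¹ else 0 with hP0def
  have hP0psd : ∀ a, (P0 a).PosSemidef := by
    intro a
    rw [hP0def]
    by_cases h : a = a0
    · simp only [h, if_pos rfl]
      have := hQm.mul_mul_conjTranspose_same R⁻¹
      rwa [hRiH] at this
    · simp only [if_neg h]
      exact Matrix.PosSemidef.zero
  have hQid : ∀ a, R * P0 a * R = if a = a0 then Qm else 0 := by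
    intro a
    rw [hP0def]
    by_cases h : a = a0
    · simp only [h, if_pos rfl]
      calc R * (R⁻¹ * Qm * R⁻¹) * R = R * R⁻¹ * Qm * (R⁻¹ * R) := by
            simp only [Matrix.mul_assoc]
        _ = Qm := by rw [hRRi, hRiR, Matrix.one_mul, Matrix.mul_one]
    · simp only [if_neg h, Matrix.mul_zero, Matrix.zero_mul]
  have hZ0 : normZ ϱ P0 = 1 := by
    rw [keyZ P0]
    simp only [hQid, apply_ite Matrix.trace, apply_ite Complex.re, Matrix.trace_zero,
      Complex.zero_re]
    rw [Finset.sum_ite_eq' Finset.univ a0]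
    simp [hQmtr]
  have htrQO : ((Qm * Of a0).trace).re = hO0.1.eigenvalues i0 := by
    rw [hQmdef, QRGaux.trace_vecMulVec_mul v (Of a0), hveig, dotProduct_smul, hv1]
    simp [Complex.real_smul]
  have hval0 : val ϱ σ P0 = hO0.1.eigenvalues i0 := by
    rw [keyV P0, hZ0, div_one]
    rw [Finset.sum_eq_single a0]
    · rw [hQid a0, if_pos rfl]
      exact htrQO
    · intro a _ h
      rw [hQid a, if_neg h]
      simp
    · intro h
      exact absurd (Finset.mem_univ a0) h
  have heig : N a0 = hO0.1.eigenvalues i0 := by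
    refine le_antisymm (QRGaux.opNorm_le_eigmax hO0 i0 hi0) ?_
    have h1 := QRGaux.trace_mul_re_le hQm (Of a0)
    rw [htrQO, hQmtr] at h1
    simpa using h1
  have hZpos : 0 < normZ ϱ P0 := by rw [hZ0]; norm_num
  have hval0' : val ϱ σ P0 = N a0 := by rw [hval0, heig]
  have hmem : N a0 ∈ {v | ∃ P : A → Matrix (Fin d) (Fin d) ℂ,
      (∀ a, (P a).PosSemidef) ∧ 0 < normZ ϱ P ∧ v = val ϱ σ P} :=
    ⟨P0, hP0psd, hZpos, hval0'.symm⟩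
  have hubS : ∀ x ∈ {v | ∃ P : A → Matrix (Fin d) (Fin d) ℂ,
      (∀ a, (P a).PosSemidef) ∧ 0 < normZ ϱ P ∧ v = val ϱ σ P}, x ≤ N a0 := by
    rintro x ⟨P, hP, hZ, rfl⟩
    exact hub P hP hZ
  have hsel : sel ϱ σ = N a0 := by
    unfold QRG.sel
    exact IsGreatest.csSup_eq ⟨hmem, hubS⟩
  have hsup : (⨆ a, N a) = N a0 :=
    le_antisymm (ciSup_le ha0) (le_ciSup (Set.Finite.bddAbove (Set.finite_range N)) a0)
  refine ⟨?_, P0, hP0psd, hZpos, ?_⟩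
  · exact hsel.trans hsup.symm
  · exact hval0'.trans hsel.symm
end

section
/- Let G = (ϱ, σ) be a weighted quantum retrieval game with finite nonempty answer set A and positive definite reduced density matrix ρ = ∑_s ϱ(s), and set O(a) = ∑_{s∈S} σ(s,a) · ρ^{−1/2} ϱ(s) ρ^{−1/2}. Then Sel(G) = Phys(G) if and only if there exists a family of positive semidefinite d×d matrices P̃(a), a ∈ A, such that O(a)·P̃(a) = Sel(G)·P̃(a) for every a and ∑_{a∈A} P̃(a) = ρ. -/
open Matrix
open scoped ComplexOrder
open scoped ComplexOrder

open QRG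

/-- The square root of a positive semidefinite matrix, as `Matrix.PosSemidef.sqrt` was
defined in the older Mathlib (that declaration has since been removed). -/
noncomputable def posSemidefSqrt {n : Type*} [Fintype n] [DecidableEq n] {M : Matrix n n ℂ}
    (hM : M.PosSemidef) : Matrix n n ℂ :=
  hM.1.eigenvectorUnitary.1 * diagonal ((↑) ∘ (Real.sqrt ·) ∘ hM.1.eigenvalues) *
    (star hM.1.eigenvectorUnitary : Matrix n n ℂ)

set_option linter.unusedSectionVars false

namespace Aux

variable {m : Type*} [Fintype m] [DecidableEq m]

lemma diag_nonneg {M : Matrix m m ℂ} (hM : M.PosSemidef) (i : m) : 0 ≤ M i i := by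
  simpa [dotProduct, mulVec, Pi.single_apply] using hM.dotProduct_mulVec_nonneg (Pi.single i 1)

lemma psqrt_mul_self {M : Matrix m m ℂ} (hM : M.PosSemidef) :
    posSemidefSqrt hM * posSemidefSqrt hM = M := by
  have hU : (star hM.1.eigenvectorUnitary : Matrix m m ℂ) * hM.1.eigenvectorUnitary.1 = 1 :=
    Unitary.coe_star_mul_self _
  have hD : (diagonal ((↑) ∘ (Real.sqrt ·) ∘ hM.1.eigenvalues) : Matrix m m ℂ) *
      diagonal ((↑) ∘ (Real.sqrt ·) ∘ hM.1.eigenvalues) =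
      diagonal (RCLike.ofReal ∘ hM.1.eigenvalues : m → ℂ) := by
    rw [diagonal_mul_diagonal]
    congr 1; ext i
    simp only [Function.comp_apply]
    rw [← Complex.ofReal_mul, Real.mul_self_sqrt (hM.eigenvalues_nonneg i)]
    rfl
  unfold posSemidefSqrt
  conv_rhs => rw [hM.1.spectral_theorem]
  rw [Unitary.conjStarAlgAut_apply, ← hD]
  simp only [mul_assoc]
  rw [← mul_assoc (star hM.1.eigenvectorUnitary : Matrix m m ℂ), hU, one_mul]

lemma psqrt_posSemidef {M : Matrix m m ℂ} (hM : M.PosSemidef) :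
    (posSemidefSqrt hM).PosSemidef := by
  unfold posSemidefSqrt
  have hD : (diagonal ((↑) ∘ (Real.sqrt ·) ∘ hM.1.eigenvalues) : Matrix m m ℂ).PosSemidef :=
    PosSemidef.diagonal (fun i => by simp [Real.sqrt_nonneg])
  have := hD.mul_mul_conjTranspose_same hM.1.eigenvectorUnitary.1
  rwa [← star_eq_conjTranspose] at this

lemma trace_nonneg {M : Matrix m m ℂ} (hM : M.PosSemidef) : 0 ≤ M.trace :=
  Finset.sum_nonneg fun i _ => diag_nonneg hM i

lemma eq_zero_of_trace_CT {B : Matrix m m ℂ} (h : (Bᴴ * B).trace = 0) : B = 0 := by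
  have h2 : ∑ j, ∑ i, Complex.normSq (B i j) = 0 := by
    have := congrArg Complex.re h
    simpa [Matrix.trace, Matrix.mul_apply, Matrix.diag, conjTranspose_apply,
      Complex.normSq_apply, Complex.re_sum, mul_comm] using this
  ext i j
  have := (Finset.sum_eq_zero_iff_of_nonneg (fun j _ => Finset.sum_nonneg
    (fun i _ => Complex.normSq_nonneg (B i j)))).mp h2 j (Finset.mem_univ j)
  have := (Finset.sum_eq_zero_iff_of_nonneg (fun i _ => Complex.normSq_nonneg (B i j))).mp
    this i (Finset.mem_univ i)
  simpa [Complex.normSq_eq_zero] using this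

lemma trace_mul_nonneg {A B : Matrix m m ℂ} (hA : A.PosSemidef) (hB : B.PosSemidef) :
    0 ≤ (A * B).trace := by
  have h1 : (A * B).trace = ((posSemidefSqrt hA) * B * (posSemidefSqrt hA)).trace := by
    conv_lhs => rw [← (psqrt_mul_self hA)]
    rw [mul_assoc, Matrix.trace_mul_comm]
  rw [h1]
  have := hB.conjTranspose_mul_mul_same (posSemidefSqrt hA)
  rw [(psqrt_posSemidef hA).isHermitian.eq] at this
  exact trace_nonneg this

lemma mul_eq_zero_of_trace {A B : Matrix m m ℂ} (hA : A.PosSemidef) (hB : B.PosSemidef)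
    (h : (A * B).trace = 0) : A * B = 0 := by
  set C := (posSemidefSqrt hB) * (posSemidefSqrt hA) with hC
  have hCT : Cᴴ = (posSemidefSqrt hA) * (posSemidefSqrt hB) := by
    rw [hC, conjTranspose_mul, (psqrt_posSemidef hA).isHermitian.eq, (psqrt_posSemidef hB).isHermitian.eq]
  have htr : (Cᴴ * C).trace = 0 := by
    have : Cᴴ * C = (posSemidefSqrt hA) * B * (posSemidefSqrt hA) := by
      rw [hCT, hC]; conv_lhs => rw [mul_assoc, ← mul_assoc (posSemidefSqrt hB), (psqrt_mul_self hB)]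
      rw [← mul_assoc]
    rw [this, ← Matrix.trace_mul_cycle, mul_assoc, (psqrt_mul_self hA)] at *
    rwa [Matrix.trace_mul_comm]
  have hC0 : C = 0 := eq_zero_of_trace_CT htr
  have hCT0 : (posSemidefSqrt hA) * (posSemidefSqrt hB) = 0 := by rw [← hCT, hC0, conjTranspose_zero]
  calc A * B = (posSemidefSqrt hA) * ((posSemidefSqrt hA) * (posSemidefSqrt hB)) * (posSemidefSqrt hB) := by
        rw [← mul_assoc, mul_assoc _ _ (posSemidefSqrt hB), mul_assoc, (psqrt_mul_self hB),
          ← mul_assoc, (psqrt_mul_self hA)]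
    _ = 0 := by rw [hCT0, mul_zero, zero_mul]

lemma smul_isHermitian {M : Matrix m m ℂ} (r : ℝ) (hM : M.IsHermitian) :
    (r • M).IsHermitian := by
  unfold Matrix.IsHermitian
  ext i j
  simp [conjTranspose_apply, hM.apply]

lemma smul_posSemidef {M : Matrix m m ℂ} {r : ℝ} (hr : 0 ≤ r) (hM : M.PosSemidef) :
    (r • M).PosSemidef := by
  refine PosSemidef.of_dotProduct_mulVec_nonneg (smul_isHermitian r hM.1) fun x => ?_
  rw [smul_mulVec]
  have : star x ⬝ᵥ (r • (M *ᵥ x)) = (r : ℂ) * (star x ⬝ᵥ (M *ᵥ x)) := by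
    simp [dotProduct_smul, Complex.real_smul]
  rw [this]
  exact mul_nonneg (by exact_mod_cast Complex.zero_le_real.mpr hr) (hM.dotProduct_mulVec_nonneg x)

lemma sum_posSemidef {ι : Type*} (s : Finset ι) (f : ι → Matrix m m ℂ)
    (h : ∀ i ∈ s, (f i).PosSemidef) : (∑ i ∈ s, f i).PosSemidef := by
  classical
  induction s using Finset.induction_on with
  | empty => simpa using Matrix.PosSemidef.zero
  | insert _ _ hx ih =>
    rw [Finset.sum_insert hx]
    exact Matrix.PosSemidef.add (h _ (Finset.mem_insert_self _ _))
      (ih fun i hi => h i (Finset.mem_insert_of_mem hi))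

lemma vecMulVec_posSemidef (x : m → ℂ) : (vecMulVec x (star x)).PosSemidef := by
  refine PosSemidef.of_dotProduct_mulVec_nonneg ?_ fun y => ?_
  · ext i j
    simp [conjTranspose_apply, vecMulVec_apply, mul_comm]
  · have h1 : vecMulVec x (star x) *ᵥ y = (star x ⬝ᵥ y) • x := by
      ext i
      simp only [vecMulVec_apply, mulVec, dotProduct, Pi.smul_apply, Pi.star_apply, smul_eq_mul,
        Finset.mul_sum, Finset.sum_mul]
      congr 1; ext k; ring
    rw [h1]
    have h2 : star y ⬝ᵥ ((star x ⬝ᵥ y) • x) = (star x ⬝ᵥ y) * (star y ⬝ᵥ x) := by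
      simp [dotProduct_smul, mul_comm]
    rw [h2]
    have h3 : star y ⬝ᵥ x = star (star x ⬝ᵥ y) := by
      simp only [dotProduct, Pi.star_apply, star_sum, star_mul', star_star]
      congr 1; ext k; ring
    rw [h3, mul_comm]
    exact star_mul_self_nonneg _

lemma trace_vecMulVec_mul (x : m → ℂ) (B : Matrix m m ℂ) :
    (vecMulVec x (star x) * B).trace = star x ⬝ᵥ (B *ᵥ x) := by
  simp only [Matrix.trace, Matrix.diag, Matrix.mul_apply, vecMulVec_apply, dotProduct, mulVec,
    Pi.star_apply]
  rw [Finset.sum_comm]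
  congr 1; ext j
  rw [Finset.mul_sum]
  congr 1; ext i
  ring

lemma quadform_single (M : Matrix m m ℂ) {i j : m} (hij : i ≠ j) (b : ℂ) :
    star (Pi.single i 1 + Pi.single j b) ⬝ᵥ (M *ᵥ (Pi.single i 1 + Pi.single j b)) =
      M i i + b * M i j + (star b * M j i + star b * b * M j j) := by
  simp only [dotProduct, mulVec, Pi.add_apply, Pi.star_apply, Pi.single_apply,
    mul_ite, ite_mul, mul_zero, zero_mul, mul_one, one_mul, star_add, star_zero,
    star_one, apply_ite (star : ℂ → ℂ), mul_add, add_mul, Finset.sum_add_distrib,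
    Finset.sum_ite_eq', Finset.mem_univ, if_true]
  ring

lemma norm_entry_le_trace {M : Matrix m m ℂ} (hM : M.PosSemidef) (i j : m) :
    ‖M i j‖ ≤ M.trace.re := by
  have hdiag : ∀ k, 0 ≤ (M k k).re := fun k => (Complex.nonneg_iff.mp (diag_nonneg hM k)).1
  have htr : ∀ k, (M k k).re ≤ M.trace.re := by
    intro k
    rw [Matrix.trace, Complex.re_sum]
    exact Finset.single_le_sum (f := fun k => (M k k).re) (fun k _ => hdiag k) (Finset.mem_univ k)
  rcases eq_or_ne i j with rfl | hij
  · have h0 : 0 ≤ M i i := diag_nonneg hM i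
    rw [Complex.nonneg_iff] at h0
    have hz : M i i = ((M i i).re : ℂ) := by
      apply Complex.ext <;> simp [← h0.2]
    rw [hz]
    simpa [Complex.norm_real, abs_of_nonneg h0.1] using htr i
  · rcases eq_or_ne (M i j) 0 with h0 | h0
    · simp only [h0, norm_zero]
      calc (0:ℝ) ≤ (M i i).re := hdiag i
        _ ≤ M.trace.re := htr i
    · set b : ℂ := -(starRingEnd ℂ (M i j)) / ‖M i j‖ with hb
      have hb1 : ‖b‖ = 1 := by
        rw [hb]
        simp [norm_div, h0, norm_ne_zero_iff]
      have hbnorm : star b * b = 1 := by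
        have h2 : star b * b = (Complex.normSq b : ℂ) := by
          rw [Complex.star_def, ← Complex.normSq_eq_conj_mul_self]
        rw [h2, Complex.normSq_eq_norm_sq, hb1]
        norm_num
      have hnz : (‖M i j‖ : ℝ) ≠ 0 := norm_ne_zero_iff.mpr h0
      have hcast : ((Complex.normSq (M i j) : ℝ) : ℂ) = (‖M i j‖ : ℂ) * (‖M i j‖ : ℂ) := by
        norm_cast
        rw [Complex.normSq_eq_norm_sq]; ring
      have hb2 : b * M i j = -(‖M i j‖ : ℂ) := by
        rw [hb, div_mul_eq_mul_div, neg_mul, ← Complex.normSq_eq_conj_mul_self, hcast, neg_div,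
          mul_div_cancel_left₀ _ (by exact_mod_cast hnz : (‖M i j‖:ℂ) ≠ 0)]
      have hsb : star b = -(M i j) / (‖M i j‖ : ℂ) := by
        rw [hb, Complex.star_def, map_div₀, map_neg]
        simp
      have hji : M j i = starRingEnd ℂ (M i j) := by
        have h1 : Mᴴ i j = M i j := by rw [hM.1]
        rw [conjTranspose_apply] at h1
        rw [← h1]
        simp [Complex.star_def]
      have hb3 : star b * M j i = -(‖M i j‖ : ℂ) := by
        rw [hji, hsb, div_mul_eq_mul_div, neg_mul, Complex.mul_conj, hcast, neg_div,
          mul_div_cancel_left₀ _ (by exact_mod_cast hnz : (‖M i j‖:ℂ) ≠ 0)]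
      have hq := hM.dotProduct_mulVec_nonneg (Pi.single i 1 + Pi.single j b)
      rw [quadform_single M hij b, hb2, hb3, hbnorm, one_mul] at hq
      have hre := (Complex.nonneg_iff.mp hq).1
      simp only [Complex.add_re, Complex.neg_re, Complex.ofReal_re] at hre
      have hpair : (M i i).re + (M j j).re ≤ M.trace.re := by
        rw [Matrix.trace, Complex.re_sum]
        have := Finset.sum_le_sum_of_subset_of_nonneg
          (Finset.subset_univ {i, j}) (fun k _ _ => hdiag k)
        rwa [Finset.sum_pair hij] at this
      have hzn := norm_nonneg (M i j)
      linarith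

lemma isClosed_nonneg : IsClosed {z : ℂ | 0 ≤ z} := by
  have : {z : ℂ | 0 ≤ z} = Complex.re ⁻¹' Set.Ici 0 ∩ Complex.im ⁻¹' {0} := by
    ext z
    simp [Complex.nonneg_iff, eq_comm]
  rw [this]
  exact (isClosed_Ici.preimage Complex.continuous_re).inter
    (isClosed_singleton.preimage Complex.continuous_im)

lemma isClosed_posSemidef : IsClosed {M : Matrix m m ℂ | M.PosSemidef} := by
  have : {M : Matrix m m ℂ | M.PosSemidef} =
      {M : Matrix m m ℂ | Mᴴ = M} ∩ ⋂ x : m → ℂ, {M | 0 ≤ star x ⬝ᵥ (M *ᵥ x)} := by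
    ext M
    simp only [Set.mem_setOf_eq, Set.mem_inter_iff, Set.mem_iInter]
    exact posSemidef_iff_dotProduct_mulVec
  rw [this]
  refine IsClosed.inter (isClosed_eq (Continuous.matrix_conjTranspose continuous_id) continuous_id)
    (isClosed_iInter fun x => ?_)
  exact isClosed_nonneg.preimage
    (continuous_const.dotProduct (continuous_id.matrix_mulVec continuous_const))

lemma isCompact_matrixBall (c : ℝ) :
    IsCompact {M : Matrix m m ℂ | ∀ i j, ‖M i j‖ ≤ c} := by
  have key : IsCompact (Set.pi (Set.univ : Set m)
      (fun _ => Set.pi (Set.univ : Set m) (fun _ => Metric.closedBall (0:ℂ) c)) :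
        Set (m → m → ℂ)) :=
    isCompact_univ_pi fun _ => isCompact_univ_pi fun _ => isCompact_closedBall 0 c
  have he : {M : Matrix m m ℂ | ∀ i j, ‖M i j‖ ≤ c} = (Set.pi (Set.univ : Set m)
      (fun _ => Set.pi (Set.univ : Set m) (fun _ => Metric.closedBall (0:ℂ) c)) :
        Set (m → m → ℂ)) := by
    ext M
    constructor
    · intro h i _ j _
      simpa [Metric.mem_closedBall, dist_zero_right] using h i j
    · intro h i j
      simpa [Metric.mem_closedBall, dist_zero_right] using
        h i (Set.mem_univ i) j (Set.mem_univ j)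
  rw [he]
  exact key

lemma isCompact_povm {ι : Type*} [Fintype ι] :
    IsCompact {P : ι → Matrix m m ℂ | (∀ a, (P a).PosSemidef) ∧ ∑ a, P a = 1} := by
  have hcl : IsClosed {P : ι → Matrix m m ℂ | (∀ a, (P a).PosSemidef) ∧ ∑ a, P a = 1} := by
    have he : {P : ι → Matrix m m ℂ | (∀ a, (P a).PosSemidef) ∧ ∑ a, P a = 1} =
        (⋂ a : ι, (fun P : ι → Matrix m m ℂ => P a) ⁻¹' {M | M.PosSemidef}) ∩
          {P : ι → Matrix m m ℂ | ∑ a, P a = 1} := by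
      ext P
      simp [Set.mem_iInter]
    rw [he]
    exact (isClosed_iInter fun a => isClosed_posSemidef.preimage (continuous_apply a)).inter
      (isClosed_eq (continuous_finset_sum _ fun a _ => continuous_apply a) continuous_const)
  refine IsCompact.of_isClosed_subset
    (isCompact_univ_pi fun _ => isCompact_matrixBall (Fintype.card m)) hcl ?_
  intro P hP a _ i j
  have hdiag : ∀ b, 0 ≤ ((P b).trace).re := by
    intro b
    exact (Complex.nonneg_iff.mp (trace_nonneg (hP.1 b))).1
  have hsum : ∑ b, ((P b).trace).re = (Fintype.card m : ℝ) := by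
    have h1 : (∑ b, (P b).trace) = (1 : Matrix m m ℂ).trace := by
      rw [← Matrix.trace_sum, hP.2]
    have := congrArg Complex.re h1
    rw [Complex.re_sum] at this
    simpa [Matrix.trace_one] using this
  have htrb : ((P a).trace).re ≤ (Fintype.card m : ℝ) := by
    rw [← hsum]
    exact Finset.single_le_sum (fun b _ => hdiag b) (Finset.mem_univ a)
  exact le_trans (norm_entry_le_trace (hP.1 a) i j) htrb

end Aux

namespace Aux

section Game
variable {m S A : Type*} [Fintype m] [DecidableEq m] [Fintype S] [Fintype A]
variable (ϱ : S → Matrix m m ℂ) (σ : S → A → ℝ) (P : A → Matrix m m ℂ)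

lemma normZ_eq : normZ ϱ P = (((∑ a, P a) * (∑ s, ϱ s)).trace).re := by
  unfold QRG.normZ
  rw [Finset.sum_mul_sum, Matrix.trace_sum, Complex.re_sum, Finset.sum_comm]
  refine Finset.sum_congr rfl fun s _ => ?_
  rw [Matrix.trace_sum, Complex.re_sum]

lemma val_eq : val ϱ σ P = (∑ s, ∑ a, σ s a * ((P a * ϱ s).trace).re) / normZ ϱ P := by
  unfold QRG.val QRG.induced
  simp only [div_mul_eq_mul_div, ← Finset.sum_div]
  congr 1
  exact Finset.sum_congr rfl fun s _ => Finset.sum_congr rfl fun a _ => mul_comm _ _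

lemma num_eq : ∑ s, ∑ a, σ s a * ((P a * ϱ s).trace).re
    = ((∑ a, (P a * (∑ s, σ s a • ϱ s)).trace)).re := by
  rw [Complex.re_sum, Finset.sum_comm]
  refine Finset.sum_congr rfl fun a _ => ?_
  rw [Finset.mul_sum, Matrix.trace_sum, Complex.re_sum]
  refine Finset.sum_congr rfl fun s _ => ?_
  rw [mul_smul_comm, Matrix.trace_smul]
  rw [Complex.real_smul, Complex.re_ofReal_mul]

end Game

end Aux

set_option maxHeartbeats 1000000

/-- The selective and physical values of a weighted quantum retrieval game coincide
iff there exists a family of positive semidefinite matrices `P̃(a)` with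
`O(a)·P̃(a) = Sel(G)·P̃(a)` for every `a` and `∑_a P̃(a) = ρ`. -/
theorem sel_eq_phys_iff {d : ℕ} {S A : Type} [Fintype S] [Fintype A]
    [Nonempty S] [Nonempty A]
    (ϱ : S → Matrix (Fin d) (Fin d) ℂ) (σ : S → A → ℝ)
    (hσ : ∀ s a, 0 ≤ σ s a)
    (hpsd : ∀ s, (ϱ s).PosSemidef) (htr : ∑ s, (ϱ s).trace = 1)
    (hρ : (∑ s, ϱ s).PosDef) :
    sel ϱ σ = phys ϱ σ ↔
      ∃ Pt : A → Matrix (Fin d) (Fin d) ℂ,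
        (∀ a, (Pt a).PosSemidef) ∧
        (∀ a, (∑ s, σ s a • ((posSemidefSqrt hρ.posSemidef)⁻¹ * ϱ s * (posSemidefSqrt hρ.posSemidef)⁻¹)) *
            Pt a = sel ϱ σ • Pt a) ∧
        (∑ a, Pt a) = ∑ s, ϱ s := by
  classical
  have hρpsd := hρ.posSemidef
  set R := posSemidefSqrt hρ.posSemidef with hRdef
  have hRR : R * R = ∑ s, ϱ s := Aux.psqrt_mul_self hρ.posSemidef
  have hRH : R.IsHermitian := (Aux.psqrt_posSemidef hρ.posSemidef).isHermitian
  have hdetρ : (∑ s, ϱ s).det ≠ 0 := hρ.det_pos.ne'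
  have hdetR : IsUnit R.det := by
    rw [isUnit_iff_ne_zero]
    intro h0
    apply hdetρ
    rw [← hRR, Matrix.det_mul, h0, mul_zero]
  have hRiR : R⁻¹ * R = 1 := Matrix.nonsing_inv_mul R hdetR
  have hRRi : R * R⁻¹ = 1 := Matrix.mul_nonsing_inv R hdetR
  have hRiH : (R⁻¹).IsHermitian := hRH.inv
  have hRiρRi : R⁻¹ * (∑ s, ϱ s) * R⁻¹ = 1 := by
    rw [← hRR, ← mul_assoc, mul_assoc R⁻¹ R R, ← mul_assoc R⁻¹ R R, hRiR, one_mul, hRRi]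
  have hconjRi : ∀ {X : Matrix (Fin d) (Fin d) ℂ},
      X.PosSemidef → (R⁻¹ * X * R⁻¹).PosSemidef := by
    intro X hX
    have := hX.mul_mul_conjTranspose_same R⁻¹
    rwa [hRiH.eq] at this
  have hconjR : ∀ {X : Matrix (Fin d) (Fin d) ℂ},
      X.PosSemidef → (R * X * R).PosSemidef := by
    intro X hX
    have := hX.mul_mul_conjTranspose_same R
    rwa [hRH.eq] at this
  have hMsigPSD : ∀ a, (∑ s, σ s a • ϱ s).PosSemidef := fun a =>
    Aux.sum_posSemidef _ _ fun s _ => Aux.smul_posSemidef (hσ s a) (hpsd s)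
  have hOeq : ∀ a, (∑ s, σ s a • (R⁻¹ * ϱ s * R⁻¹)) = R⁻¹ * (∑ s, σ s a • ϱ s) * R⁻¹ := by
    intro a
    rw [Finset.mul_sum, Finset.sum_mul]
    exact Finset.sum_congr rfl fun s _ => by rw [mul_smul_comm, smul_mul_assoc]
  have htrρ : (∑ s, ϱ s).trace = 1 := by rw [Matrix.trace_sum]; exact htr
  set selS : Set ℝ := {v | ∃ P : A → Matrix (Fin d) (Fin d) ℂ,
    (∀ a, (P a).PosSemidef) ∧ 0 < normZ ϱ P ∧ v = val ϱ σ P} with hselSdef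
  set physS : Set ℝ := {v | ∃ P : A → Matrix (Fin d) (Fin d) ℂ,
    (∀ a, (P a).PosSemidef) ∧ (∑ a, P a) = 1 ∧ v = val ϱ σ P} with hphysSdef
  have hselS : sel ϱ σ = sSup selS := rfl
  have hphysS : phys ϱ σ = sSup physS := rfl
  -- bounded above
  have hBdd : BddAbove selS := by
    refine ⟨∑ s, ∑ a, σ s a, ?_⟩
    rintro v ⟨P, hPSD, hZ, rfl⟩
    have hterm : ∀ (s : S) (a : A), 0 ≤ ((P a * ϱ s).trace).re := fun s a =>
      (Complex.nonneg_iff.mp (Aux.trace_mul_nonneg (hPSD a) (hpsd s))).1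
    have hle : ∀ (s : S) (a : A), ((P a * ϱ s).trace).re ≤ normZ ϱ P := by
      intro s a
      show _ ≤ ∑ s, ∑ a, (Matrix.trace (P a * ϱ s)).re
      calc ((P a * ϱ s).trace).re ≤ ∑ a', ((P a' * ϱ s).trace).re :=
            Finset.single_le_sum (fun a' _ => hterm s a') (Finset.mem_univ a)
        _ ≤ ∑ s', ∑ a', ((P a' * ϱ s').trace).re :=
            Finset.single_le_sum (f := fun s' => ∑ a', ((P a' * ϱ s').trace).re)
              (fun s' _ => Finset.sum_nonneg fun a' _ => hterm s' a') (Finset.mem_univ s)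
    rw [Aux.val_eq, div_le_iff₀ hZ]
    calc ∑ s, ∑ a, σ s a * ((P a * ϱ s).trace).re
        ≤ ∑ s, ∑ a, σ s a * normZ ϱ P := by
          refine Finset.sum_le_sum fun s _ => Finset.sum_le_sum fun a _ => ?_
          exact mul_le_mul_of_nonneg_left (hle s a) (hσ s a)
      _ = (∑ s, ∑ a, σ s a) * normZ ϱ P := by
          rw [Finset.sum_mul]
          exact Finset.sum_congr rfl fun s _ => by rw [Finset.sum_mul]
  have hsub : physS ⊆ selS := by
    rintro v ⟨P, hPSD, hsum1, rfl⟩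
    refine ⟨P, hPSD, ?_, rfl⟩
    rw [Aux.normZ_eq, hsum1, one_mul, htrρ, Complex.one_re]
    exact one_pos
  set Pu : A → Matrix (Fin d) (Fin d) ℂ :=
    fun _ => ((Fintype.card A : ℝ)⁻¹ • (1 : Matrix (Fin d) (Fin d) ℂ)) with hPu
  have hPuPSD : ∀ a, (Pu a).PosSemidef := fun _ =>
    Aux.smul_posSemidef (inv_nonneg.mpr (Nat.cast_nonneg _)) Matrix.PosSemidef.one
  have hPuSum : ∑ a, Pu a = 1 := by
    rw [hPu]
    rw [Finset.sum_const, Finset.card_univ, ← Nat.cast_smul_eq_nsmul ℝ, smul_smul,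
      mul_inv_cancel₀ (Nat.cast_ne_zero.mpr Fintype.card_ne_zero), one_smul]
  have hPhysNe : physS.Nonempty := ⟨val ϱ σ Pu, Pu, hPuPSD, hPuSum, rfl⟩
  have hPhysBdd : BddAbove physS := hBdd.mono hsub
  have hphys_le_sel : phys ϱ σ ≤ sel ϱ σ := csSup_le_csSup hBdd hPhysNe hsub
  -- the key semidefiniteness bound
  have hkey : ∀ a, ((sel ϱ σ) • (∑ s, ϱ s) - (∑ s, σ s a • ϱ s)).PosSemidef := by
    intro a
    refine PosSemidef.of_dotProduct_mulVec_nonneg ((Aux.smul_isHermitian _ hρ.posSemidef.1).sub (hMsigPSD a).1) fun x => ?_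
    rcases eq_or_ne x 0 with rfl | hx
    · simp
    · have hz : 0 ≤ star x ⬝ᵥ ((∑ s, σ s a • ϱ s) *ᵥ x) := (hMsigPSD a).dotProduct_mulVec_nonneg x
      have hw : 0 < star x ⬝ᵥ ((∑ s, ϱ s) *ᵥ x) := hρ.dotProduct_mulVec_pos hx
      have hwre : 0 < (star x ⬝ᵥ ((∑ s, ϱ s) *ᵥ x)).re := (Complex.pos_iff.mp hw).1
      set P : A → Matrix (Fin d) (Fin d) ℂ :=
        fun a' => if a' = a then vecMulVec x (star x) else 0 with hPdef
      have hPSD : ∀ a', (P a').PosSemidef := by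
        intro a'
        rw [hPdef]
        dsimp only
        split
        · exact Aux.vecMulVec_posSemidef x
        · exact Matrix.PosSemidef.zero
      have hPsum : ∑ a', P a' = vecMulVec x (star x) := by
        rw [hPdef]
        simp
      have hZ : normZ ϱ P = (star x ⬝ᵥ ((∑ s, ϱ s) *ᵥ x)).re := by
        rw [Aux.normZ_eq, hPsum, Aux.trace_vecMulVec_mul]
      have hNum : ∑ s, ∑ a', σ s a' * ((P a' * ϱ s).trace).re
          = (star x ⬝ᵥ ((∑ s, σ s a • ϱ s) *ᵥ x)).re := by
        rw [Aux.num_eq]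
        have h2 : ∑ a', (P a' * (∑ s, σ s a' • ϱ s)).trace
            = star x ⬝ᵥ ((∑ s, σ s a • ϱ s) *ᵥ x) := by
          rw [hPdef]
          simp only [ite_mul, zero_mul, apply_ite Matrix.trace, Matrix.trace_zero]
          rw [Finset.sum_ite_eq' Finset.univ a
            (fun a' => (vecMulVec x (star x) * (∑ s, σ s a' • ϱ s)).trace)]
          simp [Aux.trace_vecMulVec_mul]
        rw [h2]
      have hXv : (star x ⬝ᵥ ((∑ s, σ s a • ϱ s) *ᵥ x)).re
          / (star x ⬝ᵥ ((∑ s, ϱ s) *ᵥ x)).re ≤ sel ϱ σ := by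
        apply le_csSup hBdd
        exact ⟨P, hPSD, by rw [hZ]; exact hwre, by rw [Aux.val_eq, hNum, hZ]⟩
      have hzre : (star x ⬝ᵥ ((∑ s, σ s a • ϱ s) *ᵥ x)).re
          ≤ sel ϱ σ * (star x ⬝ᵥ ((∑ s, ϱ s) *ᵥ x)).re := (div_le_iff₀ hwre).mp hXv
      have hform : star x ⬝ᵥ (((sel ϱ σ) • (∑ s, ϱ s) - (∑ s, σ s a • ϱ s)) *ᵥ x)
          = sel ϱ σ • (star x ⬝ᵥ ((∑ s, ϱ s) *ᵥ x)) - star x ⬝ᵥ ((∑ s, σ s a • ϱ s) *ᵥ x) := by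
        rw [Matrix.sub_mulVec, dotProduct_sub, smul_mulVec, dotProduct_smul]
      rw [hform, Complex.nonneg_iff]
      have hzim := (Complex.nonneg_iff.mp hz).2
      have hwim := (Complex.pos_iff.mp hw).2
      constructor
      · simp only [Complex.sub_re, Complex.real_smul, Complex.re_ofReal_mul]
        linarith
      · simp only [Complex.sub_im, Complex.real_smul, Complex.mul_im, Complex.ofReal_re,
          Complex.ofReal_im, ← hzim, ← hwim]
        ring
  have hD : ∀ a, ((sel ϱ σ) • (1 : Matrix (Fin d) (Fin d) ℂ)
      - (∑ s, σ s a • (R⁻¹ * ϱ s * R⁻¹))).PosSemidef := by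
    intro a
    have heq : (sel ϱ σ) • (1 : Matrix (Fin d) (Fin d) ℂ)
          - (∑ s, σ s a • (R⁻¹ * ϱ s * R⁻¹))
        = R⁻¹ * ((sel ϱ σ) • (∑ s, ϱ s) - (∑ s, σ s a • ϱ s)) * R⁻¹ := by
      rw [hOeq a, Matrix.mul_sub, Matrix.sub_mul]
      congr 1
      rw [mul_smul_comm, smul_mul_assoc, hRiρRi]
    rw [heq]
    exact hconjRi (hkey a)
  constructor
  · -- sel = phys → eigenfamily exists
    intro hsp
    set F : (A → Matrix (Fin d) (Fin d) ℂ) → ℝ :=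
      fun P => ∑ s, ∑ a, σ s a * ((P a * ϱ s).trace).re with hF
    have hFcont : Continuous F := by
      apply continuous_finset_sum
      intro s _
      apply continuous_finset_sum
      intro a _
      exact continuous_const.mul (Complex.continuous_re.comp
        (Continuous.matrix_trace ((continuous_apply a).matrix_mul continuous_const)))
    have hKne : Set.Nonempty {P : A → Matrix (Fin d) (Fin d) ℂ |
        (∀ a, (P a).PosSemidef) ∧ ∑ a, P a = 1} := ⟨Pu, hPuPSD, hPuSum⟩
    obtain ⟨P₀, hP₀K, hPmax⟩ := Aux.isCompact_povm.exists_isMaxOn hKne hFcont.continuousOn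
    have hvalK : ∀ P : A → Matrix (Fin d) (Fin d) ℂ,
        (∀ a, (P a).PosSemidef) → (∑ a, P a) = 1 → val ϱ σ P = F P := by
      intro P h1 h2
      rw [Aux.val_eq]
      simp only [hF]
      rw [Aux.normZ_eq, h2, one_mul, htrρ, Complex.one_re, div_one]
    have hphysF : phys ϱ σ = F P₀ := by
      rw [hphysS]
      apply le_antisymm
      · apply csSup_le hPhysNe
        rintro v ⟨P, h1, h2, rfl⟩
        rw [hvalK P h1 h2]
        exact hPmax ⟨h1, h2⟩
      · exact le_csSup hPhysBdd ⟨P₀, hP₀K.1, hP₀K.2, (hvalK P₀ hP₀K.1 hP₀K.2).symm⟩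
    have htrOP : ∀ a, ((∑ s, σ s a • (R⁻¹ * ϱ s * R⁻¹)) * (R * P₀ a * R)).trace
        = ((∑ s, σ s a • ϱ s) * P₀ a).trace := by
      intro a
      rw [hOeq a]
      have h1 : R⁻¹ * (∑ s, σ s a • ϱ s) * R⁻¹ * (R * P₀ a * R)
          = R⁻¹ * ((∑ s, σ s a • ϱ s) * (P₀ a * R)) := by
        simp only [mul_assoc]
        rw [← mul_assoc R⁻¹ R (P₀ a * R), hRiR, one_mul]
      rw [h1, Matrix.trace_mul_comm]
      have h2 : (∑ s, σ s a • ϱ s) * (P₀ a * R) * R⁻¹ = (∑ s, σ s a • ϱ s) * P₀ a := by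
        simp only [mul_assoc]
        rw [hRRi, mul_one]
      rw [h2]
    have hTnn : ∀ a, 0 ≤ (((sel ϱ σ) • (1 : Matrix (Fin d) (Fin d) ℂ)
        - (∑ s, σ s a • (R⁻¹ * ϱ s * R⁻¹))) * (R * P₀ a * R)).trace := fun a =>
      Aux.trace_mul_nonneg (hD a) (hconjR (hP₀K.1 a))
    have hexp : ∀ a, (((sel ϱ σ) • (1 : Matrix (Fin d) (Fin d) ℂ)
          - (∑ s, σ s a • (R⁻¹ * ϱ s * R⁻¹))) * (R * P₀ a * R)).trace
        = sel ϱ σ • ((R * P₀ a * R).trace) - ((∑ s, σ s a • ϱ s) * P₀ a).trace := by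
      intro a
      rw [Matrix.sub_mul, smul_mul_assoc, one_mul, Matrix.trace_sub, Matrix.trace_smul, htrOP a]
    have hTsum : ∑ a, ((((sel ϱ σ) • (1 : Matrix (Fin d) (Fin d) ℂ)
        - (∑ s, σ s a • (R⁻¹ * ϱ s * R⁻¹))) * (R * P₀ a * R)).trace).re = 0 := by
      have hsumPt : ∑ a, (R * P₀ a * R).trace = (1 : ℂ) := by
        rw [← Matrix.trace_sum, ← Finset.sum_mul, ← Finset.mul_sum, hP₀K.2, mul_one, hRR, htrρ]
      have hFsum : ∑ a, (((∑ s, σ s a • ϱ s) * P₀ a).trace).re = F P₀ := by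
        simp only [hF]
        rw [Aux.num_eq, Complex.re_sum]
        exact Finset.sum_congr rfl fun a _ => by rw [Matrix.trace_mul_comm]
      calc ∑ a, ((((sel ϱ σ) • (1 : Matrix (Fin d) (Fin d) ℂ)
              - (∑ s, σ s a • (R⁻¹ * ϱ s * R⁻¹))) * (R * P₀ a * R)).trace).re
          = ∑ a, (sel ϱ σ * (((R * P₀ a * R).trace).re)
              - (((∑ s, σ s a • ϱ s) * P₀ a).trace).re) := by
            refine Finset.sum_congr rfl fun a _ => ?_
            rw [hexp a, Complex.sub_re, Complex.real_smul, Complex.re_ofReal_mul]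
        _ = sel ϱ σ * (∑ a, ((R * P₀ a * R).trace).re)
              - ∑ a, (((∑ s, σ s a • ϱ s) * P₀ a).trace).re := by
            rw [Finset.sum_sub_distrib, Finset.mul_sum]
        _ = sel ϱ σ * 1 - F P₀ := by
            rw [hFsum, ← Complex.re_sum, hsumPt, Complex.one_re]
        _ = 0 := by rw [mul_one, ← hphysF, hsp, sub_self]
    have hTzero : ∀ a, (((sel ϱ σ) • (1 : Matrix (Fin d) (Fin d) ℂ)
        - (∑ s, σ s a • (R⁻¹ * ϱ s * R⁻¹))) * (R * P₀ a * R)).trace = 0 := by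
      intro a
      have hre := (Finset.sum_eq_zero_iff_of_nonneg
        (fun a (_ : a ∈ Finset.univ) => (Complex.nonneg_iff.mp (hTnn a)).1)).mp hTsum a
        (Finset.mem_univ a)
      have him := (Complex.nonneg_iff.mp (hTnn a)).2
      exact Complex.ext hre him.symm
    have hprod : ∀ a, ((sel ϱ σ) • (1 : Matrix (Fin d) (Fin d) ℂ)
        - (∑ s, σ s a • (R⁻¹ * ϱ s * R⁻¹))) * (R * P₀ a * R) = 0 := fun a =>
      Aux.mul_eq_zero_of_trace (hD a) (hconjR (hP₀K.1 a)) (hTzero a)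
    refine ⟨fun a => R * P₀ a * R, fun a => hconjR (hP₀K.1 a), ?_, ?_⟩
    · intro a
      have h0 := hprod a
      rw [Matrix.sub_mul, smul_mul_assoc, one_mul, sub_eq_zero] at h0
      exact h0.symm
    · rw [← Finset.sum_mul, ← Finset.mul_sum, hP₀K.2, mul_one, hRR]
  · -- eigenfamily → sel = phys
    rintro ⟨Pt, hPtPSD, hPtEig, hPtSum⟩
    refine le_antisymm ?_ hphys_le_sel
    set Q : A → Matrix (Fin d) (Fin d) ℂ := fun a => R⁻¹ * Pt a * R⁻¹ with hQ
    have hQPSD : ∀ a, (Q a).PosSemidef := fun a => hconjRi (hPtPSD a)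
    have hQsum : ∑ a, Q a = 1 := by
      rw [hQ]
      rw [← Finset.sum_mul, ← Finset.mul_sum, hPtSum, hRiρRi]
    have htrQ : ∀ a, (Q a * (∑ s, σ s a • ϱ s)).trace = sel ϱ σ • (Pt a).trace := by
      intro a
      have h1 : Q a * (∑ s, σ s a • ϱ s) = R⁻¹ * (Pt a * (R⁻¹ * (∑ s, σ s a • ϱ s))) := by
        rw [hQ]
        simp only [mul_assoc]
      rw [h1, Matrix.trace_mul_comm, mul_assoc, ← hOeq a, Matrix.trace_mul_comm, hPtEig a,
        Matrix.trace_smul]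
    have hQval : val ϱ σ Q = sel ϱ σ := by
      rw [Aux.val_eq, Aux.num_eq, Aux.normZ_eq, hQsum, one_mul, htrρ, Complex.one_re, div_one]
      have h3 : ∑ a, (Q a * (∑ s, σ s a • ϱ s)).trace = (sel ϱ σ : ℂ) := by
        calc ∑ a, (Q a * (∑ s, σ s a • ϱ s)).trace = ∑ a, sel ϱ σ • (Pt a).trace := by
              exact Finset.sum_congr rfl fun a _ => htrQ a
          _ = sel ϱ σ • ∑ a, (Pt a).trace := by rw [Finset.smul_sum]
          _ = (sel ϱ σ : ℂ) := by
              rw [← Matrix.trace_sum, hPtSum, htrρ, Complex.real_smul, mul_one]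
      rw [h3, Complex.ofReal_re]
    have := le_csSup hPhysBdd (show val ϱ σ Q ∈ physS from ⟨Q, hQPSD, hQsum, rfl⟩)
    rwa [hQval] at this
end

section
/- (Tensor product selective value) Let G₁ = (ϱ₁, σ₁) and G₂ = (ϱ₂, σ₂) be weighted quantum retrieval games on dimensions d₁ and d₂ with finite nonempty answer sets and positive definite reduced density matrices. Define the tensor product game G₁⊗G₂ = (ϱ₁⊗ϱ₂, σ₁⊗σ₂) by (ϱ₁⊗ϱ₂)(s₁,s₂) = ϱ₁(s₁) ⊗ ϱ₂(s₂) (Kronecker product) and (σ₁⊗σ₂)((s₁,s₂),(a₁,a₂)) = σ₁(s₁,a₁)·σ₂(s₂,a₂). Then Sel(G₁⊗G₂) = Sel(G₁)·Sel(G₂). -/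
open Matrix Kronecker
open scoped ComplexOrder
open scoped ComplexOrder

open QRG


set_option linter.unusedSectionVars false
set_option linter.unusedVariables false
set_option maxHeartbeats 1000000

section QRGauxSection
open Matrix Kronecker
open scoped ComplexOrder

namespace QRGaux

lemma cnonneg_im {z : ℂ} (h : 0 ≤ z) : z.im = 0 := ((Complex.le_def.mp h).2).symm
lemma cnonneg_re {z : ℂ} (h : 0 ≤ z) : 0 ≤ z.re := by simpa using (Complex.le_def.mp h).1

variable {m n : Type*}

lemma kronCT (A : Matrix m m ℂ) (B : Matrix n n ℂ) :
    (A ⊗ₖ B)ᴴ = Aᴴ ⊗ₖ Bᴴ := by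
  ext ⟨i, j⟩ ⟨k, l⟩
  simp [Matrix.conjTranspose_apply, Matrix.kroneckerMap_apply, mul_comm]

open scoped MatrixOrder in
lemma psd_eq_CtC [Fintype m] {A : Matrix m m ℂ} (hA : A.PosSemidef) :
    ∃ C : Matrix m m ℂ, A = Cᴴ * C := by
  classical
  obtain ⟨C, hC⟩ := CStarAlgebra.nonneg_iff_eq_star_mul_self.mp hA.nonneg
  exact ⟨C, by rw [hC, Matrix.star_eq_conjTranspose]⟩

lemma posSemidefKron [Fintype m] [Fintype n] {A : Matrix m m ℂ} {B : Matrix n n ℂ}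
    (hA : A.PosSemidef) (hB : B.PosSemidef) : (A ⊗ₖ B).PosSemidef := by
  classical
  obtain ⟨C, rfl⟩ := psd_eq_CtC hA
  obtain ⟨D, rfl⟩ := psd_eq_CtC hB
  rw [Matrix.mul_kronecker_mul, ← kronCT]
  exact Matrix.posSemidef_conjTranspose_mul_self _

lemma trace_psd_nonneg [Fintype m] {A : Matrix m m ℂ} (hA : A.PosSemidef) : 0 ≤ A.trace := by
  classical
  rw [Matrix.trace]
  apply Finset.sum_nonneg
  intro i _
  have h := hA.dotProduct_mulVec_nonneg (Pi.single i 1)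
  simpa [Matrix.mulVec_single, dotProduct, Pi.single_apply,
    Finset.sum_ite_eq', Matrix.diag] using h

lemma trace_mul_psd_nonneg [Fintype m] {A B : Matrix m m ℂ}
    (hA : A.PosSemidef) (hB : B.PosSemidef) : 0 ≤ (A * B).trace := by
  classical
  obtain ⟨C, rfl⟩ := psd_eq_CtC hB
  rw [← mul_assoc, Matrix.trace_mul_cycle]
  exact trace_psd_nonneg (hA.mul_mul_conjTranspose_same C)

lemma smulPSD [Fintype m] {c : ℝ} (hc : 0 ≤ c) {A : Matrix m m ℂ} (hA : A.PosSemidef) :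
    ((c : ℂ) • A).PosSemidef := by
  refine Matrix.PosSemidef.of_dotProduct_mulVec_nonneg ?_ (fun x => ?_)
  · unfold Matrix.IsHermitian
    rw [Matrix.conjTranspose_smul, hA.1.eq]
    simp
  · rw [Matrix.smul_mulVec, dotProduct_smul]
    have := hA.dotProduct_mulVec_nonneg x
    rw [Complex.le_def] at this ⊢
    constructor
    · simpa using mul_nonneg hc (by simpa using this.1)
    · simp [Complex.smul_re, Complex.smul_im, ← this.2]

lemma psd_vecMulVec [Fintype m] [DecidableEq m] (x : m → ℂ) :
    (Matrix.vecMulVec x (star x)).PosSemidef := by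
  have : Matrix.vecMulVec x (star x) = Matrix.replicateCol Unit x * (Matrix.replicateCol Unit x)ᴴ := by
    rw [Matrix.conjTranspose_replicateCol, ← Matrix.vecMulVec_eq]
  rw [this]
  exact Matrix.posSemidef_self_mul_conjTranspose _

lemma trace_vecMulVec_mul_s11 [Fintype m] (x : m → ℂ) (A : Matrix m m ℂ) :
    (Matrix.vecMulVec x (star x) * A).trace = star x ⬝ᵥ (A *ᵥ x) := by
  simp only [Matrix.trace, Matrix.diag, Matrix.mul_apply, Matrix.vecMulVec_apply,
    dotProduct, Matrix.mulVec, Pi.star_apply]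
  rw [Finset.sum_comm]
  refine Finset.sum_congr rfl fun j _ => ?_
  rw [Finset.mul_sum]
  refine Finset.sum_congr rfl fun i _ => ?_
  ring

lemma psd_sum_s11 {ι : Type*} [Fintype m] (s : Finset ι) (f : ι → Matrix m m ℂ)
    (h : ∀ i ∈ s, (f i).PosSemidef) : (∑ i ∈ s, f i).PosSemidef := by
  classical
  induction s using Finset.induction with
  | empty => simpa using (Matrix.PosSemidef.zero : (0 : Matrix m m ℂ).PosSemidef)
  | insert _ _ hni ih =>
    rw [Finset.sum_insert hni]
    exact (h _ (Finset.mem_insert_self _ _)).add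
      (ih fun i hi => h i (Finset.mem_insert_of_mem hi))

lemma sum_kronecker {ι : Type*} (s : Finset ι) (A : ι → Matrix m m ℂ) (B : Matrix n n ℂ) :
    (∑ i ∈ s, A i) ⊗ₖ B = ∑ i ∈ s, A i ⊗ₖ B := by
  ext ⟨i, j⟩ ⟨k, l⟩
  simp [Matrix.kroneckerMap_apply, Matrix.sum_apply, Finset.sum_mul]

lemma kronecker_sum' {ι : Type*} (s : Finset ι) (A : Matrix m m ℂ) (B : ι → Matrix n n ℂ) :
    A ⊗ₖ (∑ i ∈ s, B i) = ∑ i ∈ s, A ⊗ₖ B i := by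
  ext ⟨i, j⟩ ⟨k, l⟩
  simp [Matrix.kroneckerMap_apply, Matrix.sum_apply, Finset.mul_sum]

end QRGaux

namespace QRGaux

variable {n S A : Type*} [Fintype n] [Fintype S] [Fintype A]

/-- the set whose sup is `sel` -/
def selSet (ϱ : S → Matrix n n ℂ) (σ : S → A → ℝ) : Set ℝ :=
  {v | ∃ P : A → Matrix n n ℂ,
    (∀ a, (P a).PosSemidef) ∧ 0 < QRG.normZ ϱ P ∧ v = QRG.val ϱ σ P}

lemma sel_def (ϱ : S → Matrix n n ℂ) (σ : S → A → ℝ) :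
    QRG.sel ϱ σ = sSup (selSet ϱ σ) := rfl

lemma normZ_eq (ϱ : S → Matrix n n ℂ) (P : A → Matrix n n ℂ) :
    QRG.normZ ϱ P = ∑ a, ((P a * ∑ s, ϱ s).trace).re := by
  rw [QRG.normZ, Finset.sum_comm]
  refine Finset.sum_congr rfl fun a _ => ?_
  rw [Finset.mul_sum, Matrix.trace_sum, Complex.re_sum]

lemma val_eq (ϱ : S → Matrix n n ℂ) (σ : S → A → ℝ) (P : A → Matrix n n ℂ) :
    QRG.val ϱ σ P =
      (∑ a, ((P a * ∑ s, (σ s a : ℂ) • ϱ s).trace).re) / QRG.normZ ϱ P := by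
  rw [QRG.val, Finset.sum_comm, Finset.sum_div]
  refine Finset.sum_congr rfl fun a _ => ?_
  rw [Finset.mul_sum, Matrix.trace_sum, Complex.re_sum, Finset.sum_div]
  refine Finset.sum_congr rfl fun s _ => ?_
  rw [QRG.induced, Matrix.mul_smul, Matrix.trace_smul]
  simp only [smul_eq_mul, Complex.mul_re, Complex.ofReal_re, Complex.ofReal_im, zero_mul,
    sub_zero]
  ring

end QRGaux

namespace QRGaux

variable {n S A : Type*} [Fintype n] [Fintype S] [Fintype A]
variable {ϱ : S → Matrix n n ℂ} {σ : S → A → ℝ}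

lemma mem_nonneg (hσ : ∀ s a, 0 ≤ σ s a) (hpsd : ∀ s, (ϱ s).PosSemidef)
    {v : ℝ} (hv : v ∈ selSet ϱ σ) : 0 ≤ v := by
  obtain ⟨P, hP, hZ, rfl⟩ := hv
  refine Finset.sum_nonneg fun s _ => Finset.sum_nonneg fun a _ => ?_
  refine mul_nonneg (div_nonneg ?_ hZ.le) (hσ s a)
  exact cnonneg_re (trace_mul_psd_nonneg (hP a) (hpsd s))

lemma induced_nonneg (hpsd : ∀ s, (ϱ s).PosSemidef) {P : A → Matrix n n ℂ}
    (hP : ∀ a, (P a).PosSemidef) (s : S) (a : A) :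
    0 ≤ ((P a * ϱ s).trace).re :=
  cnonneg_re (trace_mul_psd_nonneg (hP a) (hpsd s))

lemma bddAbove_selSet (hσ : ∀ s a, 0 ≤ σ s a) (hpsd : ∀ s, (ϱ s).PosSemidef) :
    BddAbove (selSet ϱ σ) := by
  refine ⟨∑ s, ∑ a, σ s a, fun v hv => ?_⟩
  obtain ⟨P, hP, hZ, rfl⟩ := hv
  rw [QRG.val]
  refine Finset.sum_le_sum fun s _ => Finset.sum_le_sum fun a _ => ?_
  have h1 : QRG.induced ϱ P s a ≤ 1 := by
    rw [QRG.induced, div_le_one hZ, QRG.normZ]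
    calc ((P a * ϱ s).trace).re
        ≤ ∑ a', ((P a' * ϱ s).trace).re :=
          Finset.single_le_sum (fun a' _ => induced_nonneg hpsd hP s a') (Finset.mem_univ a)
      _ ≤ ∑ s', ∑ a', ((P a' * ϱ s').trace).re :=
          Finset.single_le_sum
            (fun s' _ => Finset.sum_nonneg fun a' _ => induced_nonneg hpsd hP s' a')
            (Finset.mem_univ s)
  have h0 : 0 ≤ QRG.induced ϱ P s a :=
    div_nonneg (induced_nonneg hpsd hP s a) hZ.le
  calc QRG.induced ϱ P s a * σ s a ≤ 1 * σ s a :=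
        mul_le_mul_of_nonneg_right h1 (hσ s a)
    _ = σ s a := one_mul _

lemma selSet_nonempty [DecidableEq n] [Nonempty A] (htr : ∑ s, (ϱ s).trace = 1) :
    (selSet ϱ σ).Nonempty := by
  refine ⟨QRG.val ϱ σ (fun _ => 1), fun _ => 1, fun a => Matrix.PosSemidef.one, ?_, rfl⟩
  have : QRG.normZ ϱ (fun _ : A => (1 : Matrix n n ℂ)) = Fintype.card A := by
    rw [QRG.normZ]
    simp only [one_mul]
    rw [Finset.sum_comm]
    rw [Finset.sum_const, Finset.card_univ]
    have : ∑ s, ((ϱ s).trace).re = 1 := by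
      rw [← Complex.re_sum, htr, Complex.one_re]
    rw [this, nsmul_eq_mul, mul_one]
  rw [this]
  exact_mod_cast Fintype.card_pos

lemma sel_nonneg [DecidableEq n] [Nonempty A] (hσ : ∀ s a, 0 ≤ σ s a) (hpsd : ∀ s, (ϱ s).PosSemidef)
    (htr : ∑ s, (ϱ s).trace = 1) : 0 ≤ QRG.sel ϱ σ := by
  obtain ⟨v, hv⟩ := selSet_nonempty (σ := σ) htr
  exact le_trans (mem_nonneg hσ hpsd hv) (le_csSup (bddAbove_selSet hσ hpsd) hv)

end QRGaux

namespace QRGaux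

variable {n S A : Type*} [Fintype n] [Fintype S] [Fintype A]
variable {ϱ : S → Matrix n n ℂ} {σ : S → A → ℝ}

lemma key [DecidableEq n] [Nonempty A] (hσ : ∀ s a, 0 ≤ σ s a)
    (hpsd : ∀ s, (ϱ s).PosSemidef) (htr : ∑ s, (ϱ s).trace = 1)
    (hpd : (∑ s, ϱ s).PosDef) (a : A) :
    ((QRG.sel ϱ σ : ℂ) • (∑ s, ϱ s) - ∑ s, (σ s a : ℂ) • ϱ s).PosSemidef := by
  classical
  set c := QRG.sel ϱ σ with hc
  set ρ : Matrix n n ℂ := ∑ s, ϱ s with hρ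
  set M : Matrix n n ℂ := ∑ s, (σ s a : ℂ) • ϱ s with hM
  have hMpsd : M.PosSemidef := psd_sum_s11 _ _ (fun s _ => smulPSD (hσ s a) (hpsd s))
  have hρpsd : ρ.PosSemidef := hpd.posSemidef
  refine Matrix.PosSemidef.of_dotProduct_mulVec_nonneg ?_ (fun x => ?_)
  · show ((c : ℂ) • ρ - M)ᴴ = (c : ℂ) • ρ - M
    rw [Matrix.conjTranspose_sub, Matrix.conjTranspose_smul, hρpsd.1.eq, hMpsd.1.eq]
    simp
  by_cases hx : x = 0
  · simp [hx]
  have hqρ := hpd.dotProduct_mulVec_pos hx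
  have hqM := hMpsd.dotProduct_mulVec_nonneg x
  have hqρ' := hρpsd.dotProduct_mulVec_nonneg x
  set Q := Matrix.vecMulVec x (star x) with hQ
  set P : A → Matrix n n ℂ := fun b => if b = a then Q else 0 with hP
  have hPpsd : ∀ b, (P b).PosSemidef := by
    intro b
    by_cases hb : b = a
    · simpa [hP, hb, hQ] using psd_vecMulVec x
    · simpa [hP, hb] using (Matrix.PosSemidef.zero : (0 : Matrix n n ℂ).PosSemidef)
  have hsum : ∀ X : Matrix n n ℂ, (∑ b, ((P b * X).trace).re) = (star x ⬝ᵥ (X *ᵥ x)).re := by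
    intro X
    rw [Finset.sum_eq_single_of_mem a (Finset.mem_univ a)]
    · show ((P a * X).trace).re = _
      simp only [hP, if_pos rfl, hQ]
      rw [trace_vecMulVec_mul_s11]
    · intro b _ hb
      simp [hP, hb]
  have hZ : QRG.normZ ϱ P = (star x ⬝ᵥ (ρ *ᵥ x)).re := by
    rw [normZ_eq, ← hρ, hsum]
  have hZpos : 0 < QRG.normZ ϱ P := by
    rw [hZ]
    exact (Complex.lt_def.mp hqρ).1
  have hval : QRG.val ϱ σ P = (star x ⬝ᵥ (M *ᵥ x)).re / QRG.normZ ϱ P := by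
    rw [val_eq]
    congr 1
    rw [Finset.sum_eq_single_of_mem a (Finset.mem_univ a)]
    · show ((P a * ∑ s, (σ s a : ℂ) • ϱ s).trace).re = _
      simp only [hP, if_pos rfl, hQ, ← hM]
      rw [trace_vecMulVec_mul_s11]
    · intro b _ hb
      simp [hP, hb]
  have hmem : QRG.val ϱ σ P ∈ selSet ϱ σ := ⟨P, hPpsd, hZpos, rfl⟩
  have hle : QRG.val ϱ σ P ≤ c :=
    le_csSup (bddAbove_selSet hσ hpsd) hmem
  have hkey : (star x ⬝ᵥ (M *ᵥ x)).re ≤ c * (star x ⬝ᵥ (ρ *ᵥ x)).re := by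
    rw [hval, hZ, div_le_iff₀ (by rw [← hZ]; exact hZpos)] at hle
    linarith [hle]
  rw [Matrix.sub_mulVec, dotProduct_sub, Matrix.smul_mulVec,
    dotProduct_smul]
  have e1 : (star x ⬝ᵥ (ρ *ᵥ x)).im = 0 := cnonneg_im hqρ'
  have e2 : (star x ⬝ᵥ (M *ᵥ x)).im = 0 := cnonneg_im hqM
  have : (c : ℂ) • (star x ⬝ᵥ (ρ *ᵥ x)) - star x ⬝ᵥ (M *ᵥ x)
      = ((c * (star x ⬝ᵥ (ρ *ᵥ x)).re - (star x ⬝ᵥ (M *ᵥ x)).re : ℝ) : ℂ) := by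
    apply Complex.ext
    · simp [Complex.mul_re, e1, e2]
    · simp [Complex.mul_im, e1, e2]
  rw [this]
  rw [Complex.zero_le_real]
  linarith [hkey]

end QRGaux

end QRGauxSection

open Matrix Kronecker QRG QRGaux
open scoped ComplexOrder

/-- Tensor product selective value: the selective value of the tensor product of two
weighted quantum retrieval games is the product of the individual selective values. -/
theorem sel_tensor_product {d₁ d₂ : ℕ} {S₁ S₂ A₁ A₂ : Type}
    [Fintype S₁] [Fintype S₂] [Fintype A₁] [Fintype A₂]
    [Nonempty S₁] [Nonempty S₂] [Nonempty A₁] [Nonempty A₂]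
    (ϱ₁ : S₁ → Matrix (Fin d₁) (Fin d₁) ℂ) (σ₁ : S₁ → A₁ → ℝ)
    (ϱ₂ : S₂ → Matrix (Fin d₂) (Fin d₂) ℂ) (σ₂ : S₂ → A₂ → ℝ)
    (hσ₁ : ∀ s a, 0 ≤ σ₁ s a) (hσ₂ : ∀ s a, 0 ≤ σ₂ s a)
    (hpsd₁ : ∀ s, (ϱ₁ s).PosSemidef) (hpsd₂ : ∀ s, (ϱ₂ s).PosSemidef)
    (htr₁ : ∑ s, (ϱ₁ s).trace = 1) (htr₂ : ∑ s, (ϱ₂ s).trace = 1)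
    (hpd₁ : (∑ s, ϱ₁ s).PosDef) (hpd₂ : (∑ s, ϱ₂ s).PosDef) :
    sel (fun s : S₁ × S₂ => ϱ₁ s.1 ⊗ₖ ϱ₂ s.2)
        (fun s (a : A₁ × A₂) => σ₁ s.1 a.1 * σ₂ s.2 a.2) =
      sel ϱ₁ σ₁ * sel ϱ₂ σ₂ := by
  classical
  set ϱt : S₁ × S₂ → Matrix (Fin d₁ × Fin d₂) (Fin d₁ × Fin d₂) ℂ :=
    fun s => ϱ₁ s.1 ⊗ₖ ϱ₂ s.2 with hϱt
  set σt : S₁ × S₂ → A₁ × A₂ → ℝ := fun s a => σ₁ s.1 a.1 * σ₂ s.2 a.2 with hσt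
  set c₁ := sel ϱ₁ σ₁ with hc₁
  set c₂ := sel ϱ₂ σ₂ with hc₂
  have hc₁0 : 0 ≤ c₁ := sel_nonneg hσ₁ hpsd₁ htr₁
  have hc₂0 : 0 ≤ c₂ := sel_nonneg hσ₂ hpsd₂ htr₂
  have hσt' : ∀ s a, 0 ≤ σt s a := fun s a => mul_nonneg (hσ₁ _ _) (hσ₂ _ _)
  have hpsdt : ∀ s, (ϱt s).PosSemidef := fun s => posSemidefKron (hpsd₁ s.1) (hpsd₂ s.2)
  have htrt : ∑ s, (ϱt s).trace = 1 := by
    rw [Fintype.sum_prod_type]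
    simp only [hϱt, Matrix.trace_kronecker]
    rw [← Finset.sum_mul_sum, htr₁, htr₂, one_mul]
  -- the reduced density matrix of the tensor game
  have hρt : (∑ s : S₁ × S₂, ϱt s) = (∑ s, ϱ₁ s) ⊗ₖ (∑ s, ϱ₂ s) := by
    rw [Fintype.sum_prod_type, sum_kronecker]
    simp only [hϱt]
    exact Finset.sum_congr rfl fun s₁ _ => (kronecker_sum' _ _ _).symm
  -- the utility-weighted matrices of the tensor game
  have hMt : ∀ a : A₁ × A₂,
      (∑ s : S₁ × S₂, ((σt s a : ℝ) : ℂ) • ϱt s) =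
        (∑ s, ((σ₁ s a.1 : ℝ) : ℂ) • ϱ₁ s) ⊗ₖ (∑ s, ((σ₂ s a.2 : ℝ) : ℂ) • ϱ₂ s) := by
    intro a
    ext ⟨i, j⟩ ⟨k, l⟩
    simp only [Matrix.sum_apply, Matrix.smul_apply, Matrix.kroneckerMap_apply,
      smul_eq_mul, hϱt, hσt]
    rw [Fintype.sum_prod_type, Finset.sum_mul_sum]
    refine Finset.sum_congr rfl fun s₁ _ => Finset.sum_congr rfl fun s₂ _ => ?_
    push_cast
    ring
  -- key PSD matrices from each factor game
  have hM₁psd : ∀ a : A₁, (∑ s, ((σ₁ s a : ℝ) : ℂ) • ϱ₁ s).PosSemidef :=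
    fun a => psd_sum_s11 _ _ fun s _ => smulPSD (hσ₁ s a) (hpsd₁ s)
  have hM₂psd : ∀ a : A₂, (∑ s, ((σ₂ s a : ℝ) : ℂ) • ϱ₂ s).PosSemidef :=
    fun a => psd_sum_s11 _ _ fun s _ => smulPSD (hσ₂ s a) (hpsd₂ s)
  have hkey₁ : ∀ a : A₁, ((c₁ : ℂ) • (∑ s, ϱ₁ s) - ∑ s, ((σ₁ s a : ℝ) : ℂ) • ϱ₁ s).PosSemidef :=
    fun a => key hσ₁ hpsd₁ htr₁ hpd₁ a
  have hkey₂ : ∀ a : A₂, ((c₂ : ℂ) • (∑ s, ϱ₂ s) - ∑ s, ((σ₂ s a : ℝ) : ℂ) • ϱ₂ s).PosSemidef :=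
    fun a => key hσ₂ hpsd₂ htr₂ hpd₂ a
  -- PSD of the difference matrix of the tensor game
  have hD : ∀ a : A₁ × A₂,
      (((c₁ * c₂ : ℝ) : ℂ) • ((∑ s, ϱ₁ s) ⊗ₖ (∑ s, ϱ₂ s)) -
        (∑ s, ((σ₁ s a.1 : ℝ) : ℂ) • ϱ₁ s) ⊗ₖ (∑ s, ((σ₂ s a.2 : ℝ) : ℂ) • ϱ₂ s)).PosSemidef := by
    intro a
    have hdecomp :
        (((c₁ * c₂ : ℝ) : ℂ) • ((∑ s, ϱ₁ s) ⊗ₖ (∑ s, ϱ₂ s)) -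
          (∑ s, ((σ₁ s a.1 : ℝ) : ℂ) • ϱ₁ s) ⊗ₖ (∑ s, ((σ₂ s a.2 : ℝ) : ℂ) • ϱ₂ s)) =
        ((c₁ : ℂ) • (∑ s, ϱ₁ s) - ∑ s, ((σ₁ s a.1 : ℝ) : ℂ) • ϱ₁ s) ⊗ₖ
            ((c₂ : ℂ) • (∑ s, ϱ₂ s)) +
          (∑ s, ((σ₁ s a.1 : ℝ) : ℂ) • ϱ₁ s) ⊗ₖ
            ((c₂ : ℂ) • (∑ s, ϱ₂ s) - ∑ s, ((σ₂ s a.2 : ℝ) : ℂ) • ϱ₂ s) := by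
      ext ⟨i, j⟩ ⟨k, l⟩
      simp only [Matrix.sub_apply, Matrix.add_apply, Matrix.smul_apply,
        Matrix.kroneckerMap_apply, smul_eq_mul]
      push_cast
      ring
    rw [hdecomp]
    exact (posSemidefKron (hkey₁ a.1) (smulPSD hc₂0 hpd₂.posSemidef)).add
      (posSemidefKron (hM₁psd a.1) (hkey₂ a.2))
  -- every value of the tensor game is at most c₁ * c₂
  have hub : ∀ v ∈ selSet ϱt σt, v ≤ c₁ * c₂ := by
    rintro v ⟨P, hP, hZ, rfl⟩
    rw [val_eq, div_le_iff₀ hZ]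
    have hterm : ∀ a : A₁ × A₂,
        ((P a * ∑ s, ((σt s a : ℝ) : ℂ) • ϱt s).trace).re ≤
          (c₁ * c₂) * ((P a * ∑ s, ϱt s).trace).re := by
      intro a
      have h0 : 0 ≤ ((P a *
          (((c₁ * c₂ : ℝ) : ℂ) • (∑ s, ϱt s) - ∑ s, ((σt s a : ℝ) : ℂ) • ϱt s)).trace) := by
        apply trace_mul_psd_nonneg (hP a)
        rw [hρt, hMt a]
        exact hD a
      rw [Matrix.mul_sub, Matrix.mul_smul, Matrix.trace_sub, Matrix.trace_smul] at h0
      have := cnonneg_re h0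
      simp only [Complex.sub_re, smul_eq_mul, Complex.mul_re, Complex.ofReal_re,
        Complex.ofReal_im, zero_mul, sub_zero] at this
      linarith [this]
    calc ∑ a, ((P a * ∑ s, ((σt s a : ℝ) : ℂ) • ϱt s).trace).re
        ≤ ∑ a, (c₁ * c₂) * ((P a * ∑ s, ϱt s).trace).re :=
          Finset.sum_le_sum fun a _ => hterm a
      _ = (c₁ * c₂) * QRG.normZ ϱt P := by rw [← Finset.mul_sum, normZ_eq]
  -- upper bound
  have hupper : sel ϱt σt ≤ c₁ * c₂ := by
    rw [sel_def]
    exact Real.sSup_le hub (mul_nonneg hc₁0 hc₂0)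
  -- products of values of the factor games are values of the tensor game
  have hprod : ∀ v₁ ∈ selSet ϱ₁ σ₁, ∀ v₂ ∈ selSet ϱ₂ σ₂, v₁ * v₂ ∈ selSet ϱt σt := by
    rintro v₁ ⟨P₁, hP₁, hZ₁, rfl⟩ v₂ ⟨P₂, hP₂, hZ₂, rfl⟩
    have hfact : ∀ (s₁ : S₁) (s₂ : S₂) (a₁ : A₁) (a₂ : A₂),
        (((P₁ a₁ ⊗ₖ P₂ a₂) * (ϱ₁ s₁ ⊗ₖ ϱ₂ s₂)).trace).re =
          ((P₁ a₁ * ϱ₁ s₁).trace).re * ((P₂ a₂ * ϱ₂ s₂).trace).re := by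
      intro s₁ s₂ a₁ a₂
      rw [← Matrix.mul_kronecker_mul, Matrix.trace_kronecker, Complex.mul_re,
        cnonneg_im (trace_mul_psd_nonneg (hP₁ a₁) (hpsd₁ s₁)),
        cnonneg_im (trace_mul_psd_nonneg (hP₂ a₂) (hpsd₂ s₂))]
      ring
    set Pt : A₁ × A₂ → Matrix (Fin d₁ × Fin d₂) (Fin d₁ × Fin d₂) ℂ :=
      fun a => P₁ a.1 ⊗ₖ P₂ a.2 with hPt
    have hZt : QRG.normZ ϱt Pt = QRG.normZ ϱ₁ P₁ * QRG.normZ ϱ₂ P₂ := by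
      rw [QRG.normZ, QRG.normZ, QRG.normZ, Finset.sum_mul_sum, Fintype.sum_prod_type]
      refine Finset.sum_congr rfl fun s₁ _ => Finset.sum_congr rfl fun s₂ _ => ?_
      rw [Finset.sum_mul_sum, Fintype.sum_prod_type]
      exact Finset.sum_congr rfl fun a₁ _ => Finset.sum_congr rfl fun a₂ _ =>
        hfact s₁ s₂ a₁ a₂
    refine ⟨Pt, fun a => posSemidefKron (hP₁ a.1) (hP₂ a.2), ?_, ?_⟩
    · rw [hZt]; exact mul_pos hZ₁ hZ₂
    · rw [QRG.val, QRG.val, QRG.val, Finset.sum_mul_sum, Fintype.sum_prod_type]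
      refine Finset.sum_congr rfl fun s₁ _ => Finset.sum_congr rfl fun s₂ _ => ?_
      rw [Finset.sum_mul_sum, Fintype.sum_prod_type]
      refine Finset.sum_congr rfl fun a₁ _ => Finset.sum_congr rfl fun a₂ _ => ?_
      rw [QRG.induced, QRG.induced, QRG.induced, hZt]
      have : ((Pt (a₁, a₂) * ϱt (s₁, s₂)).trace).re =
          ((P₁ a₁ * ϱ₁ s₁).trace).re * ((P₂ a₂ * ϱ₂ s₂).trace).re := hfact s₁ s₂ a₁ a₂
      rw [this, hσt]
      field_simp
  -- lower bound
  have hbddt : BddAbove (selSet ϱt σt) := ⟨c₁ * c₂, hub⟩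
  have hne₁ := selSet_nonempty (ϱ := ϱ₁) (σ := σ₁) htr₁
  have hne₂ := selSet_nonempty (ϱ := ϱ₂) (σ := σ₂) htr₂
  have hlower : c₁ * c₂ ≤ sel ϱt σt := by
    rcases eq_or_lt_of_le hc₂0 with h2 | h2
    · obtain ⟨v₁, hv₁⟩ := hne₁
      obtain ⟨v₂, hv₂⟩ := hne₂
      have := le_csSup hbddt (hprod v₁ hv₁ v₂ hv₂)
      have h0t : 0 ≤ sel ϱt σt :=
        le_trans (mul_nonneg (mem_nonneg hσ₁ hpsd₁ hv₁) (mem_nonneg hσ₂ hpsd₂ hv₂)) this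
      rw [← h2, mul_zero]
      exact h0t
    · -- c₂ > 0
      have h0t : 0 ≤ sel ϱt σt := by
        obtain ⟨v₁, hv₁⟩ := hne₁
        obtain ⟨v₂, hv₂⟩ := hne₂
        exact le_trans (mul_nonneg (mem_nonneg hσ₁ hpsd₁ hv₁) (mem_nonneg hσ₂ hpsd₂ hv₂))
          (le_csSup hbddt (hprod v₁ hv₁ v₂ hv₂))
      have hstep : c₁ ≤ sel ϱt σt / c₂ := by
        rw [hc₁, sel_def]
        apply Real.sSup_le _ (div_nonneg h0t hc₂0)
        intro v₁ hv₁
        rw [le_div_iff₀ h2]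
        rcases le_or_gt (v₁ * c₂) 0 with h | h
        · exact le_trans h h0t
        · have hv₁0 : 0 < v₁ := by
            rcases lt_or_ge 0 v₁ with h' | h'
            · exact h'
            · exfalso; nlinarith
          have hstep2 : c₂ ≤ sel ϱt σt / v₁ := by
            rw [hc₂, sel_def]
            apply Real.sSup_le _ (div_nonneg h0t hv₁0.le)
            intro v₂ hv₂
            rw [le_div_iff₀ hv₁0]
            calc v₂ * v₁ = v₁ * v₂ := mul_comm _ _
              _ ≤ sel ϱt σt := le_csSup hbddt (hprod v₁ hv₁ v₂ hv₂)
          calc v₁ * c₂ ≤ v₁ * (sel ϱt σt / v₁) :=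
                mul_le_mul_of_nonneg_left hstep2 hv₁0.le
            _ = sel ϱt σt := by field_simp
      calc c₁ * c₂ ≤ (sel ϱt σt / c₂) * c₂ := mul_le_mul_of_nonneg_right hstep hc₂0
        _ = sel ϱt σt := by field_simp
  exact le_antisymm hupper hlower
end

section
/- (Tensor product physical value) Let G₁ and G₂ be weighted quantum retrieval games with finite nonempty answer sets and positive definite reduced density matrices, and suppose Phys(G₁) = Sel(G₁) and Phys(G₂) = Sel(G₂). Then Phys(G₁⊗G₂) = Sel(G₁⊗G₂), where G₁⊗G₂ = (ϱ₁⊗ϱ₂, σ₁⊗σ₂) is the tensor product game with (ϱ₁⊗ϱ₂)(s₁,s₂) = ϱ₁(s₁) ⊗ ϱ₂(s₂) and (σ₁⊗σ₂)((s₁,s₂),(a₁,a₂)) = σ₁(s₁,a₁)·σ₂(s₂,a₂). -/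
open Matrix Kronecker
open scoped ComplexOrder
open scoped ComplexOrder

open QRG

namespace QRGAux

set_option linter.unusedSectionVars false

section MatrixLemmas

variable {n m : Type*} [Fintype n] [Fintype m]

lemma trace_nonneg_of_posSemidef [DecidableEq n] {M : Matrix n n ℂ}
    (hM : M.PosSemidef) : 0 ≤ M.trace := by
  rw [Matrix.trace]
  apply Finset.sum_nonneg
  intro i _
  have := hM.dotProduct_mulVec_nonneg (Pi.single i 1)
  simpa [Matrix.mulVec_single, dotProduct, Pi.single_apply, Matrix.diag] using this

lemma posSemidef_exists_eq {M : Matrix n n ℂ} (h : M.PosSemidef) :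
    ∃ C : Matrix n n ℂ, M = Cᴴ * C := by
  classical
  open scoped MatrixOrder in
  exact CStarAlgebra.nonneg_iff_eq_star_mul_self.mp h.nonneg

lemma trace_mul_nonneg [DecidableEq n] {A B : Matrix n n ℂ}
    (hA : A.PosSemidef) (hB : B.PosSemidef) : 0 ≤ (A * B).trace := by
  obtain ⟨C, rfl⟩ := posSemidef_exists_eq hB
  have h1 : (A * (Cᴴ * C)).trace = (C * A * Cᴴ).trace := by
    rw [← Matrix.mul_assoc, Matrix.trace_mul_comm, ← Matrix.mul_assoc]
  rw [h1]
  exact trace_nonneg_of_posSemidef (hA.mul_mul_conjTranspose_same C)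

lemma trace_mul_re_nonneg [DecidableEq n] {A B : Matrix n n ℂ}
    (hA : A.PosSemidef) (hB : B.PosSemidef) : 0 ≤ (A * B).trace.re :=
  (Complex.nonneg_iff.mp (trace_mul_nonneg hA hB)).1

lemma trace_mul_re_eq [DecidableEq n] {A B : Matrix n n ℂ}
    (hA : A.PosSemidef) (hB : B.PosSemidef) :
    ((A * B).trace.re : ℂ) = (A * B).trace := by
  have h := trace_mul_nonneg hA hB
  rw [Complex.nonneg_iff] at h
  exact Complex.ext rfl (by simpa using h.2)

lemma conjTranspose_kron (A : Matrix n n ℂ) (B : Matrix m m ℂ) :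
    (A ⊗ₖ B)ᴴ = Aᴴ ⊗ₖ Bᴴ := by
  ext ⟨i, k⟩ ⟨j, l⟩
  simp [Matrix.conjTranspose_apply, Matrix.kroneckerMap_apply, star_mul']

lemma posSemidef_kron {A : Matrix n n ℂ} {B : Matrix m m ℂ}
    (hA : A.PosSemidef) (hB : B.PosSemidef) : (A ⊗ₖ B).PosSemidef := by
  obtain ⟨C, rfl⟩ := posSemidef_exists_eq hA
  obtain ⟨D, rfl⟩ := posSemidef_exists_eq hB
  rw [Matrix.mul_kronecker_mul, ← conjTranspose_kron]
  exact Matrix.posSemidef_conjTranspose_mul_self _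

lemma posSemidef_smul_real {A : Matrix n n ℂ} (hA : A.PosSemidef) {c : ℝ}
    (hc : 0 ≤ c) : ((c : ℂ) • A).PosSemidef := by
  refine Matrix.PosSemidef.of_dotProduct_mulVec_nonneg ?_ ?_
  · unfold Matrix.IsHermitian
    rw [Matrix.conjTranspose_smul, hA.1.eq]
    congr 1
    simp [Complex.ext_iff]
  · intro x
    rw [Matrix.smul_mulVec, dotProduct_smul, smul_eq_mul]
    exact mul_nonneg (by exact_mod_cast hc) (hA.dotProduct_mulVec_nonneg x)

lemma posSemidef_sum {ι : Type*} (s : Finset ι) (f : ι → Matrix n n ℂ)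
    (hf : ∀ i ∈ s, (f i).PosSemidef) : (∑ i ∈ s, f i).PosSemidef := by
  classical
  induction s using Finset.induction with
  | empty => simpa using Matrix.PosSemidef.zero
  | insert _ _ hni ih =>
    rw [Finset.sum_insert hni]
    exact (hf _ (Finset.mem_insert_self _ _)).add
      (ih fun i hi => hf i (Finset.mem_insert_of_mem hi))

lemma posSemidef_vecMulVec (x : n → ℂ) : (Matrix.vecMulVec x (star x)).PosSemidef := by
  have h : Matrix.vecMulVec x (star x)
      = (Matrix.replicateRow Unit (star x))ᴴ * Matrix.replicateRow Unit (star x) := by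
    rw [Matrix.conjTranspose_replicateRow, star_star, ← Matrix.vecMulVec_eq Unit]
  rw [h]
  exact Matrix.posSemidef_conjTranspose_mul_self _

lemma trace_vecMulVec_mul (x : n → ℂ) (B : Matrix n n ℂ) :
    (Matrix.vecMulVec x (star x) * B).trace = dotProduct (star x) (B *ᵥ x) := by
  simp only [Matrix.trace, Matrix.diag, Matrix.mul_apply, Matrix.vecMulVec_apply,
    dotProduct, Matrix.mulVec, Pi.star_apply, Finset.mul_sum]
  rw [Finset.sum_comm]
  exact Finset.sum_congr rfl fun j _ => Finset.sum_congr rfl fun i _ => by ring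

lemma kron_le {c₁ c₂ : ℝ} (hc₂ : 0 ≤ c₂) {ρ₁ M₁ : Matrix n n ℂ} {ρ₂ M₂ : Matrix m m ℂ}
    (hM₁ : M₁.PosSemidef) (hρ₂ : ρ₂.PosSemidef)
    (h₁ : ((c₁ : ℂ) • ρ₁ - M₁).PosSemidef) (h₂ : ((c₂ : ℂ) • ρ₂ - M₂).PosSemidef) :
    (((c₁ * c₂ : ℝ) : ℂ) • (ρ₁ ⊗ₖ ρ₂) - M₁ ⊗ₖ M₂).PosSemidef := by
  have hid : (((c₁ * c₂ : ℝ) : ℂ) • (ρ₁ ⊗ₖ ρ₂) - M₁ ⊗ₖ M₂)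
      = ((c₁ : ℂ) • ρ₁ - M₁) ⊗ₖ ((c₂ : ℂ) • ρ₂) + M₁ ⊗ₖ ((c₂ : ℂ) • ρ₂ - M₂) := by
    ext ⟨i, k⟩ ⟨j, l⟩
    simp only [Matrix.kroneckerMap_apply, Matrix.sub_apply, Matrix.add_apply,
      Matrix.smul_apply, smul_eq_mul]
    push_cast
    ring
  rw [hid]
  exact (posSemidef_kron h₁ (posSemidef_smul_real hρ₂ hc₂)).add (posSemidef_kron hM₁ h₂)

lemma kron_sum_smul {S₁ S₂ : Type*} [Fintype S₁] [Fintype S₂]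
    (c₁ : S₁ → ℝ) (c₂ : S₂ → ℝ) (f₁ : S₁ → Matrix n n ℂ) (f₂ : S₂ → Matrix m m ℂ) :
    (∑ s₁, ((c₁ s₁ : ℂ)) • f₁ s₁) ⊗ₖ (∑ s₂, ((c₂ s₂ : ℂ)) • f₂ s₂)
      = ∑ s : S₁ × S₂, (((c₁ s.1 * c₂ s.2 : ℝ) : ℂ)) • (f₁ s.1 ⊗ₖ f₂ s.2) := by
  ext ⟨i, k⟩ ⟨j, l⟩
  simp only [Matrix.kroneckerMap_apply, Matrix.sum_apply, Matrix.smul_apply, smul_eq_mul,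
    Fintype.sum_prod_type, Finset.sum_mul_sum]
  refine Finset.sum_congr rfl fun s₁ _ => Finset.sum_congr rfl fun s₂ _ => ?_
  push_cast
  ring

lemma kron_sum_sum {S₁ S₂ : Type*} [Fintype S₁] [Fintype S₂]
    (f₁ : S₁ → Matrix n n ℂ) (f₂ : S₂ → Matrix m m ℂ) :
    (∑ s₁, f₁ s₁) ⊗ₖ (∑ s₂, f₂ s₂) = ∑ s : S₁ × S₂, f₁ s.1 ⊗ₖ f₂ s.2 := by
  ext ⟨i, k⟩ ⟨j, l⟩
  simp only [Matrix.kroneckerMap_apply, Matrix.sum_apply,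
    Fintype.sum_prod_type, Finset.sum_mul_sum]

lemma trace_mul_sum_smul {S : Type*} [Fintype S]
    (P : Matrix n n ℂ) (f : S → Matrix n n ℂ) (c : S → ℝ) :
    (P * ∑ s, ((c s : ℂ)) • f s).trace.re = ∑ s, (P * f s).trace.re * c s := by
  rw [Matrix.mul_sum, Matrix.trace_sum, Complex.re_sum]
  refine Finset.sum_congr rfl fun s _ => ?_
  rw [Matrix.mul_smul, Matrix.trace_smul, smul_eq_mul, Complex.re_ofReal_mul]
  ring

end MatrixLemmas
section GameLemmas

variable {n S A : Type*} [Fintype n] [Fintype S] [Fintype A]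

/-- The set over which `sel` takes the supremum. -/
def selSet (ϱ : S → Matrix n n ℂ) (σ : S → A → ℝ) : Set ℝ :=
  {v | ∃ P : A → Matrix n n ℂ,
    (∀ a, (P a).PosSemidef) ∧ 0 < normZ ϱ P ∧ v = val ϱ σ P}

/-- The set over which `phys` takes the supremum. -/
def physSet [DecidableEq n] (ϱ : S → Matrix n n ℂ) (σ : S → A → ℝ) : Set ℝ :=
  {v | ∃ P : A → Matrix n n ℂ,
    (∀ a, (P a).PosSemidef) ∧ (∑ a, P a) = 1 ∧ v = val ϱ σ P}

lemma sel_eq_sSup (ϱ : S → Matrix n n ℂ) (σ : S → A → ℝ) :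
    sel ϱ σ = sSup (selSet ϱ σ) := rfl

lemma phys_eq_sSup [DecidableEq n] (ϱ : S → Matrix n n ℂ) (σ : S → A → ℝ) :
    phys ϱ σ = sSup (physSet ϱ σ) := rfl

lemma val_eq (ϱ : S → Matrix n n ℂ) (σ : S → A → ℝ) (P : A → Matrix n n ℂ) :
    val ϱ σ P = (∑ s, ∑ a, (Matrix.trace (P a * ϱ s)).re * σ s a) / normZ ϱ P := by
  unfold val induced
  rw [Finset.sum_div]
  refine Finset.sum_congr rfl fun s _ => ?_
  rw [Finset.sum_div]
  exact Finset.sum_congr rfl fun a _ => by rw [div_mul_eq_mul_div]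

lemma val_nonneg_and_le [DecidableEq n] {ϱ : S → Matrix n n ℂ} {σ : S → A → ℝ}
    {P : A → Matrix n n ℂ}
    (hσ : ∀ s a, 0 ≤ σ s a) (hϱ : ∀ s, (ϱ s).PosSemidef) (hP : ∀ a, (P a).PosSemidef)
    (hZ : 0 < normZ ϱ P) :
    0 ≤ val ϱ σ P ∧ val ϱ σ P ≤ ∑ s, ∑ a, σ s a := by
  have ht : ∀ s a, 0 ≤ (Matrix.trace (P a * ϱ s)).re := fun s a =>
    trace_mul_re_nonneg (hP a) (hϱ s)
  rw [val_eq]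
  constructor
  · apply div_nonneg _ hZ.le
    exact Finset.sum_nonneg fun s _ => Finset.sum_nonneg fun a _ =>
      mul_nonneg (ht s a) (hσ s a)
  · rw [div_le_iff₀ hZ]
    have hB : ∀ s a, σ s a ≤ ∑ s, ∑ a, σ s a := by
      intro s a
      calc σ s a ≤ ∑ a, σ s a :=
            Finset.single_le_sum (fun a _ => hσ s a) (Finset.mem_univ a)
        _ ≤ ∑ s, ∑ a, σ s a :=
            Finset.single_le_sum (f := fun s => ∑ a, σ s a)
              (fun s _ => Finset.sum_nonneg fun a _ => hσ s a) (Finset.mem_univ s)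
    calc ∑ s, ∑ a, (Matrix.trace (P a * ϱ s)).re * σ s a
        ≤ ∑ s, ∑ a, (Matrix.trace (P a * ϱ s)).re * (∑ s, ∑ a, σ s a) := by
          refine Finset.sum_le_sum fun s _ => Finset.sum_le_sum fun a _ => ?_
          exact mul_le_mul_of_nonneg_left (hB s a) (ht s a)
      _ = (∑ s, ∑ a, σ s a) * normZ ϱ P := by
          rw [QRG.normZ, Finset.mul_sum]
          refine Finset.sum_congr rfl fun s _ => ?_
          rw [Finset.mul_sum]
          exact Finset.sum_congr rfl fun a _ => mul_comm _ _

lemma selSet_bddAbove [DecidableEq n] {ϱ : S → Matrix n n ℂ} {σ : S → A → ℝ}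
    (hσ : ∀ s a, 0 ≤ σ s a) (hϱ : ∀ s, (ϱ s).PosSemidef) :
    BddAbove (selSet ϱ σ) := by
  refine ⟨∑ s, ∑ a, σ s a, fun v hv => ?_⟩
  obtain ⟨P, hP, hZ, rfl⟩ := hv
  exact (val_nonneg_and_le hσ hϱ hP hZ).2

lemma selSet_mem_nonneg [DecidableEq n] {ϱ : S → Matrix n n ℂ} {σ : S → A → ℝ}
    (hσ : ∀ s a, 0 ≤ σ s a) (hϱ : ∀ s, (ϱ s).PosSemidef) {v : ℝ}
    (hv : v ∈ selSet ϱ σ) : 0 ≤ v := by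
  obtain ⟨P, hP, hZ, rfl⟩ := hv
  exact (val_nonneg_and_le hσ hϱ hP hZ).1

lemma normZ_eq (ϱ : S → Matrix n n ℂ) (P : A → Matrix n n ℂ) :
    normZ ϱ P = (((∑ a, P a) * ∑ s, ϱ s).trace).re := by
  rw [Matrix.sum_mul, Matrix.trace_sum, Complex.re_sum, QRG.normZ, Finset.sum_comm]
  refine Finset.sum_congr rfl fun a _ => ?_
  rw [Matrix.mul_sum, Matrix.trace_sum, Complex.re_sum]

lemma normZ_physical [DecidableEq n] {ϱ : S → Matrix n n ℂ} {P : A → Matrix n n ℂ}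
    (hsum : (∑ a, P a) = 1) (htr : ∑ s, (ϱ s).trace = 1) : normZ ϱ P = 1 := by
  rw [normZ_eq, hsum, Matrix.one_mul, Matrix.trace_sum, htr]
  simp

lemma physSet_subset [DecidableEq n] {ϱ : S → Matrix n n ℂ} {σ : S → A → ℝ}
    (htr : ∑ s, (ϱ s).trace = 1) : physSet ϱ σ ⊆ selSet ϱ σ := by
  rintro v ⟨P, hP, hsum, rfl⟩
  exact ⟨P, hP, by rw [normZ_physical hsum htr]; norm_num, rfl⟩

lemma physSet_nonempty [DecidableEq n] [Nonempty A]
    (ϱ : S → Matrix n n ℂ) (σ : S → A → ℝ) : (physSet ϱ σ).Nonempty := by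
  classical
  refine ⟨val ϱ σ (fun _ => ((Fintype.card A : ℂ))⁻¹ • 1),
    fun _ => ((Fintype.card A : ℂ))⁻¹ • 1, fun a => ?_, ?_, rfl⟩
  · have hc : (0:ℝ) ≤ ((Fintype.card A : ℝ))⁻¹ :=
      inv_nonneg.mpr (Nat.cast_nonneg _)
    have h1 : ((((Fintype.card A : ℝ))⁻¹ : ℝ) : ℂ) • (1 : Matrix n n ℂ)
        = ((Fintype.card A : ℂ))⁻¹ • 1 := by push_cast; rfl
    rw [← h1]
    exact posSemidef_smul_real Matrix.PosSemidef.one hc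
  · rw [Finset.sum_const, Finset.card_univ, ← Nat.cast_smul_eq_nsmul ℂ, smul_smul]
    rw [mul_inv_cancel₀ (by exact_mod_cast Fintype.card_ne_zero), one_smul]

end GameLemmas
section Key

variable {n S A : Type*} [Fintype n] [DecidableEq n] [Fintype S] [Fintype A]
  [DecidableEq A]

/-- The fundamental per-game estimate: `∑_s σ(s,a)·ϱ(s) ≤ Sel(G)·ρ` in the Loewner order. -/
lemma key_bound {ϱ : S → Matrix n n ℂ} {σ : S → A → ℝ}
    (hσ : ∀ s a, 0 ≤ σ s a) (hϱ : ∀ s, (ϱ s).PosSemidef)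
    (hpd : (∑ s, ϱ s).PosDef) (a : A) :
    (((sel ϱ σ : ℝ) : ℂ) • (∑ s, ϱ s) - ∑ s, ((σ s a : ℂ)) • ϱ s).PosSemidef := by
  set c : ℝ := sel ϱ σ with hc
  set ρ : Matrix n n ℂ := ∑ s, ϱ s with hρ
  set M : Matrix n n ℂ := ∑ s, ((σ s a : ℂ)) • ϱ s with hM
  have hMpsd : M.PosSemidef :=
    posSemidef_sum _ _ fun s _ => posSemidef_smul_real (hϱ s) (hσ s a)
  have hρpsd : ρ.PosSemidef := posSemidef_sum _ _ fun s _ => hϱ s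
  refine Matrix.PosSemidef.of_dotProduct_mulVec_nonneg ?_ ?_
  · unfold Matrix.IsHermitian
    rw [Matrix.conjTranspose_sub, Matrix.conjTranspose_smul, hρpsd.1.eq, hMpsd.1.eq]
    congr 1
    simp [Complex.ext_iff]
  · intro x
    by_cases hx : x = 0
    · simp [hx]
    set V : Matrix n n ℂ := Matrix.vecMulVec x (star x) with hV
    have hVpsd : V.PosSemidef := posSemidef_vecMulVec x
    have hform : dotProduct (star x) ((((c : ℂ)) • ρ - M) *ᵥ x)
        = (V * (((c : ℂ)) • ρ - M)).trace := (trace_vecMulVec_mul x _).symm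
    rw [hform, Matrix.mul_sub, Matrix.mul_smul, Matrix.trace_sub, Matrix.trace_smul,
      smul_eq_mul]
    have hVρ : ((V * ρ).trace.re : ℂ) = (V * ρ).trace := trace_mul_re_eq hVpsd hρpsd
    have hVM : ((V * M).trace.re : ℂ) = (V * M).trace := trace_mul_re_eq hVpsd hMpsd
    set T : ℝ := (V * ρ).trace.re with hT
    have hTpos : 0 < T := by
      have h1 : (V * ρ).trace = dotProduct (star x) (ρ *ᵥ x) := trace_vecMulVec_mul x ρ
      have h2 : 0 < dotProduct (star x) (ρ *ᵥ x) := hpd.dotProduct_mulVec_pos hx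
      rw [Complex.pos_iff] at h2
      rw [hT, h1]
      exact h2.1
    set P : A → Matrix n n ℂ := fun a' => if a' = a then V else 0 with hP
    have hPpsd : ∀ a', (P a').PosSemidef := by
      intro a'
      by_cases h : a' = a <;> simp [hP, h, Matrix.PosSemidef.zero, hVpsd]
    have htr0 : ∀ (s : S) (a' : A),
        (P a' * ϱ s).trace.re = if a' = a then (V * ϱ s).trace.re else 0 := by
      intro s a'
      by_cases h : a' = a <;> simp [hP, h]
    have hsumT : ∑ s, (V * ϱ s).trace.re = T := by
      rw [hT, hρ, Matrix.mul_sum, Matrix.trace_sum, Complex.re_sum]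
    have hZ : normZ ϱ P = T := by
      rw [QRG.normZ, ← hsumT]
      refine Finset.sum_congr rfl fun s _ => ?_
      simp [htr0 s, Finset.sum_ite_eq']
    have hZpos : 0 < normZ ϱ P := hZ ▸ hTpos
    have hval : val ϱ σ P = (∑ s, (V * ϱ s).trace.re * σ s a) / T := by
      rw [val_eq, hZ]
      congr 1
      refine Finset.sum_congr rfl fun s _ => ?_
      have hterm : ∀ a', (P a' * ϱ s).trace.re * σ s a'
          = if a' = a then (V * ϱ s).trace.re * σ s a else 0 := by
        intro a'
        rw [htr0 s a']
        by_cases h : a' = a <;> simp [h]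
      simp only [hterm, Finset.sum_ite_eq' Finset.univ a, Finset.mem_univ, if_true]
    have hmem : val ϱ σ P ∈ selSet ϱ σ := ⟨P, hPpsd, hZpos, rfl⟩
    have hle : val ϱ σ P ≤ c := le_csSup (selSet_bddAbove hσ hϱ) hmem
    have hnum : ∑ s, (V * ϱ s).trace.re * σ s a ≤ c * T := by
      rw [hval, div_le_iff₀ hTpos] at hle
      linarith [hle]
    have hVMre : (V * M).trace.re = ∑ s, (V * ϱ s).trace.re * σ s a := by
      rw [hM]
      exact trace_mul_sum_smul V ϱ (fun s => σ s a)
    have hfin : (0 : ℝ) ≤ c * T - (V * M).trace.re := by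
      rw [hVMre]; linarith
    have hcast : ((c * T - (V * M).trace.re : ℝ) : ℂ)
        = (c : ℂ) * (V * ρ).trace - (V * M).trace := by
      push_cast
      rw [hVρ, hVM]
    rw [← hcast]
    exact_mod_cast Complex.zero_le_real.mpr hfin

end Key
section More

variable {n : Type*} [Fintype n]

lemma trace_re_le_of_psd [DecidableEq n] {P X Y : Matrix n n ℂ} {c : ℝ}
    (hP : P.PosSemidef) (h : ((c : ℂ) • Y - X).PosSemidef) :
    (P * X).trace.re ≤ c * (P * Y).trace.re := by
  have h0 : 0 ≤ (P * ((c : ℂ) • Y - X)).trace := trace_mul_nonneg hP h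
  rw [Matrix.mul_sub, Matrix.mul_smul, Matrix.trace_sub, Matrix.trace_smul, smul_eq_mul] at h0
  have hre := (Complex.nonneg_iff.mp h0).1
  rw [Complex.sub_re, Complex.re_ofReal_mul] at hre
  linarith

lemma sel_nonneg {S A : Type*} [Fintype S] [Fintype A] [DecidableEq n] [Nonempty A]
    {ϱ : S → Matrix n n ℂ} {σ : S → A → ℝ}
    (hσ : ∀ s a, 0 ≤ σ s a) (hϱ : ∀ s, (ϱ s).PosSemidef)
    (htr : ∑ s, (ϱ s).trace = 1) : 0 ≤ sel ϱ σ := by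
  obtain ⟨v, hv⟩ := physSet_nonempty ϱ σ
  have hv' := physSet_subset htr hv
  exact le_trans (selSet_mem_nonneg hσ hϱ hv') (le_csSup (selSet_bddAbove hσ hϱ) hv')

lemma sSup_mul_sSup_le {S T : Set ℝ} (hSne : S.Nonempty) (hTne : T.Nonempty)
    (hSb : BddAbove S) (hTb : BddAbove T)
    (hS0 : ∀ s ∈ S, 0 ≤ s) (hT0 : ∀ t ∈ T, 0 ≤ t)
    {c : ℝ} (hc : 0 ≤ c) (h : ∀ s ∈ S, ∀ t ∈ T, s * t ≤ c) :
    sSup S * sSup T ≤ c := by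
  obtain ⟨t₀, ht₀⟩ := id hTne
  have hb0 : 0 ≤ sSup T := le_trans (hT0 t₀ ht₀) (le_csSup hTb ht₀)
  have step1 : ∀ s ∈ S, s * sSup T ≤ c := by
    intro s hs
    rcases (hS0 s hs).lt_or_eq with hspos | hs0
    · have hd : sSup T ≤ c / s :=
        csSup_le hTne fun t ht => (le_div_iff₀ hspos).mpr
          (by rw [mul_comm]; exact h s hs t ht)
      calc s * sSup T ≤ s * (c / s) := mul_le_mul_of_nonneg_left hd hspos.le
        _ = c := by field_simp
    · rw [← hs0, zero_mul]; exact hc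
  rcases hb0.lt_or_eq with hbpos | hb0'
  · have hd : sSup S ≤ c / sSup T :=
      csSup_le hSne fun s hs => (le_div_iff₀ hbpos).mpr (step1 s hs)
    calc sSup S * sSup T ≤ (c / sSup T) * sSup T :=
          mul_le_mul_of_nonneg_right hd hbpos.le
      _ = c := by field_simp
  · rw [← hb0', mul_zero]; exact hc

end More

end QRGAux

namespace QRGAux

lemma sum_prod_mul {S₁ S₂ A₁ A₂ : Type*} [Fintype S₁] [Fintype S₂] [Fintype A₁] [Fintype A₂]
    (g₁ : S₁ → A₁ → ℝ) (g₂ : S₂ → A₂ → ℝ) :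
    ∑ s : S₁ × S₂, ∑ a : A₁ × A₂, g₁ s.1 a.1 * g₂ s.2 a.2
      = (∑ s₁, ∑ a₁, g₁ s₁ a₁) * (∑ s₂, ∑ a₂, g₂ s₂ a₂) := by
  calc ∑ s : S₁ × S₂, ∑ a : A₁ × A₂, g₁ s.1 a.1 * g₂ s.2 a.2
      = ∑ s₁, ∑ s₂, ∑ a₁, ∑ a₂, g₁ s₁ a₁ * g₂ s₂ a₂ := by
        rw [Fintype.sum_prod_type]
        exact Finset.sum_congr rfl fun s₁ _ => Finset.sum_congr rfl fun s₂ _ => by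
          rw [Fintype.sum_prod_type]
    _ = (∑ s₁, ∑ a₁, g₁ s₁ a₁) * (∑ s₂, ∑ a₂, g₂ s₂ a₂) := by
        rw [Finset.sum_mul_sum]
        exact Finset.sum_congr rfl fun s₁ _ => Finset.sum_congr rfl fun s₂ _ =>
          (Finset.sum_mul_sum _ _ _ _).symm

end QRGAux

open QRGAux in
/-- Tensor product physical value: if the physical and selective values coincide for
two weighted quantum retrieval games, they also coincide for their tensor product. -/
theorem phys_tensor_product {d₁ d₂ : ℕ} {S₁ S₂ A₁ A₂ : Type}
    [Fintype S₁] [Fintype S₂] [Fintype A₁] [Fintype A₂]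
    [Nonempty S₁] [Nonempty S₂] [Nonempty A₁] [Nonempty A₂]
    (ϱ₁ : S₁ → Matrix (Fin d₁) (Fin d₁) ℂ) (σ₁ : S₁ → A₁ → ℝ)
    (ϱ₂ : S₂ → Matrix (Fin d₂) (Fin d₂) ℂ) (σ₂ : S₂ → A₂ → ℝ)
    (hσ₁ : ∀ s a, 0 ≤ σ₁ s a) (hσ₂ : ∀ s a, 0 ≤ σ₂ s a)
    (hpsd₁ : ∀ s, (ϱ₁ s).PosSemidef) (hpsd₂ : ∀ s, (ϱ₂ s).PosSemidef)
    (htr₁ : ∑ s, (ϱ₁ s).trace = 1) (htr₂ : ∑ s, (ϱ₂ s).trace = 1)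
    (hpd₁ : (∑ s, ϱ₁ s).PosDef) (hpd₂ : (∑ s, ϱ₂ s).PosDef)
    (h₁ : phys ϱ₁ σ₁ = sel ϱ₁ σ₁) (h₂ : phys ϱ₂ σ₂ = sel ϱ₂ σ₂) :
    phys (fun s : S₁ × S₂ => ϱ₁ s.1 ⊗ₖ ϱ₂ s.2)
        (fun s (a : A₁ × A₂) => σ₁ s.1 a.1 * σ₂ s.2 a.2) =
      sel (fun s : S₁ × S₂ => ϱ₁ s.1 ⊗ₖ ϱ₂ s.2)
        (fun s (a : A₁ × A₂) => σ₁ s.1 a.1 * σ₂ s.2 a.2) := by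
  classical
  set ϱK : S₁ × S₂ → Matrix (Fin d₁ × Fin d₂) (Fin d₁ × Fin d₂) ℂ :=
    fun s => ϱ₁ s.1 ⊗ₖ ϱ₂ s.2 with hϱK
  set σK : S₁ × S₂ → A₁ × A₂ → ℝ :=
    fun s a => σ₁ s.1 a.1 * σ₂ s.2 a.2 with hσKdef
  have hσKnn : ∀ s a, 0 ≤ σK s a := fun s a => mul_nonneg (hσ₁ s.1 a.1) (hσ₂ s.2 a.2)
  have hpsdK : ∀ s, (ϱK s).PosSemidef := fun s => posSemidef_kron (hpsd₁ s.1) (hpsd₂ s.2)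
  have htrK : ∑ s, (ϱK s).trace = 1 := by
    rw [hϱK, Fintype.sum_prod_type]
    calc ∑ s₁, ∑ s₂, (ϱ₁ s₁ ⊗ₖ ϱ₂ s₂).trace
        = ∑ s₁, ∑ s₂, (ϱ₁ s₁).trace * (ϱ₂ s₂).trace :=
          Finset.sum_congr rfl fun s₁ _ => Finset.sum_congr rfl fun s₂ _ =>
            Matrix.trace_kronecker _ _
      _ = (∑ s₁, (ϱ₁ s₁).trace) * (∑ s₂, (ϱ₂ s₂).trace) :=
          (Finset.sum_mul_sum _ _ _ _).symm
      _ = 1 := by rw [htr₁, htr₂, one_mul]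
  set c₁ : ℝ := sel ϱ₁ σ₁ with hc₁
  set c₂ : ℝ := sel ϱ₂ σ₂ with hc₂
  have hc₂nn : 0 ≤ c₂ := sel_nonneg hσ₂ hpsd₂ htr₂
  have hbddK : BddAbove (selSet ϱK σK) := selSet_bddAbove hσKnn hpsdK
  have hsubK : physSet ϱK σK ⊆ selSet ϱK σK := physSet_subset htrK
  have hPneK : (physSet ϱK σK).Nonempty := physSet_nonempty ϱK σK
  have hSneK : (selSet ϱK σK).Nonempty := hPneK.mono hsubK
  have hsumK : ∑ s, ϱK s = (∑ s₁, ϱ₁ s₁) ⊗ₖ (∑ s₂, ϱ₂ s₂) := (kron_sum_sum _ _).symm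
  -- Upper bound : sel K ≤ c₁ * c₂
  have hselK_le : sel ϱK σK ≤ c₁ * c₂ := by
    rw [sel_eq_sSup]
    refine csSup_le hSneK ?_
    rintro v ⟨P, hP, hZ, rfl⟩
    rw [val_eq, div_le_iff₀ hZ]
    have hperA : ∀ a : A₁ × A₂,
        ∑ s, (Matrix.trace (P a * ϱK s)).re * σK s a
          ≤ (c₁ * c₂) * (Matrix.trace (P a * ∑ s, ϱK s)).re := by
      intro a
      have hM1 : (((c₁ : ℂ)) • (∑ s, ϱ₁ s) - ∑ s, ((σ₁ s a.1 : ℂ)) • ϱ₁ s).PosSemidef :=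
        key_bound hσ₁ hpsd₁ hpd₁ a.1
      have hM2 : (((c₂ : ℂ)) • (∑ s, ϱ₂ s) - ∑ s, ((σ₂ s a.2 : ℂ)) • ϱ₂ s).PosSemidef :=
        key_bound hσ₂ hpsd₂ hpd₂ a.2
      have hM1psd : (∑ s, ((σ₁ s a.1 : ℂ)) • ϱ₁ s).PosSemidef :=
        posSemidef_sum _ _ fun s _ => posSemidef_smul_real (hpsd₁ s) (hσ₁ s a.1)
      have hρ₂psd : (∑ s, ϱ₂ s).PosSemidef := posSemidef_sum _ _ fun s _ => hpsd₂ s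
      have hK := kron_le hc₂nn hM1psd hρ₂psd hM1 hM2
      rw [kron_sum_smul] at hK
      have hKsum : ((((c₁ * c₂ : ℝ)) : ℂ) • (∑ s, ϱK s)
          - ∑ s : S₁ × S₂, ((σK s a : ℂ)) • ϱK s).PosSemidef := by
        rw [hsumK]
        exact hK
      have hmono := trace_re_le_of_psd (hP a) hKsum
      calc ∑ s, (Matrix.trace (P a * ϱK s)).re * σK s a
          = (Matrix.trace (P a * ∑ s, ((σK s a : ℂ)) • ϱK s)).re :=
            (trace_mul_sum_smul (P a) ϱK (fun s => σK s a)).symm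
        _ ≤ (c₁ * c₂) * (Matrix.trace (P a * ∑ s, ϱK s)).re := hmono
    have hZsum : normZ ϱK P = ∑ a, (Matrix.trace (P a * ∑ s, ϱK s)).re := by
      rw [normZ_eq, Matrix.sum_mul, Matrix.trace_sum, Complex.re_sum]
    calc ∑ s, ∑ a, (Matrix.trace (P a * ϱK s)).re * σK s a
        = ∑ a, ∑ s, (Matrix.trace (P a * ϱK s)).re * σK s a := Finset.sum_comm
      _ ≤ ∑ a, (c₁ * c₂) * (Matrix.trace (P a * ∑ s, ϱK s)).re :=
          Finset.sum_le_sum fun a _ => hperA a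
      _ = (c₁ * c₂) * normZ ϱK P := by rw [hZsum, Finset.mul_sum]
  -- tensor product of physical strategies
  have htensor : ∀ v₁ ∈ physSet ϱ₁ σ₁, ∀ v₂ ∈ physSet ϱ₂ σ₂,
      v₁ * v₂ ∈ physSet ϱK σK := by
    rintro v₁ ⟨P₁, hP₁, hs₁, rfl⟩ v₂ ⟨P₂, hP₂, hs₂, rfl⟩
    have hQsum : (∑ a : A₁ × A₂, P₁ a.1 ⊗ₖ P₂ a.2) = 1 := by
      rw [← kron_sum_sum, hs₁, hs₂, Matrix.one_kronecker_one]
    refine ⟨fun a => P₁ a.1 ⊗ₖ P₂ a.2,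
      fun a => posSemidef_kron (hP₁ a.1) (hP₂ a.2), hQsum, ?_⟩
    have hZ₁ : normZ ϱ₁ P₁ = 1 := normZ_physical hs₁ htr₁
    have hZ₂ : normZ ϱ₂ P₂ = 1 := normZ_physical hs₂ htr₂
    have hZK : normZ ϱK (fun a : A₁ × A₂ => P₁ a.1 ⊗ₖ P₂ a.2) = 1 :=
      normZ_physical hQsum htrK
    rw [val_eq, val_eq, val_eq, hZ₁, hZ₂, hZK, div_one, div_one, div_one]
    have hterm : ∀ (s : S₁ × S₂) (a : A₁ × A₂),
        (Matrix.trace ((P₁ a.1 ⊗ₖ P₂ a.2) * ϱK s)).re * σK s a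
          = ((Matrix.trace (P₁ a.1 * ϱ₁ s.1)).re * σ₁ s.1 a.1)
            * ((Matrix.trace (P₂ a.2 * ϱ₂ s.2)).re * σ₂ s.2 a.2) := by
      intro s a
      have h1 : Matrix.trace ((P₁ a.1 ⊗ₖ P₂ a.2) * ϱK s)
          = Matrix.trace (P₁ a.1 * ϱ₁ s.1) * Matrix.trace (P₂ a.2 * ϱ₂ s.2) := by
        rw [hϱK, ← Matrix.mul_kronecker_mul, Matrix.trace_kronecker]
      rw [h1, ← trace_mul_re_eq (hP₁ a.1) (hpsd₁ s.1),
        ← trace_mul_re_eq (hP₂ a.2) (hpsd₂ s.2), hσKdef]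
      simp only [← Complex.ofReal_mul, Complex.ofReal_re]
      ring
    rw [← sum_prod_mul (fun s₁ a₁ => (Matrix.trace (P₁ a₁ * ϱ₁ s₁)).re * σ₁ s₁ a₁)
      (fun s₂ a₂ => (Matrix.trace (P₂ a₂ * ϱ₂ s₂)).re * σ₂ s₂ a₂)]
    exact Finset.sum_congr rfl fun s _ => Finset.sum_congr rfl fun a _ => (hterm s a).symm
  -- combine everything
  have hphysK_le : phys ϱK σK ≤ sel ϱK σK := by
    rw [phys_eq_sSup, sel_eq_sSup]
    exact csSup_le hPneK fun v hv => le_csSup hbddK (hsubK hv)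
  have hbddP₁ : BddAbove (physSet ϱ₁ σ₁) :=
    BddAbove.mono (physSet_subset htr₁) (selSet_bddAbove hσ₁ hpsd₁)
  have hbddP₂ : BddAbove (physSet ϱ₂ σ₂) :=
    BddAbove.mono (physSet_subset htr₂) (selSet_bddAbove hσ₂ hpsd₂)
  have hbddPK : BddAbove (physSet ϱK σK) := BddAbove.mono hsubK hbddK
  have hphysKnn : 0 ≤ sSup (physSet ϱK σK) := by
    obtain ⟨v, hv⟩ := id hPneK
    exact le_trans (selSet_mem_nonneg hσKnn hpsdK (hsubK hv)) (le_csSup hbddPK hv)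
  have hprod_le : phys ϱ₁ σ₁ * phys ϱ₂ σ₂ ≤ phys ϱK σK := by
    rw [phys_eq_sSup, phys_eq_sSup, phys_eq_sSup]
    refine sSup_mul_sSup_le (physSet_nonempty _ _) (physSet_nonempty _ _) hbddP₁ hbddP₂
      (fun s hs => selSet_mem_nonneg hσ₁ hpsd₁ (physSet_subset htr₁ hs))
      (fun t ht => selSet_mem_nonneg hσ₂ hpsd₂ (physSet_subset htr₂ ht))
      hphysKnn ?_
    intro u₁ hu₁ u₂ hu₂
    exact le_csSup hbddPK (htensor u₁ hu₁ u₂ hu₂)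
  have hcc : c₁ * c₂ ≤ phys ϱK σK := by
    have e₁ : phys ϱ₁ σ₁ = c₁ := h₁
    have e₂ : phys ϱ₂ σ₂ = c₂ := h₂
    rw [← e₁, ← e₂]
    exact hprod_le
  exact le_antisymm hphysK_le (le_trans hselK_le hcc)
end
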